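/- arXiv:1705.07507 — 4 statements merged into one kernel-verified Lean document; each statement's English description precedes it below -/
import Mathlib

section
/- Let X : [0,T] → ℝ^{n×n} be a solution of the symmetric differential Riccati equation Ẋ(t) = A X(t) + X(t) Aᵀ + Q − X(t) S X(t), X(0) = X₀, where X₀, Q and S are symmetric positive semidefinite. Then X(t) is symmetric positive semidefinite for every t ∈ [0,T]. -/
open Matrix
open scoped Matrix.Norms.L2Operator RealInnerProductSpace
open Filter
set_option maxHeartbeats 1000000

noncomputable section

lemma dot_eq_inner (x y : EuclideanSpace ℝ (Fin n)) :
    (x : Fin n → ℝ) ⬝ᵥ (y : Fin n → ℝ) = ⟪x, y⟫ := by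
  simp [PiLp.inner_apply, dotProduct, RCLike.inner_apply, mul_comm]

/-- The quadratic form of a matrix on Euclidean space. -/
def qf (M : Matrix (Fin n) (Fin n) ℝ) (w : EuclideanSpace ℝ (Fin n)) : ℝ :=
  (w : Fin n → ℝ) ⬝ᵥ (M *ᵥ (w : Fin n → ℝ))

lemma qf_abs_le (M : Matrix (Fin n) (Fin n) ℝ) (w : EuclideanSpace ℝ (Fin n)) (hw : ‖w‖ = 1) :
    |qf M w| ≤ ‖M‖ := by
  have h1 : qf M w
      = ⟪w, (EuclideanSpace.equiv (Fin n) ℝ).symm (M *ᵥ (w : Fin n → ℝ))⟫ :=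
    dot_eq_inner w ((EuclideanSpace.equiv (Fin n) ℝ).symm (M *ᵥ (w : Fin n → ℝ)))
  rw [h1]
  calc |⟪w, (EuclideanSpace.equiv (Fin n) ℝ).symm (M *ᵥ (w : Fin n → ℝ))⟫|
      ≤ ‖w‖ * ‖(EuclideanSpace.equiv (Fin n) ℝ).symm (M *ᵥ (w : Fin n → ℝ))‖ :=
        abs_real_inner_le_norm _ _
    _ ≤ ‖w‖ * (‖M‖ * ‖w‖) := by
        gcongr
        · exact M.l2_opNorm_mulVec w
    _ = ‖M‖ := by rw [hw]; ring

lemma qf_continuous (M : Matrix (Fin n) (Fin n) ℝ) :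
    Continuous fun w : EuclideanSpace ℝ (Fin n) => qf M w := by
  have : (fun w : EuclideanSpace ℝ (Fin n) => qf M w)
      = fun w => ⟪w, (Matrix.toEuclideanCLM (𝕜 := ℝ) M) w⟫ := by
    funext w
    rw [qf, dot_eq_inner]
    congr 1
  rw [this]
  exact continuous_id.inner (Matrix.toEuclideanCLM (𝕜 := ℝ) M).continuous

/-- The right-hand side of the Riccati equation. -/
def ric (A Q S : Matrix (Fin n) (Fin n) ℝ) (M : Matrix (Fin n) (Fin n) ℝ) :
    Matrix (Fin n) (Fin n) ℝ :=
  A * M + M * Aᵀ + Q - M * S * M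

/-- The quadratic form `M ↦ w ⬝ᵥ M *ᵥ w` as a continuous linear map in `M`. -/
def quadCLM (w : Fin n → ℝ) : Matrix (Fin n) (Fin n) ℝ →L[ℝ] ℝ :=
  LinearMap.toContinuousLinearMap
    { toFun := fun M => w ⬝ᵥ (M *ᵥ w)
      map_add' := fun M N => by simp [Matrix.add_mulVec, dotProduct_add]
      map_smul' := fun c M => by simp [Matrix.smul_mulVec, dotProduct_smul] }

lemma hasDerivAt_quad (w : Fin n → ℝ) {X : ℝ → Matrix (Fin n) (Fin n) ℝ}
    {D : Matrix (Fin n) (Fin n) ℝ} {t : ℝ} (h : HasDerivAt X D t) :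
    HasDerivAt (fun s => w ⬝ᵥ (X s *ᵥ w)) (w ⬝ᵥ (D *ᵥ w)) t := by
  have := (quadCLM w).hasFDerivAt.comp_hasDerivAt t h
  exact this

lemma qf_smul (M : Matrix (Fin n) (Fin n) ℝ) (c : ℝ) (v : Fin n → ℝ) :
    (c • v) ⬝ᵥ (M *ᵥ (c • v)) = c * c * (v ⬝ᵥ (M *ᵥ v)) := by
  rw [Matrix.mulVec_smul, smul_dotProduct, dotProduct_smul]
  simp [smul_eq_mul]; ring

lemma dot_smul_self (c : ℝ) (v : Fin n → ℝ) : (c • v) ⬝ᵥ (c • v) = c * c * (v ⬝ᵥ v) := by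
  rw [smul_dotProduct, dotProduct_smul]
  simp [smul_eq_mul]; ring

/-- Transpose as a continuous linear map on square matrices with the `L2` operator norm. -/
def transCLM : Matrix (Fin n) (Fin n) ℝ →L[ℝ] Matrix (Fin n) (Fin n) ℝ :=
  LinearMap.toContinuousLinearMap
    { toFun := fun M => Mᵀ
      map_add' := fun M N => Matrix.transpose_add M N
      map_smul' := fun c M => Matrix.transpose_smul c M }

@[simp] lemma transCLM_apply (M : Matrix (Fin n) (Fin n) ℝ) : (transCLM M) = Mᵀ := rfl

lemma hasDerivAt_trans {X : ℝ → Matrix (Fin n) (Fin n) ℝ} {D : Matrix (Fin n) (Fin n) ℝ} {t : ℝ}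
    (h : HasDerivAt X D t) : HasDerivAt (fun s => (X s)ᵀ) Dᵀ t := by
  have := (transCLM (n := n)).hasFDerivAt.comp_hasDerivAt t h
  exact this

lemma ric_lipschitz (A Q S : Matrix (Fin n) (Fin n) ℝ) (R : ℝ) (hR : 0 ≤ R) :
    LipschitzOnWith (‖A‖ + ‖Aᵀ‖ + ‖S‖ * R + ‖S‖ * R).toNNReal (ric A Q S)
      (Metric.closedBall (0 : Matrix (Fin n) (Fin n) ℝ) R) := by
  rw [lipschitzOnWith_iff_dist_le_mul]
  intro M hM N hN
  rw [Metric.mem_closedBall, dist_zero_right] at hM hN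
  rw [dist_eq_norm, dist_eq_norm]
  have key : ric A Q S M - ric A Q S N
      = A * (M - N) + (M - N) * Aᵀ - ((M - N) * S * M + N * S * (M - N)) := by
    simp only [ric]
    noncomm_ring
  rw [key]
  have h1 : ‖A * (M - N)‖ ≤ ‖A‖ * ‖M - N‖ := l2_opNorm_mul _ _
  have h2 : ‖(M - N) * Aᵀ‖ ≤ ‖M - N‖ * ‖Aᵀ‖ := l2_opNorm_mul _ _
  have h3 : ‖(M - N) * S * M‖ ≤ ‖M - N‖ * ‖S‖ * ‖M‖ :=
    le_trans (l2_opNorm_mul _ _) (by gcongr; exact l2_opNorm_mul _ _)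
  have h4 : ‖N * S * (M - N)‖ ≤ ‖N‖ * ‖S‖ * ‖M - N‖ :=
    le_trans (l2_opNorm_mul _ _) (by gcongr; exact l2_opNorm_mul _ _)
  have hc : ((‖A‖ + ‖Aᵀ‖ + ‖S‖ * R + ‖S‖ * R).toNNReal : ℝ)
      = ‖A‖ + ‖Aᵀ‖ + ‖S‖ * R + ‖S‖ * R := by
    rw [Real.coe_toNNReal]
    positivity
  rw [hc]
  calc ‖A * (M - N) + (M - N) * Aᵀ - ((M - N) * S * M + N * S * (M - N))‖
      ≤ ‖A * (M - N) + (M - N) * Aᵀ‖ + ‖(M - N) * S * M + N * S * (M - N)‖ := norm_sub_le _ _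
    _ ≤ (‖A * (M - N)‖ + ‖(M - N) * Aᵀ‖) + (‖(M - N) * S * M‖ + ‖N * S * (M - N)‖) := by
        gcongr <;> exact norm_add_le _ _
    _ ≤ (‖A‖ * ‖M - N‖ + ‖M - N‖ * ‖Aᵀ‖) + (‖M - N‖ * ‖S‖ * ‖M‖ + ‖N‖ * ‖S‖ * ‖M - N‖) := by
        gcongr
    _ ≤ (‖A‖ * ‖M - N‖ + ‖M - N‖ * ‖Aᵀ‖) + (‖M - N‖ * ‖S‖ * R + R * ‖S‖ * ‖M - N‖) := by
        gcongr
    _ = (‖A‖ + ‖Aᵀ‖ + ‖S‖ * R + ‖S‖ * R) * ‖M - N‖ := by ring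

lemma X_symm {T : ℝ} (A Q S : Matrix (Fin n) (Fin n) ℝ)
    (hQ : Q.PosSemidef) (hS : S.PosSemidef)
    (X : ℝ → Matrix (Fin n) (Fin n) ℝ)
    (hX : ∀ t ∈ Set.Icc (0:ℝ) T, HasDerivAt X (ric A Q S (X t)) t)
    (hX0 : (X 0)ᵀ = X 0) :
    ∀ t ∈ Set.Icc (0:ℝ) T, (X t)ᵀ = X t := by
  rcases le_or_gt T 0 with hT | hT
  · intro t ht
    have : t = 0 := le_antisymm (ht.2.trans hT) ht.1
    rw [this]; exact hX0
  -- continuity of X on the interval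
  have hXc : ContinuousOn X (Set.Icc (0:ℝ) T) := fun t ht =>
    (hX t ht).continuousAt.continuousWithinAt
  -- bound on ‖X t‖
  obtain ⟨R, hRb⟩ := (isCompact_Icc (a := (0:ℝ)) (b := T)).exists_bound_of_continuousOn hXc
  have hR : 0 ≤ R := le_trans (norm_nonneg _) (hRb 0 ⟨le_refl _, le_of_lt hT⟩)
  have hQt : Qᵀ = Q := by
    rw [← Matrix.conjTranspose_eq_transpose_of_trivial]; exact hQ.1
  have hSt : Sᵀ = S := by
    rw [← Matrix.conjTranspose_eq_transpose_of_trivial]; exact hS.1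
  -- the transpose of X solves the same ODE
  have hXT : ∀ t ∈ Set.Icc (0:ℝ) T, HasDerivAt (fun s => (X s)ᵀ) (ric A Q S ((X t)ᵀ)) t := by
    intro t ht
    have h := hasDerivAt_trans (hX t ht)
    have : (ric A Q S (X t))ᵀ = ric A Q S ((X t)ᵀ) := by
      simp only [ric, Matrix.transpose_sub, Matrix.transpose_add, Matrix.transpose_mul,
        Matrix.transpose_transpose, hQt, hSt]
      noncomm_ring
    rwa [this] at h
  have hXTc : ContinuousOn (fun s => (X s)ᵀ) (Set.Icc (0:ℝ) T) :=
    (transCLM (n := n)).continuous.comp_continuousOn hXc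
  have hmem : ∀ t ∈ Set.Ico (0:ℝ) T,
      X t ∈ Metric.closedBall (0 : Matrix (Fin n) (Fin n) ℝ) R := by
    intro t ht
    rw [Metric.mem_closedBall, dist_zero_right]
    exact hRb t ⟨ht.1, le_of_lt ht.2⟩
  have hmemT : ∀ t ∈ Set.Ico (0:ℝ) T,
      (X t)ᵀ ∈ Metric.closedBall (0 : Matrix (Fin n) (Fin n) ℝ) R := by
    intro t ht
    rw [Metric.mem_closedBall, dist_zero_right, ← Matrix.conjTranspose_eq_transpose_of_trivial,
      l2_opNorm_conjTranspose]
    exact hRb t ⟨ht.1, le_of_lt ht.2⟩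
  have key := ODE_solution_unique_of_mem_Icc_right
    (v := fun _ M => ric A Q S M)
    (s := fun _ => Metric.closedBall (0 : Matrix (Fin n) (Fin n) ℝ) R)
    (K := (‖A‖ + ‖Aᵀ‖ + ‖S‖ * R + ‖S‖ * R).toNNReal)
    (fun _ _ => ric_lipschitz A Q S R hR)
    hXTc
    (fun t ht => (hXT t (Set.mem_Icc_of_Ico ht)).hasDerivWithinAt)
    hmemT
    hXc
    (fun t ht => (hX t (Set.mem_Icc_of_Ico ht)).hasDerivWithinAt)
    hmem
    hX0
  exact fun t ht => key ht

lemma key_pos {T : ℝ} (hn : 0 < n) (A Q S : Matrix (Fin n) (Fin n) ℝ)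
    (hQ : Q.PosSemidef) (hS : S.PosSemidef)
    (X : ℝ → Matrix (Fin n) (Fin n) ℝ)
    (hX : ∀ t ∈ Set.Icc (0:ℝ) T, HasDerivAt X (ric A Q S (X t)) t)
    (hsym : ∀ t ∈ Set.Icc (0:ℝ) T, (X t)ᵀ = X t)
    (hX0 : (X 0).PosSemidef)
    (ε : ℝ) (hε : 0 < ε)
    (hε' : ε * Real.exp ((‖A‖ + ‖Aᵀ‖ + 1) * T) * ‖S‖ < 1) :
    ∀ t ∈ Set.Icc (0:ℝ) T, ∀ w : EuclideanSpace ℝ (Fin n), ‖w‖ = 1 →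
      0 < qf (X t) w + ε * Real.exp ((‖A‖ + ‖Aᵀ‖ + 1) * t) := by
  set K₂ : ℝ := ‖A‖ + ‖Aᵀ‖ + 1 with hK₂def
  have hK₂ : 1 ≤ K₂ := by
    have := norm_nonneg A; have := norm_nonneg Aᵀ; rw [hK₂def]; linarith
  set sph : Set (EuclideanSpace ℝ (Fin n)) := Metric.sphere 0 1 with hsphdef
  have sph_ne : sph.Nonempty :=
    ⟨EuclideanSpace.single ⟨0, hn⟩ (1:ℝ), by
      simp [hsphdef, mem_sphere_zero_iff_norm, EuclideanSpace.norm_single]⟩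
  have sph_cpt : IsCompact sph := isCompact_sphere _ _
  set h : ℝ → ℝ := fun t => sInf (qf (X t) '' sph) with hhdef
  have himg_ne : ∀ t : ℝ, ((qf (X t)) '' sph).Nonempty := fun t => sph_ne.image _
  have hbdd : ∀ t : ℝ, BddBelow ((qf (X t)) '' sph) := fun t =>
    sph_cpt.bddBelow_image (qf_continuous (X t)).continuousOn
  have h_le : ∀ (t : ℝ) (w : EuclideanSpace ℝ (Fin n)), ‖w‖ = 1 → h t ≤ qf (X t) w := by
    intro t w hw
    exact csInf_le (hbdd t) ⟨w, mem_sphere_zero_iff_norm.mpr hw, rfl⟩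
  have h_lip : ∀ t s : ℝ, h t ≤ h s + ‖X t - X s‖ := by
    intro t s
    have : h t - ‖X t - X s‖ ≤ h s := by
      refine le_csInf (himg_ne s) ?_
      rintro b ⟨w, hwm, rfl⟩
      have hw : ‖w‖ = 1 := mem_sphere_zero_iff_norm.mp hwm
      have h1 : h t ≤ qf (X t) w := h_le t w hw
      have h2 : qf (X t) w - qf (X s) w = qf (X t - X s) w := by
        simp [qf, Matrix.sub_mulVec, dotProduct_sub]
      have h3 : |qf (X t - X s) w| ≤ ‖X t - X s‖ := qf_abs_le _ w hw
      have h4 := (abs_le.mp h3).2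
      linarith
    linarith
  have h_cont : ∀ t₀ ∈ Set.Icc (0:ℝ) T, ContinuousAt h t₀ := by
    intro t₀ ht₀
    rw [Metric.continuousAt_iff]
    intro δ hδ
    obtain ⟨η, hη, hXδ⟩ := Metric.continuousAt_iff.mp (hX t₀ ht₀).continuousAt δ hδ
    refine ⟨η, hη, fun {t} htd => ?_⟩
    have hd : dist (X t) (X t₀) < δ := hXδ htd
    rw [dist_eq_norm] at hd
    have h1 := h_lip t t₀
    have h2 := h_lip t₀ t
    rw [norm_sub_rev] at h2
    rw [Real.dist_eq, abs_sub_lt_iff]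
    constructor <;> linarith
  suffices hmain : ∀ t ∈ Set.Icc (0:ℝ) T, 0 < h t + ε * Real.exp (K₂ * t) by
    intro t ht w hw
    have h1 := h_le t w hw
    have h2 := hmain t ht
    linarith
  by_contra hcon
  push_neg at hcon
  obtain ⟨t₁, ht₁, ht₁le⟩ := hcon
  set B : Set ℝ := {t | t ∈ Set.Icc (0:ℝ) T ∧ h t + ε * Real.exp (K₂ * t) ≤ 0} with hBdef
  have hBne : B.Nonempty := ⟨t₁, ht₁, ht₁le⟩
  have hBbdd : BddBelow B := ⟨0, fun b hb => hb.1.1⟩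
  set t' : ℝ := sInf B with ht'def
  have ht'0 : 0 ≤ t' := le_csInf hBne fun b hb => hb.1.1
  have ht'T : t' ≤ T := by
    obtain ⟨b₀, hb₀⟩ := hBne
    exact le_trans (csInf_le hBbdd hb₀) hb₀.1.2
  have ht'Icc : t' ∈ Set.Icc (0:ℝ) T := ⟨ht'0, ht'T⟩
  have hHC : ContinuousAt (fun t => h t + ε * Real.exp (K₂ * t)) t' := by
    apply (h_cont t' ht'Icc).add
    exact (continuous_const.mul (Real.continuous_exp.comp
      (continuous_const.mul continuous_id))).continuousAt
  have ht'B : h t' + ε * Real.exp (K₂ * t') ≤ 0 := by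
    obtain ⟨u, -, hu_t, hu_mem⟩ := exists_seq_tendsto_sInf hBne hBbdd
    exact le_of_tendsto (hHC.tendsto.comp hu_t) (Eventually.of_forall fun k => (hu_mem k).2)
  have h0nonneg : 0 ≤ h 0 := by
    refine le_csInf (himg_ne 0) ?_
    rintro b ⟨w, hwm, rfl⟩
    have := hX0.dotProduct_mulVec_nonneg (w : Fin n → ℝ)
    simpa [qf] using this
  have ht'pos : 0 < t' := by
    rcases ht'0.lt_or_eq with h' | h'
    · exact h'
    · exfalso
      rw [← h'] at ht'B
      simp only [mul_zero, Real.exp_zero, mul_one] at ht'B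
      linarith
  have hbefore : ∀ t : ℝ, 0 ≤ t → t < t' → 0 < h t + ε * Real.exp (K₂ * t) := by
    intro t ht0 htt
    by_contra hle
    push_neg at hle
    have : t ∈ B := ⟨⟨ht0, le_trans htt.le ht'T⟩, hle⟩
    exact absurd (csInf_le hBbdd this) (not_le.mpr htt)
  have ht'ge : 0 ≤ h t' + ε * Real.exp (K₂ * t') := by
    have htend : Tendsto (fun t => h t + ε * Real.exp (K₂ * t)) (nhdsWithin t' (Set.Iio t'))
        (nhds (h t' + ε * Real.exp (K₂ * t'))) := hHC.tendsto.mono_left nhdsWithin_le_nhds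
    refine ge_of_tendsto htend ?_
    filter_upwards [Ioo_mem_nhdsLT_of_mem (⟨ht'pos, le_refl t'⟩ : t' ∈ Set.Ioc 0 t')] with t ht
    exact (hbefore t ht.1.le ht.2).le
  have ht'eq : h t' + ε * Real.exp (K₂ * t') = 0 := le_antisymm ht'B ht'ge
  -- attainment of the minimum
  obtain ⟨w, hwsph, hwmin⟩ := sph_cpt.exists_sInf_image_eq sph_ne (qf_continuous (X t')).continuousOn
  have hwnorm : ‖w‖ = 1 := mem_sphere_zero_iff_norm.mp hwsph
  set a : ℝ := ε * Real.exp (K₂ * t') with hadef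
  have ha : 0 < a := by positivity
  have hht' : h t' = qf (X t') w := hwmin
  have hfw : qf (X t') w = -a := by rw [← hht']; linarith
  have hww : (w : Fin n → ℝ) ⬝ᵥ (w : Fin n → ℝ) = 1 := by
    rw [dot_eq_inner, real_inner_self_eq_norm_mul_norm, hwnorm]; ring
  -- X t' + a • 1 is positive semidefinite with w in its kernel
  have hXsym : (X t')ᵀ = X t' := hsym t' ht'Icc
  have key1 : ∀ z : Fin n → ℝ, star z ⬝ᵥ ((X t' + a • (1 : Matrix (Fin n) (Fin n) ℝ)) *ᵥ z)
      = z ⬝ᵥ (X t' *ᵥ z) + a * (z ⬝ᵥ z) := by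
    intro z
    rw [star_trivial, Matrix.add_mulVec, Matrix.smul_mulVec, Matrix.one_mulVec,
      dotProduct_add, dotProduct_smul, smul_eq_mul]
  have hMpsd : (X t' + a • (1 : Matrix (Fin n) (Fin n) ℝ)).PosSemidef := by
    refine Matrix.PosSemidef.of_dotProduct_mulVec_nonneg ?_ ?_
    · rw [Matrix.IsHermitian, Matrix.conjTranspose_eq_transpose_of_trivial,
        Matrix.transpose_add, hXsym, Matrix.transpose_smul, Matrix.transpose_one]
    · intro y
      rw [key1]
      rcases eq_or_ne y 0 with rfl | hy
      · simp
      · have hyE0 : (EuclideanSpace.equiv (Fin n) ℝ).symm y ≠ 0 := by simpa using hy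
        set yE : EuclideanSpace ℝ (Fin n) := (EuclideanSpace.equiv (Fin n) ℝ).symm y with hyE
        set u : EuclideanSpace ℝ (Fin n) := ‖yE‖⁻¹ • yE with hu
        have hun : ‖u‖ = 1 := norm_smul_inv_norm hyE0
        have hyy : y = ‖yE‖ • (u : Fin n → ℝ) := by
          rw [hu, WithLp.ofLp_smul, smul_smul, mul_inv_cancel₀ (norm_ne_zero_iff.mpr hyE0), one_smul]
          rfl
        have hq : (u : Fin n → ℝ) ⬝ᵥ (X t' *ᵥ (u : Fin n → ℝ)) ≥ -a := by
          have h1 := h_le t' u hun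
          simp only [qf] at h1
          linarith [ht'eq]
        have huu : (u : Fin n → ℝ) ⬝ᵥ (u : Fin n → ℝ) = 1 := by
          rw [dot_eq_inner, real_inner_self_eq_norm_mul_norm, hun]; ring
        rw [hyy, qf_smul, dot_smul_self, huu]
        nlinarith [mul_nonneg (norm_nonneg yE) (norm_nonneg yE)]
  have hker : (X t' + a • (1 : Matrix (Fin n) (Fin n) ℝ)) *ᵥ (w : Fin n → ℝ) = 0 := by
    rw [← hMpsd.dotProduct_mulVec_zero_iff, key1, hww]
    have : (w : Fin n → ℝ) ⬝ᵥ (X t' *ᵥ (w : Fin n → ℝ)) = -a := hfw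
    rw [this]; ring
  have heig : X t' *ᵥ (w : Fin n → ℝ) = -(a • (w : Fin n → ℝ)) := by
    have h1 := hker
    rw [Matrix.add_mulVec, Matrix.smul_mulVec, Matrix.one_mulVec] at h1
    exact eq_neg_of_add_eq_zero_left h1
  have hvm : (w : Fin n → ℝ) ᵥ* (X t') = -(a • (w : Fin n → ℝ)) := by
    rw [← Matrix.mulVec_transpose, hXsym, heig]
  -- the derivative of g at t'
  have hXd := hX t' ht'Icc
  have hder1 : HasDerivAt (fun t => (w : Fin n → ℝ) ⬝ᵥ (X t *ᵥ (w : Fin n → ℝ)))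
      ((w : Fin n → ℝ) ⬝ᵥ (ric A Q S (X t') *ᵥ (w : Fin n → ℝ))) t' := hasDerivAt_quad _ hXd
  have hder2 : HasDerivAt (fun t => ε * Real.exp (K₂ * t)) (ε * (Real.exp (K₂ * t') * K₂)) t' := by
    have h1 : HasDerivAt (fun t : ℝ => K₂ * t) K₂ t' := by
      simpa using (hasDerivAt_id t').const_mul K₂
    exact ((Real.hasDerivAt_exp (K₂ * t')).comp t' h1).const_mul ε
  have hg : HasDerivAt (fun t => (w : Fin n → ℝ) ⬝ᵥ (X t *ᵥ (w : Fin n → ℝ))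
      + ε * Real.exp (K₂ * t))
      ((w : Fin n → ℝ) ⬝ᵥ (ric A Q S (X t') *ᵥ (w : Fin n → ℝ))
        + ε * (Real.exp (K₂ * t') * K₂)) t' := hder1.add hder2
  -- computing the derivative
  have hric : (w : Fin n → ℝ) ⬝ᵥ (ric A Q S (X t') *ᵥ (w : Fin n → ℝ))
      = -(a * ((w : Fin n → ℝ) ⬝ᵥ (A *ᵥ (w : Fin n → ℝ))))
        + -(a * ((w : Fin n → ℝ) ⬝ᵥ (Aᵀ *ᵥ (w : Fin n → ℝ))))
        + (w : Fin n → ℝ) ⬝ᵥ (Q *ᵥ (w : Fin n → ℝ))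
        - a * a * ((w : Fin n → ℝ) ⬝ᵥ (S *ᵥ (w : Fin n → ℝ))) := by
    have e1 : (A * X t') *ᵥ (w : Fin n → ℝ) = -(a • (A *ᵥ (w : Fin n → ℝ))) := by
      rw [← Matrix.mulVec_mulVec, heig, Matrix.mulVec_neg, Matrix.mulVec_smul]
    have e2 : (w : Fin n → ℝ) ⬝ᵥ ((X t' * Aᵀ) *ᵥ (w : Fin n → ℝ))
        = -(a * ((w : Fin n → ℝ) ⬝ᵥ (Aᵀ *ᵥ (w : Fin n → ℝ)))) := by
      rw [← Matrix.mulVec_mulVec, Matrix.dotProduct_mulVec, hvm, neg_dotProduct,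
        smul_dotProduct]
      simp [Matrix.dotProduct_mulVec]
    have e4 : (w : Fin n → ℝ) ⬝ᵥ ((X t' * S * X t') *ᵥ (w : Fin n → ℝ))
        = a * a * ((w : Fin n → ℝ) ⬝ᵥ (S *ᵥ (w : Fin n → ℝ))) := by
      rw [← Matrix.mulVec_mulVec, heig, Matrix.mulVec_neg, Matrix.mulVec_smul,
        ← Matrix.mulVec_mulVec, dotProduct_neg, dotProduct_smul,
        Matrix.dotProduct_mulVec, hvm, neg_dotProduct, smul_dotProduct]
      simp only [smul_eq_mul, Matrix.dotProduct_mulVec]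
      ring
    simp only [ric, Matrix.sub_mulVec, Matrix.add_mulVec, dotProduct_sub,
      dotProduct_add]
    rw [e2, e4]
    rw [e1, dotProduct_neg, dotProduct_smul]
    simp only [smul_eq_mul]
  -- the derivative is positive
  have hAq := abs_le.mp (qf_abs_le A w hwnorm)
  have hAtq := abs_le.mp (qf_abs_le Aᵀ w hwnorm)
  have hSq := abs_le.mp (qf_abs_le S w hwnorm)
  have hQw : 0 ≤ (w : Fin n → ℝ) ⬝ᵥ (Q *ᵥ (w : Fin n → ℝ)) := by
    have := hQ.dotProduct_mulVec_nonneg (w : Fin n → ℝ)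
    simpa using this
  have haS : a * ‖S‖ < 1 := by
    have hexp : Real.exp (K₂ * t') ≤ Real.exp (K₂ * T) :=
      Real.exp_le_exp.mpr (by nlinarith)
    have h1 : a ≤ ε * Real.exp (K₂ * T) := by
      rw [hadef]
      nlinarith [hε.le]
    nlinarith [norm_nonneg S, Real.exp_pos (K₂ * T)]
  have hgd : 0 < (w : Fin n → ℝ) ⬝ᵥ (ric A Q S (X t') *ᵥ (w : Fin n → ℝ))
      + ε * (Real.exp (K₂ * t') * K₂) := by
    have hlast : ε * (Real.exp (K₂ * t') * K₂) = a * K₂ := by rw [hadef]; ring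
    rw [hric, hlast, hK₂def]
    simp only [qf] at hAq hAtq hSq
    nlinarith [ha.le, mul_nonneg ha.le ha.le]
  -- contradiction via the slope from the left
  have hg0 : (w : Fin n → ℝ) ⬝ᵥ (X t' *ᵥ (w : Fin n → ℝ)) + ε * Real.exp (K₂ * t') = 0 := by
    have : (w : Fin n → ℝ) ⬝ᵥ (X t' *ᵥ (w : Fin n → ℝ)) = -a := hfw
    rw [this, ← hadef]; ring
  set g : ℝ → ℝ := fun t => (w : Fin n → ℝ) ⬝ᵥ (X t *ᵥ (w : Fin n → ℝ))
    + ε * Real.exp (K₂ * t) with hgdef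
  have hslope : Tendsto (slope g t') (nhdsWithin t' (Set.Iio t'))
      (nhds ((w : Fin n → ℝ) ⬝ᵥ (ric A Q S (X t') *ᵥ (w : Fin n → ℝ))
        + ε * (Real.exp (K₂ * t') * K₂))) :=
    (hasDerivAt_iff_tendsto_slope.mp hg).mono_left
      (nhdsWithin_mono _ fun x hx => ne_of_lt hx)
  have hneg : (w : Fin n → ℝ) ⬝ᵥ (ric A Q S (X t') *ᵥ (w : Fin n → ℝ))
      + ε * (Real.exp (K₂ * t') * K₂) ≤ 0 := by
    refine le_of_tendsto hslope ?_
    filter_upwards [Ioo_mem_nhdsLT_of_mem (⟨ht'pos, le_refl t'⟩ : t' ∈ Set.Ioc 0 t')] with t ht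
    have hgt : 0 < g t := by
      have h1 := hbefore t ht.1.le ht.2
      have h2 := h_le t w hwnorm
      simp only [qf] at h2
      simp only [hgdef]
      linarith
    have hgt' : g t' = 0 := hg0
    rw [slope_def_field, hgt', sub_zero]
    exact div_nonpos_of_nonneg_of_nonpos hgt.le (by linarith [ht.2])
  linarith



/-- The logarithmic norm `μ(A)`: the maximum of the real parts of the field of values
`F(A) = {x* A x : ‖x‖ = 1}` of `A`, viewed as a complex matrix. -/
def logNorm {n : ℕ} (A : Matrix (Fin n) (Fin n) ℝ) : ℝ :=
  sSup {r : ℝ | ∃ x : EuclideanSpace ℂ (Fin n), ‖x‖ = 1 ∧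
    r = (dotProduct (star (x : Fin n → ℂ)) ((A.map Complex.ofReal).mulVec x)).re}

/-- The function `φ₁(z) = (e^z - 1)/z = ∑_{ℓ≥0} z^ℓ/(ℓ+1)!`. -/
def phi1 (z : ℝ) : ℝ := ∑' k : ℕ, z ^ k / (Nat.factorial (k + 1) : ℝ)

/-- Matrix exponential. -/
def mexp {n : ℕ} (A : Matrix (Fin n) (Fin n) ℝ) : Matrix (Fin n) (Fin n) ℝ :=
  NormedSpace.exp A

/-- The block Krylov subspace `K_k(A,B) = span{B, AB, …, A^{k-1}B}` (the span of
the columns of the matrices `A^i B`, `i < k`). -/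
def blockKrylov {n : ℕ} {ι : Type*} (A : Matrix (Fin n) (Fin n) ℝ) (B : Matrix (Fin n) ι ℝ)
    (k : ℕ) : Submodule ℝ (Fin n → ℝ) :=
  Submodule.span ℝ {v | ∃ i < k, ∃ j, v = ((A ^ i * B)ᵀ) j}

/-- The column space of a matrix. -/
def colSpace {n m : ℕ} (V : Matrix (Fin n) (Fin m) ℝ) : Submodule ℝ (Fin n → ℝ) :=
  Submodule.span ℝ (Set.range Vᵀ)

/-- Positivity of the exact flow of the symmetric DRE. -/
theorem dre_positivity {n : ℕ} (T : ℝ) (hT : 0 ≤ T)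
    (A Q S X₀ : Matrix (Fin n) (Fin n) ℝ)
    (hQ : Q.PosSemidef) (hS : S.PosSemidef) (hX₀ : X₀.PosSemidef)
    (X : ℝ → Matrix (Fin n) (Fin n) ℝ)
    (hX : ∀ t ∈ Set.Icc (0:ℝ) T,
      HasDerivAt X (A * X t + X t * Aᵀ + Q - X t * S * X t) t)
    (hX0 : X 0 = X₀) :
    ∀ t ∈ Set.Icc (0:ℝ) T, (X t).PosSemidef := by
  rcases Nat.eq_zero_or_pos n with hn0 | hn
  · subst hn0
    intro t ht
    refine Matrix.PosSemidef.of_dotProduct_mulVec_nonneg ?_ ?_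
    · ext i j
      exact i.elim0
    · intro x
      simp [dotProduct]
  · have hric : ∀ t ∈ Set.Icc (0:ℝ) T, HasDerivAt X (ric A Q S (X t)) t := hX
    have hsym0 : (X 0)ᵀ = X 0 := by
      rw [hX0, ← Matrix.conjTranspose_eq_transpose_of_trivial]
      exact hX₀.1
    have hsym := X_symm A Q S hQ hS X hric hsym0
    have hX0psd : (X 0).PosSemidef := by rw [hX0]; exact hX₀
    intro t ht
    refine Matrix.PosSemidef.of_dotProduct_mulVec_nonneg ?_ ?_
    · rw [Matrix.IsHermitian, Matrix.conjTranspose_eq_transpose_of_trivial]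
      exact hsym t ht
    · intro y
      rw [star_trivial]
      rcases eq_or_ne y 0 with rfl | hy
      · simp
      · have hyE0 : (EuclideanSpace.equiv (Fin n) ℝ).symm y ≠ 0 := by simpa using hy
        set yE : EuclideanSpace ℝ (Fin n) := (EuclideanSpace.equiv (Fin n) ℝ).symm y with hyE
        set u : EuclideanSpace ℝ (Fin n) := ‖yE‖⁻¹ • yE with hu
        have hun : ‖u‖ = 1 := norm_smul_inv_norm hyE0
        have hyy : y = ‖yE‖ • (u : Fin n → ℝ) := by
          rw [hu, WithLp.ofLp_smul, smul_smul, mul_inv_cancel₀ (norm_ne_zero_iff.mpr hyE0), one_smul]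
          rfl
        have hupos : 0 ≤ (u : Fin n → ℝ) ⬝ᵥ (X t *ᵥ (u : Fin n → ℝ)) := by
          by_contra hq
          push_neg at hq
          set q : ℝ := (u : Fin n → ℝ) ⬝ᵥ (X t *ᵥ (u : Fin n → ℝ)) with hqdef
          set K₂ : ℝ := ‖A‖ + ‖Aᵀ‖ + 1 with hK₂def
          have hK₂pos : 0 < K₂ := by
            have := norm_nonneg A; have := norm_nonneg Aᵀ; rw [hK₂def]; linarith
          have hE : 0 < Real.exp (K₂ * t) := Real.exp_pos _
          have hET : 0 < Real.exp (K₂ * T) := Real.exp_pos _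
          have hS1 : 0 < ‖S‖ + 1 := by have := norm_nonneg S; linarith
          set ε : ℝ := min (1 / (Real.exp (K₂ * T) * (‖S‖ + 1)))
            ((-q) / (2 * Real.exp (K₂ * t))) with hεdef
          have hεpos : 0 < ε := by
            apply lt_min
            · positivity
            · apply div_pos (by linarith) (by linarith)
          have hεle1 : ε ≤ 1 / (Real.exp (K₂ * T) * (‖S‖ + 1)) := min_le_left _ _
          have hεle2 : ε ≤ (-q) / (2 * Real.exp (K₂ * t)) := min_le_right _ _
          have hcond : ε * Real.exp (K₂ * T) * ‖S‖ < 1 := by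
            have h1 : ε * (Real.exp (K₂ * T) * (‖S‖ + 1)) ≤ 1 := by
              rw [← le_div_iff₀ (by positivity)]
              exact hεle1
            nlinarith [norm_nonneg S, hεpos]
          have hkey := key_pos hn A Q S hQ hS X hric hsym hX0psd ε hεpos
            (by rw [hK₂def] at hcond; exact hcond) t ht u hun
          simp only [qf] at hkey
          rw [← hK₂def] at hkey
          have h2 : ε * Real.exp (K₂ * t) ≤ -q / 2 := by
            rw [le_div_iff₀ (by linarith : (0:ℝ) < 2 * Real.exp (K₂ * t))] at hεle2
            nlinarith
          rw [← hqdef] at hkey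
          nlinarith
        rw [hyy, qf_smul]
        positivity
end
end

section
/- Let A ∈ ℝ^{n×n} and B ∈ ℝ^{n×ℓ}. Let V_k ∈ ℝ^{n×kℓ} be a matrix with orthonormal columns whose column space equals the block Krylov subspace K_k(A,B), and set H_k = V_kᵀ A V_k. Then for every t ≥ 0, ‖e^{tA} B − V_k e^{tH_k} V_kᵀ B‖ ≤ 2 max{1, e^{tμ(A)}} (‖tA‖^k / k!) ‖B‖. -/
open Matrix
open scoped Matrix.Norms.L2Operator

noncomputable section

/-! ### Auxiliary material -/

set_option maxHeartbeats 1000000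

section Aux

open scoped RealInnerProductSpace

lemma inner_piLp_equiv_symm_aux {𝕜 : Type*} [RCLike 𝕜] {ι : Type*} [Fintype ι] (x y : ι → 𝕜) :
    inner 𝕜 ((WithLp.equiv 2 (ι → 𝕜)).symm x : EuclideanSpace 𝕜 ι) ((WithLp.equiv 2 (ι → 𝕜)).symm y)
      = dotProduct (star x) y := by
  rw [WithLp.equiv_symm_apply, EuclideanSpace.inner_toLp_toLp, dotProduct_comm]

/-- The set of real parts of the field of values. -/
def fovSet {m : ℕ} (A : Matrix (Fin m) (Fin m) ℝ) : Set ℝ :=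
  {r : ℝ | ∃ x : EuclideanSpace ℂ (Fin m), ‖x‖ = 1 ∧
    r = (dotProduct (star (x : Fin m → ℂ)) ((A.map Complex.ofReal).mulVec x)).re}

lemma logNorm_eq_fovSet {m : ℕ} (A : Matrix (Fin m) (Fin m) ℝ) :
    logNorm A = sSup (fovSet A) := rfl

lemma fovSet_bddAbove {m : ℕ} (A : Matrix (Fin m) (Fin m) ℝ) : BddAbove (fovSet A) := by
  refine ⟨‖A.map Complex.ofReal‖, ?_⟩
  rintro r ⟨x, hx, rfl⟩
  have h1 : (dotProduct (star (x : Fin m → ℂ)) ((A.map Complex.ofReal).mulVec x))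
      = @inner ℂ _ _ x ((WithLp.equiv 2 _).symm ((A.map Complex.ofReal).mulVec x)) := by
    rw [← inner_piLp_equiv_symm_aux]
    rfl
  have h2 : ‖((EuclideanSpace.equiv (Fin m) ℂ).symm <| (A.map Complex.ofReal).mulVec x : EuclideanSpace ℂ (Fin m))‖
      ≤ ‖A.map Complex.ofReal‖ * ‖x‖ := Matrix.l2_opNorm_mulVec _ _
  have h3 : ‖((WithLp.equiv 2 (Fin m → ℂ)).symm ((A.map Complex.ofReal).mulVec x) : EuclideanSpace ℂ (Fin m))‖
      ≤ ‖A.map Complex.ofReal‖ * ‖x‖ := h2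
  calc (dotProduct (star (x : Fin m → ℂ)) ((A.map Complex.ofReal).mulVec x)).re
      ≤ ‖(dotProduct (star (x : Fin m → ℂ)) ((A.map Complex.ofReal).mulVec x))‖ := by
        exact Complex.re_le_norm _
    _ = ‖@inner ℂ _ _ x ((WithLp.equiv 2 (Fin m → ℂ)).symm ((A.map Complex.ofReal).mulVec x))‖ := by
        rw [h1]
    _ ≤ ‖x‖ * ‖((WithLp.equiv 2 (Fin m → ℂ)).symm ((A.map Complex.ofReal).mulVec x) : EuclideanSpace ℂ (Fin m))‖ :=
        norm_inner_le_norm _ _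
    _ ≤ ‖x‖ * (‖A.map Complex.ofReal‖ * ‖x‖) := by
        exact mul_le_mul_of_nonneg_left h3 (norm_nonneg _)
    _ = ‖A.map Complex.ofReal‖ := by rw [hx]; ring

lemma dot_mulVec_le_logNorm {m : ℕ} (A : Matrix (Fin m) (Fin m) ℝ) (v : Fin m → ℝ) :
    v ⬝ᵥ (A *ᵥ v) ≤ logNorm A * (v ⬝ᵥ v) := by
  by_cases hv : v = 0
  · simp [hv]
  · have hpos : 0 < v ⬝ᵥ v := by
      obtain ⟨i, hi⟩ := Function.ne_iff.mp hv
      refine Finset.sum_pos' (fun j _ => mul_self_nonneg _) ⟨i, Finset.mem_univ i, ?_⟩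
      exact mul_self_pos.2 hi
    set c : ℝ := (Real.sqrt (v ⬝ᵥ v))⁻¹ with hc
    have hsq : Real.sqrt (v ⬝ᵥ v) * Real.sqrt (v ⬝ᵥ v) = v ⬝ᵥ v :=
      Real.mul_self_sqrt hpos.le
    have hcpos : 0 < Real.sqrt (v ⬝ᵥ v) := Real.sqrt_pos.2 hpos
    set u : Fin m → ℝ := c • v with hu
    have huu : u ⬝ᵥ u = 1 := by
      rw [hu, smul_dotProduct, dotProduct_smul, smul_eq_mul, smul_eq_mul, hc]
      field_simp
      rw [Real.sq_sqrt hpos.le]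
    have hc2 : c * c * (v ⬝ᵥ v) = 1 := by
      rw [hc]
      field_simp
      rw [Real.sq_sqrt hpos.le]
    have hmem : u ⬝ᵥ (A *ᵥ u) ∈ fovSet A := by
      refine ⟨(WithLp.equiv 2 (Fin m → ℂ)).symm (fun i => (u i : ℂ)), ?_, ?_⟩
      · rw [EuclideanSpace.norm_eq]
        have h5 : ∀ i : Fin m, ‖((u i : ℂ))‖ ^ 2 = u i * u i := by
          intro i
          rw [Complex.norm_real, Real.norm_eq_abs, sq_abs, sq]
        simp only [WithLp.equiv_symm_apply, WithLp.ofLp_toLp, h5]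
        rw [show ∑ i, u i * u i = u ⬝ᵥ u from rfl, huu, Real.sqrt_one]
      · have key : dotProduct (star (fun i => (u i : ℂ)))
            ((A.map Complex.ofReal) *ᵥ (fun i => (u i : ℂ))) = ((u ⬝ᵥ (A *ᵥ u) : ℝ) : ℂ) := by
          simp only [dotProduct, Matrix.mulVec, Matrix.map_apply, Pi.star_apply,
            Complex.star_def, Complex.conj_ofReal]
          push_cast
          rfl
        rw [show ((WithLp.equiv 2 (Fin m → ℂ)).symm (fun i => (u i : ℂ)) : Fin m → ℂ)
            = fun i => (u i : ℂ) from rfl, key, Complex.ofReal_re]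
    have hle : u ⬝ᵥ (A *ᵥ u) ≤ logNorm A := by
      rw [logNorm_eq_fovSet]
      exact le_csSup (fovSet_bddAbove A) hmem
    have h3 : u ⬝ᵥ (A *ᵥ u) = c * (c * (v ⬝ᵥ (A *ᵥ v))) := by
      rw [hu, smul_dotProduct, Matrix.mulVec_smul, dotProduct_smul]
      simp only [smul_eq_mul]
    have h4 := mul_le_mul_of_nonneg_right hle hpos.le
    rw [h3] at h4
    have h5 : c * (c * (v ⬝ᵥ (A *ᵥ v))) * (v ⬝ᵥ v) = (c * c * (v ⬝ᵥ v)) * (v ⬝ᵥ (A *ᵥ v)) := by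
      ring
    rw [h5, hc2, one_mul] at h4
    exact h4

def mulVecCLM {m : ℕ} (v : Fin m → ℝ) :
    Matrix (Fin m) (Fin m) ℝ →L[ℝ] EuclideanSpace ℝ (Fin m) :=
  LinearMap.toContinuousLinearMap
  { toFun := fun M => (WithLp.equiv 2 _).symm (M *ᵥ v)
    map_add' := fun M N => by
      simp only [Matrix.add_mulVec]
      rfl
    map_smul' := fun c M => by
      simp only [Matrix.smul_mulVec, RingHom.id_apply]
      rfl }

lemma mulVecCLM_apply {m : ℕ} (v : Fin m → ℝ) (M : Matrix (Fin m) (Fin m) ℝ) :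
    mulVecCLM v M = (WithLp.equiv 2 _).symm (M *ᵥ v) := rfl

lemma exp_opNorm_le {m : ℕ} (A : Matrix (Fin m) (Fin m) ℝ) {t : ℝ} (ht : 0 ≤ t) :
    ‖NormedSpace.exp (t • A)‖ ≤ Real.exp (t * logNorm A) := by
  set μ := logNorm A with hμ
  rw [Matrix.l2_opNorm_def]
  refine ContinuousLinearMap.opNorm_le_bound _ (Real.exp_nonneg _) fun x => ?_
  set v : Fin m → ℝ := WithLp.equiv 2 _ x with hv
  set f : ℝ → EuclideanSpace ℝ (Fin m) :=
    fun s => mulVecCLM v (NormedSpace.exp (s • A)) with hf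
  have hder : ∀ s : ℝ, HasDerivAt f (mulVecCLM v (A * NormedSpace.exp (s • A))) s := by
    intro s
    exact (mulVecCLM v).hasFDerivAt.comp_hasDerivAt s (hasDerivAt_exp_smul_const' A s)
  set g : ℝ → ℝ := fun s => ⟪f s, f s⟫ with hg
  have hgder : ∀ s : ℝ, HasDerivAt g
      (⟪f s, mulVecCLM v (A * NormedSpace.exp (s • A))⟫ +
        ⟪mulVecCLM v (A * NormedSpace.exp (s • A)), f s⟫) s :=
    fun s => (hder s).inner ℝ (hder s)
  have hinner_dot : ∀ (a b : Fin m → ℝ),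
      ⟪((WithLp.equiv 2 (Fin m → ℝ)).symm a : EuclideanSpace ℝ (Fin m)),
        (WithLp.equiv 2 (Fin m → ℝ)).symm b⟫ = a ⬝ᵥ b := by
    intro a b
    rw [inner_piLp_equiv_symm_aux, star_trivial]
  have hDle : ∀ s : ℝ,
      (⟪f s, mulVecCLM v (A * NormedSpace.exp (s • A))⟫ +
        ⟪mulVecCLM v (A * NormedSpace.exp (s • A)), f s⟫) ≤ 2 * μ * g s := by
    intro s
    have hfs : f s = (WithLp.equiv 2 (Fin m → ℝ)).symm (NormedSpace.exp (s • A) *ᵥ v) := rfl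
    have hws : mulVecCLM v (A * NormedSpace.exp (s • A))
        = (WithLp.equiv 2 (Fin m → ℝ)).symm (A *ᵥ (NormedSpace.exp (s • A) *ᵥ v)) := by
      rw [mulVecCLM_apply, Matrix.mulVec_mulVec]
    have hgs : g s = (NormedSpace.exp (s • A) *ᵥ v) ⬝ᵥ (NormedSpace.exp (s • A) *ᵥ v) := by
      rw [show g s = ⟪f s, f s⟫ from rfl, hfs, hinner_dot]
    rw [hfs, hws, hinner_dot, hinner_dot, hgs]
    have h1 := dot_mulVec_le_logNorm A (NormedSpace.exp (s • A) *ᵥ v)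
    rw [← hμ] at h1
    have h2 : (A *ᵥ (NormedSpace.exp (s • A) *ᵥ v)) ⬝ᵥ (NormedSpace.exp (s • A) *ᵥ v)
        = (NormedSpace.exp (s • A) *ᵥ v) ⬝ᵥ (A *ᵥ (NormedSpace.exp (s • A) *ᵥ v)) :=
      dotProduct_comm _ _
    rw [h2]
    linarith
  set h : ℝ → ℝ := fun s => Real.exp (-(2 * μ) * s) * g s with hh
  have hhder : ∀ s : ℝ, HasDerivAt h
      (Real.exp (-(2 * μ) * s) * (-(2 * μ)) * g s +
        Real.exp (-(2 * μ) * s) *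
          (⟪f s, mulVecCLM v (A * NormedSpace.exp (s • A))⟫ +
            ⟪mulVecCLM v (A * NormedSpace.exp (s • A)), f s⟫)) s := by
    intro s
    have e0 : HasDerivAt (fun u : ℝ => -(2 * μ) * u) (-(2 * μ)) s := by
      simpa using (hasDerivAt_id s).const_mul (-(2 * μ))
    have e1 : HasDerivAt (fun u : ℝ => Real.exp (-(2 * μ) * u))
        (Real.exp (-(2 * μ) * s) * (-(2 * μ))) s := e0.exp
    exact e1.mul (hgder s)
  have hanti : Antitone h := by
    refine antitone_of_deriv_nonpos (fun s => (hhder s).differentiableAt) fun s => ?_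
    rw [(hhder s).deriv]
    have h1 := hDle s
    have h2 : (0:ℝ) < Real.exp (-(2 * μ) * s) := Real.exp_pos _
    nlinarith [mul_le_mul_of_nonneg_left h1 h2.le]
  have hf0 : f 0 = x := by
    rw [show f 0 = mulVecCLM v (NormedSpace.exp ((0:ℝ) • A)) from rfl]
    rw [zero_smul, NormedSpace.exp_zero, mulVecCLM_apply, Matrix.one_mulVec, hv]
    exact (WithLp.equiv 2 _).symm_apply_apply x
  have hg0 : g 0 = ‖x‖ ^ 2 := by
    rw [show g 0 = ⟪f 0, f 0⟫ from rfl, hf0]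
    exact real_inner_self_eq_norm_sq x
  have hht : h t ≤ ‖x‖ ^ 2 := by
    have h0 : h 0 = ‖x‖ ^ 2 := by
      rw [show h 0 = Real.exp (-(2 * μ) * 0) * g 0 from rfl, hg0]
      simp
    rw [← h0]
    exact hanti ht
  have hgt : g t ≤ Real.exp (2 * μ * t) * ‖x‖ ^ 2 := by
    have h2 : (0:ℝ) < Real.exp (-(2 * μ) * t) := Real.exp_pos _
    have h3 : Real.exp (2 * μ * t) * Real.exp (-(2 * μ) * t) = 1 := by
      rw [← Real.exp_add]
      norm_num
    have h4 : Real.exp (-(2 * μ) * t) * g t ≤ ‖x‖ ^ 2 := hht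
    nlinarith [mul_le_mul_of_nonneg_left h4 (Real.exp_nonneg (2 * μ * t))]
  have hft : ‖f t‖ ^ 2 ≤ (Real.exp (t * μ) * ‖x‖) ^ 2 := by
    have e1 : ‖f t‖ ^ 2 = g t := (real_inner_self_eq_norm_sq (f t)).symm
    have e2 : (Real.exp (t * μ)) ^ 2 = Real.exp (2 * μ * t) := by
      rw [sq, ← Real.exp_add]
      ring_nf
    rw [e1, mul_pow, e2]
    exact hgt
  have hfinal : ‖f t‖ ≤ Real.exp (t * μ) * ‖x‖ := by
    have h6 := Real.sqrt_le_sqrt hft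
    rwa [Real.sqrt_sq (norm_nonneg _), Real.sqrt_sq (by positivity)] at h6
  exact hfinal

lemma exp_le_max_one_exp {s t μ : ℝ} (hs : 0 ≤ s) (hst : s ≤ t) :
    Real.exp (s * μ) ≤ max 1 (Real.exp (t * μ)) := by
  rcases le_or_gt 0 μ with hμ | hμ
  · exact le_max_of_le_right (Real.exp_le_exp.2 (mul_le_mul_of_nonneg_right hst hμ))
  · refine le_max_of_le_left (Real.exp_le_one_iff.2 ?_)
    exact mul_nonpos_of_nonneg_of_nonpos hs hμ.le

lemma remainder_bound {m : ℕ} (A : Matrix (Fin m) (Fin m) ℝ) {t : ℝ} (ht : 0 ≤ t)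
    (C : ℝ) (hC : ∀ s, 0 ≤ s → s ≤ t → ‖NormedSpace.exp (s • A)‖ ≤ C) (k : ℕ) :
    ∀ s, 0 ≤ s → s ≤ t →
      ‖NormedSpace.exp (s • A) - ∑ j ∈ Finset.range k, (s ^ j / (j.factorial : ℝ)) • A ^ j‖
        ≤ C * (‖A‖ ^ k * s ^ k / (k.factorial : ℝ)) := by
  induction k with
  | zero =>
    intro s hs hst
    simpa using hC s hs hst
  | succ k ih =>
    intro s hs hst
    set F : ℝ → Matrix (Fin m) (Fin m) ℝ := fun u =>
      NormedSpace.exp (u • A) - ∑ j ∈ Finset.range (k + 1), (u ^ j / (j.factorial : ℝ)) • A ^ j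
      with hF
    set F' : ℝ → Matrix (Fin m) (Fin m) ℝ := fun u =>
      A * (NormedSpace.exp (u • A) - ∑ j ∈ Finset.range k, (u ^ j / (j.factorial : ℝ)) • A ^ j)
      with hF'
    have hFder : ∀ u : ℝ, HasDerivAt F (F' u) u := by
      intro u
      have hexp : HasDerivAt (fun w : ℝ => NormedSpace.exp (w • A))
          (A * NormedSpace.exp (u • A)) u := hasDerivAt_exp_smul_const' A u
      have hsum : HasDerivAt
          (fun w : ℝ => ∑ j ∈ Finset.range (k + 1), (w ^ j / (j.factorial : ℝ)) • A ^ j)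
          (∑ j ∈ Finset.range (k + 1), (((j : ℝ) * u ^ (j - 1)) / (j.factorial : ℝ)) • A ^ j)
          u := by
        refine HasDerivAt.fun_sum fun j _ => ?_
        exact ((hasDerivAt_pow j u).div_const _).smul_const _
      have hkey : ∑ j ∈ Finset.range (k + 1), (((j : ℝ) * u ^ (j - 1)) / (j.factorial : ℝ)) • A ^ j
          = A * ∑ j ∈ Finset.range k, (u ^ j / (j.factorial : ℝ)) • A ^ j := by
        rw [Finset.sum_range_succ']
        simp only [Nat.cast_zero, zero_mul, zero_div, zero_smul, add_zero]
        rw [Matrix.mul_sum]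
        refine Finset.sum_congr rfl fun j _ => ?_
        have h1 : ((j:ℝ) + 1) ≠ 0 := by positivity
        rw [mul_smul_comm, ← pow_succ']
        congr 1
        rw [Nat.factorial_succ]
        push_cast [Nat.add_sub_cancel]
        rw [mul_div_mul_left _ _ h1]
      have hFder' := hexp.sub hsum
      rw [hkey] at hFder'
      show HasDerivAt F (A * (NormedSpace.exp (u • A) -
        ∑ j ∈ Finset.range k, (u ^ j / (j.factorial : ℝ)) • A ^ j)) u
      rw [Matrix.mul_sub]
      exact hFder'
    have hcont : Continuous F' := by
      rw [hF']
      refine continuous_const.mul (Continuous.sub ?_ ?_)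
      · exact continuous_iff_continuousAt.2 fun u => (hasDerivAt_exp_smul_const' A u).continuousAt
      · refine continuous_finset_sum _ fun j _ => ?_
        exact ((continuous_pow j).div_const _).smul continuous_const
    have hF0 : F 0 = 0 := by
      rw [hF]
      simp only [zero_smul, NormedSpace.exp_zero]
      rw [Finset.sum_eq_single 0]
      · simp
      · intro j _ hj
        rw [zero_pow hj, zero_div, zero_smul]
      · intro h
        exact absurd (Finset.mem_range.2 (Nat.succ_pos k)) h
    have hint : ∫ u in (0:ℝ)..s, F' u = F s := by
      rw [intervalIntegral.integral_eq_sub_of_hasDerivAt (fun u _ => hFder u)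
        (hcont.intervalIntegrable 0 s), hF0, sub_zero]
    have hCnn : 0 ≤ C := (norm_nonneg _).trans (hC 0 le_rfl ht)
    have hbound : ‖F s‖ ≤ ∫ u in (0:ℝ)..s, (C * ‖A‖ ^ (k + 1) / (k.factorial : ℝ)) * u ^ k := by
      rw [← hint]
      refine (intervalIntegral.norm_integral_le_integral_norm hs).trans ?_
      refine intervalIntegral.integral_mono_on hs ?_ ?_ ?_
      · exact (hcont.norm).intervalIntegrable 0 s
      · exact (continuous_const.mul (continuous_pow k)).intervalIntegrable 0 s
      · intro u hu
        have h1 : ‖F' u‖ ≤ ‖A‖ *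
            ‖NormedSpace.exp (u • A) -
              ∑ j ∈ Finset.range k, (u ^ j / (j.factorial : ℝ)) • A ^ j‖ := by
          rw [hF']
          exact norm_mul_le _ _
        have h2 := ih u hu.1 (hu.2.trans hst)
        calc ‖F' u‖ ≤ ‖A‖ * (C * (‖A‖ ^ k * u ^ k / (k.factorial : ℝ))) :=
              h1.trans (mul_le_mul_of_nonneg_left h2 (norm_nonneg A))
          _ = (C * ‖A‖ ^ (k + 1) / (k.factorial : ℝ)) * u ^ k := by
              rw [pow_succ]; ring
    have hval : ∫ u in (0:ℝ)..s, (C * ‖A‖ ^ (k + 1) / (k.factorial : ℝ)) * u ^ k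
        = (C * ‖A‖ ^ (k + 1) / (k.factorial : ℝ)) * (s ^ (k + 1) / (k + 1)) := by
      rw [intervalIntegral.integral_const_mul, integral_pow]
      norm_num
    have heq : (C * ‖A‖ ^ (k + 1) / (k.factorial : ℝ)) * (s ^ (k + 1) / (k + 1))
        = C * (‖A‖ ^ (k + 1) * s ^ (k + 1) / ((k + 1).factorial : ℝ)) := by
      rw [Nat.factorial_succ]
      have h1 : ((k : ℝ) + 1) ≠ 0 := by positivity
      have h2 : ((k.factorial : ℝ)) ≠ 0 := Nat.cast_ne_zero.2 (Nat.factorial_ne_zero k)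
      push_cast
      field_simp
    calc ‖F s‖ ≤ _ := hbound
      _ = C * (‖A‖ ^ (k + 1) * s ^ (k + 1) / ((k + 1).factorial : ℝ)) := by rw [hval, heq]

lemma logNorm_of_dim_zero {m : ℕ} (h : m = 0) (A : Matrix (Fin m) (Fin m) ℝ) :
    logNorm A = 0 := by
  subst h
  have hempty : fovSet A = ∅ := by
    ext r
    simp only [fovSet, Set.mem_setOf_eq, Set.mem_empty_iff_false, iff_false, not_exists]
    intro x
    rintro ⟨hx, -⟩
    have hx0 : x = 0 := Subsingleton.elim x 0
    rw [hx0, norm_zero] at hx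
    exact one_ne_zero hx.symm
  rw [logNorm_eq_fovSet, hempty, Real.sSup_empty]

lemma star_mulVec_dot {p q : ℕ} (V : Matrix (Fin p) (Fin q) ℝ) (y : Fin q → ℂ)
    (z : Fin p → ℂ) :
    star ((V.map Complex.ofReal) *ᵥ y) ⬝ᵥ z = star y ⬝ᵥ ((V.map Complex.ofReal)ᵀ *ᵥ z) := by
  simp only [dotProduct, Matrix.mulVec, Matrix.transpose_apply, Matrix.map_apply,
    Pi.star_apply, dotProduct, star_sum, star_mul', Complex.star_def, Complex.conj_ofReal,
    Finset.sum_mul, Finset.mul_sum]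
  rw [Finset.sum_comm]
  refine Finset.sum_congr rfl fun a _ => Finset.sum_congr rfl fun j _ => ?_
  ring

lemma map_mul_ofReal {p q r : ℕ} (M : Matrix (Fin p) (Fin q) ℝ) (N : Matrix (Fin q) (Fin r) ℝ) :
    (M * N).map Complex.ofReal = M.map Complex.ofReal * N.map Complex.ofReal := by
  ext i j
  simp only [Matrix.map_apply, Matrix.mul_apply]
  push_cast
  rfl

lemma logNorm_conj_le {n m : ℕ} (hm : 0 < m) (A : Matrix (Fin n) (Fin n) ℝ)
    (V : Matrix (Fin n) (Fin m) ℝ) (hV : Vᵀ * V = 1) :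
    logNorm (Vᵀ * A * V) ≤ logNorm A := by
  rw [logNorm_eq_fovSet, logNorm_eq_fovSet]
  refine csSup_le ?_ ?_
  · refine ⟨_, ⟨EuclideanSpace.single (⟨0, hm⟩ : Fin m) (1 : ℂ), ?_, rfl⟩⟩
    rw [EuclideanSpace.norm_single, norm_one]
  · rintro r ⟨y, hy, rfl⟩
    set Vc := V.map Complex.ofReal with hVc
    set Ac := A.map Complex.ofReal with hAc
    have hHc : (Vᵀ * A * V).map Complex.ofReal = Vcᵀ * Ac * Vc := by
      rw [map_mul_ofReal, map_mul_ofReal, Matrix.transpose_map]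
    have hVcV : Vcᵀ * Vc = 1 := by
      rw [hVc, ← Matrix.transpose_map, ← map_mul_ofReal, hV]
      ext i j
      by_cases hij : i = j <;> simp [Matrix.map_apply, Matrix.one_apply, hij]
    set yf : Fin m → ℂ := (y : Fin m → ℂ) with hyf
    set xf : Fin n → ℂ := Vc *ᵥ yf with hxf
    have hdot : star yf ⬝ᵥ (((Vᵀ * A * V).map Complex.ofReal) *ᵥ yf)
        = star xf ⬝ᵥ (Ac *ᵥ xf) := by
      rw [hxf, hVc, star_mulVec_dot V yf (Ac *ᵥ ((V.map Complex.ofReal) *ᵥ yf))]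
      rw [hHc, Matrix.mulVec_mulVec, Matrix.mulVec_mulVec, hVc]
    have hxnorm : ‖((WithLp.equiv 2 (Fin n → ℂ)).symm xf : EuclideanSpace ℂ (Fin n))‖ = 1 := by
      have h1 : star xf ⬝ᵥ xf = star yf ⬝ᵥ yf := by
        rw [hxf, hVc, star_mulVec_dot V yf ((V.map Complex.ofReal) *ᵥ yf),
          Matrix.mulVec_mulVec, ← hVc, hVcV, Matrix.one_mulVec]
      have h2 : @inner ℂ _ _ ((WithLp.equiv 2 (Fin n → ℂ)).symm xf : EuclideanSpace ℂ (Fin n))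
          ((WithLp.equiv 2 (Fin n → ℂ)).symm xf) = star xf ⬝ᵥ xf :=
        inner_piLp_equiv_symm_aux xf xf
      have h3 : @inner ℂ _ _ y y = star yf ⬝ᵥ yf :=
          (EuclideanSpace.inner_eq_star_dotProduct y y).trans (dotProduct_comm _ _)
      have h4 : @inner ℂ _ _ y y = (1 : ℂ) := by
        rw [inner_self_eq_norm_sq_to_K, hy]
        norm_num
      have h5 : @inner ℂ _ _ ((WithLp.equiv 2 (Fin n → ℂ)).symm xf : EuclideanSpace ℂ (Fin n))
          ((WithLp.equiv 2 (Fin n → ℂ)).symm xf) = (1 : ℂ) := by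
        rw [h2, h1, ← h3, h4]
      have h6 := inner_self_eq_norm_sq_to_K (𝕜 := ℂ)
        ((WithLp.equiv 2 (Fin n → ℂ)).symm xf : EuclideanSpace ℂ (Fin n))
      rw [h5] at h6
      have h7 : ‖((WithLp.equiv 2 (Fin n → ℂ)).symm xf : EuclideanSpace ℂ (Fin n))‖ ^ 2 = 1 := by
        have h9 := inner_self_eq_norm_sq (𝕜 := ℂ)
          ((WithLp.equiv 2 (Fin n → ℂ)).symm xf : EuclideanSpace ℂ (Fin n))
        rw [h5] at h9
        simpa using h9.symm
      nlinarith [norm_nonneg ((WithLp.equiv 2 (Fin n → ℂ)).symm xf : EuclideanSpace ℂ (Fin n))]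
    refine le_csSup (fovSet_bddAbove A) ⟨(WithLp.equiv 2 (Fin n → ℂ)).symm xf, hxnorm, ?_⟩
    rw [← hAc]
    exact congrArg Complex.re hdot

lemma matrix_norm_one_le {m : ℕ} : ‖(1 : Matrix (Fin m) (Fin m) ℝ)‖ ≤ 1 := by
  rw [Matrix.cstar_norm_def]
  rw [show (toEuclideanCLM (𝕜 := ℝ) (n := Fin m)) 1 = 1 from map_one _]
  exact ContinuousLinearMap.norm_id_le

lemma conjTranspose_eq_transpose_real {p q : ℕ} (V : Matrix (Fin p) (Fin q) ℝ) : Vᴴ = Vᵀ := by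
  ext i j
  simp [Matrix.conjTranspose_apply]

lemma norm_V_le_one {n m : ℕ} (V : Matrix (Fin n) (Fin m) ℝ) (hV : Vᵀ * V = 1) : ‖V‖ ≤ 1 := by
  have h := Matrix.l2_opNorm_conjTranspose_mul_self V
  rw [conjTranspose_eq_transpose_real, hV] at h
  have h1 : ‖V‖ * ‖V‖ ≤ 1 := h ▸ matrix_norm_one_le
  nlinarith [norm_nonneg V]

lemma norm_Vt_le_one {n m : ℕ} (V : Matrix (Fin n) (Fin m) ℝ) (hV : Vᵀ * V = 1) : ‖Vᵀ‖ ≤ 1 := by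
  rw [← conjTranspose_eq_transpose_real, Matrix.l2_opNorm_conjTranspose]
  exact norm_V_le_one V hV

end Aux

section Krylov

variable {n ℓ k : ℕ} (A : Matrix (Fin n) (Fin n) ℝ) (B : Matrix (Fin n) (Fin ℓ) ℝ)
  (V : Matrix (Fin n) (Fin (k * ℓ)) ℝ)

lemma proj_fix (hV : Vᵀ * V = 1) (hspan : colSpace V = blockKrylov A B k)
    {j : ℕ} (hj : j < k) : V * Vᵀ * (A ^ j * B) = A ^ j * B := by
  have hmv : ∀ w ∈ colSpace V, (V * Vᵀ) *ᵥ w = w := by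
    intro w hw
    induction hw using Submodule.span_induction with
    | mem w hw =>
      obtain ⟨c, rfl⟩ := hw
      have h1 : Vᵀ c = V *ᵥ Pi.single c 1 := by
        ext i
        simp [Matrix.mulVec_single]
      rw [h1, Matrix.mulVec_mulVec, Matrix.mul_assoc, hV, Matrix.mul_one]
    | zero => simp
    | add x y _ _ hx hy => rw [Matrix.mulVec_add, hx, hy]
    | smul c x _ hx => rw [Matrix.mulVec_smul, hx]
  ext i c
  have hmem : (A ^ j * B)ᵀ c ∈ colSpace V := by
    rw [hspan]
    exact Submodule.subset_span ⟨j, hj, c, rfl⟩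
  have h2 := congrFun (hmv _ hmem) i
  simpa [Matrix.mulVec, Matrix.mul_apply, dotProduct, Matrix.transpose_apply,
    Finset.sum_mul, Finset.mul_sum] using h2

lemma Hpow_exact (hV : Vᵀ * V = 1) (hspan : colSpace V = blockKrylov A B k) :
    ∀ j, j ≤ k → (Vᵀ * A * V) ^ j * (Vᵀ * B) = Vᵀ * (A ^ j * B) := by
  intro j
  induction j with
  | zero => simp
  | succ i ih =>
    intro h
    have hik : i < k := Nat.lt_of_lt_of_le (Nat.lt_succ_self i) h
    have hp := proj_fix A B V hV hspan hik
    rw [pow_succ', Matrix.mul_assoc, ih (Nat.le_of_lt hik)]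
    simp only [Matrix.mul_assoc] at hp ⊢
    rw [hp, pow_succ', Matrix.mul_assoc]

lemma krylov_exact (hV : Vᵀ * V = 1) (hspan : colSpace V = blockKrylov A B k)
    {j : ℕ} (hj : j < k) : V * ((Vᵀ * A * V) ^ j * (Vᵀ * B)) = A ^ j * B := by
  rw [Hpow_exact A B V hV hspan j (Nat.le_of_lt hj)]
  have hp := proj_fix A B V hV hspan hj
  simp only [Matrix.mul_assoc] at hp
  exact hp

end Krylov

/-- Krylov subspace approximation of the matrix exponential times a block:
if `V_k ∈ ℝ^{n×kℓ}` has orthonormal columns with column space equal to `K_k(A,B)` and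
`H_k = V_kᵀ A V_k`, then `‖e^{tA}B − V_k e^{tH_k} V_kᵀ B‖ ≤ 2 max{1,e^{tμ(A)}} ‖tA‖^k/k! ‖B‖`. -/
theorem krylov_exp_error {n ℓ : ℕ} (A : Matrix (Fin n) (Fin n) ℝ)
    (B : Matrix (Fin n) (Fin ℓ) ℝ) (k : ℕ)
    (V : Matrix (Fin n) (Fin (k * ℓ)) ℝ) (hV : Vᵀ * V = 1)
    (hspan : colSpace V = blockKrylov A B k) :
    ∀ t : ℝ, 0 ≤ t →
      ‖mexp (t • A) * B - V * mexp (t • (Vᵀ * A * V)) * Vᵀ * B‖ ≤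
        2 * max 1 (Real.exp (t * logNorm A)) * (‖t • A‖ ^ k / (Nat.factorial k : ℝ)) * ‖B‖ := by
  intro t ht
  set H : Matrix (Fin (k * ℓ)) (Fin (k * ℓ)) ℝ := Vᵀ * A * V with hH
  set C : ℝ := max 1 (Real.exp (t * logNorm A)) with hC
  have hC1 : (1:ℝ) ≤ C := le_max_left _ _
  have hC0 : (0:ℝ) ≤ C := zero_le_one.trans hC1
  have hCA : ∀ s, 0 ≤ s → s ≤ t → ‖NormedSpace.exp (s • A)‖ ≤ C := fun s hs hst =>
    (exp_opNorm_le A hs).trans (exp_le_max_one_exp hs hst)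
  have hCH : ∀ s, 0 ≤ s → s ≤ t → ‖NormedSpace.exp (s • H)‖ ≤ C := by
    intro s hs hst
    refine (exp_opNorm_le H hs).trans ?_
    rcases Nat.eq_zero_or_pos (k * ℓ) with hm | hm
    · rw [hH, logNorm_of_dim_zero hm]
      simpa using hC1
    · have h1 : logNorm H ≤ logNorm A := logNorm_conj_le hm A V hV
      have h2 : s * logNorm H ≤ s * logNorm A := mul_le_mul_of_nonneg_left h1 hs
      exact (Real.exp_le_exp.2 h2).trans (exp_le_max_one_exp hs hst)
  set SA : Matrix (Fin n) (Fin n) ℝ :=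
    ∑ j ∈ Finset.range k, (t ^ j / (j.factorial : ℝ)) • A ^ j with hSA
  set SH : Matrix (Fin (k * ℓ)) (Fin (k * ℓ)) ℝ :=
    ∑ j ∈ Finset.range k, (t ^ j / (j.factorial : ℝ)) • H ^ j with hSH
  have hS : V * SH * Vᵀ * B = SA * B := by
    rw [hSA, hSH]
    simp only [Matrix.mul_sum, Matrix.sum_mul, Matrix.mul_smul, Matrix.smul_mul,
      Matrix.mul_assoc]
    refine Finset.sum_congr rfl fun j hj => ?_
    rw [show V * (H ^ j * (Vᵀ * B)) = A ^ j * B from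
      krylov_exact A B V hV hspan (Finset.mem_range.mp hj)]
  have key : mexp (t • A) * B - V * mexp (t • H) * Vᵀ * B
      = (mexp (t • A) - SA) * B - V * (mexp (t • H) - SH) * Vᵀ * B := by
    simp only [Matrix.sub_mul, Matrix.mul_sub]
    simp only [Matrix.mul_assoc] at hS ⊢
    rw [hS]
    abel
  rw [key]
  have hRA : ‖mexp (t • A) - SA‖ ≤ C * (‖A‖ ^ k * t ^ k / (k.factorial : ℝ)) := by
    rw [hSA, show mexp (t • A) = NormedSpace.exp (t • A) from rfl]
    exact remainder_bound A ht C hCA k t ht le_rfl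
  have hRH : ‖mexp (t • H) - SH‖ ≤ C * (‖A‖ ^ k * t ^ k / (k.factorial : ℝ)) := by
    have h1 : ‖mexp (t • H) - SH‖ ≤ C * (‖H‖ ^ k * t ^ k / (k.factorial : ℝ)) := by
      rw [hSH, show mexp (t • H) = NormedSpace.exp (t • H) from rfl]
      exact remainder_bound H ht C hCH k t ht le_rfl
    have hHA : ‖H‖ ≤ ‖A‖ := by
      have hVle := norm_V_le_one V hV
      have hVtle := norm_Vt_le_one V hV
      have a1 := Matrix.l2_opNorm_mul (Vᵀ * A) V
      have a2 := Matrix.l2_opNorm_mul Vᵀ A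
      have b1 : ‖Vᵀ * A‖ ≤ ‖A‖ := by nlinarith [norm_nonneg A, norm_nonneg (Vᵀ * A)]
      calc ‖H‖ ≤ ‖Vᵀ * A‖ * ‖V‖ := a1
        _ ≤ ‖A‖ := by nlinarith [norm_nonneg (Vᵀ * A), norm_nonneg A, norm_nonneg V]
    refine h1.trans ?_
    gcongr
  have hnorm1 : ‖(mexp (t • A) - SA) * B‖ ≤ C * (‖A‖ ^ k * t ^ k / (k.factorial : ℝ)) * ‖B‖ := by
    refine (Matrix.l2_opNorm_mul _ _).trans ?_
    exact mul_le_mul_of_nonneg_right hRA (norm_nonneg B)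
  have hnorm2 : ‖V * (mexp (t • H) - SH) * Vᵀ * B‖
      ≤ C * (‖A‖ ^ k * t ^ k / (k.factorial : ℝ)) * ‖B‖ := by
    have hVle := norm_V_le_one V hV
    have hVtle := norm_Vt_le_one V hV
    have a1 := Matrix.l2_opNorm_mul (V * (mexp (t • H) - SH) * Vᵀ) B
    have a2 := Matrix.l2_opNorm_mul (V * (mexp (t • H) - SH)) Vᵀ
    have a3 := Matrix.l2_opNorm_mul V (mexp (t • H) - SH)
    have hR0 : (0:ℝ) ≤ ‖mexp (t • H) - SH‖ := norm_nonneg _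
    have hB0 : (0:ℝ) ≤ ‖B‖ := norm_nonneg _
    have c1 : ‖V * (mexp (t • H) - SH)‖ ≤ ‖mexp (t • H) - SH‖ := by
      nlinarith [norm_nonneg (V * (mexp (t • H) - SH)), norm_nonneg V]
    have c2 : ‖V * (mexp (t • H) - SH) * Vᵀ‖ ≤ ‖mexp (t • H) - SH‖ := by
      nlinarith [norm_nonneg (V * (mexp (t • H) - SH)), norm_nonneg Vᵀ,
        norm_nonneg (V * (mexp (t • H) - SH) * Vᵀ)]
    calc ‖V * (mexp (t • H) - SH) * Vᵀ * B‖ ≤ ‖V * (mexp (t • H) - SH) * Vᵀ‖ * ‖B‖ := a1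
      _ ≤ ‖mexp (t • H) - SH‖ * ‖B‖ := mul_le_mul_of_nonneg_right c2 hB0
      _ ≤ C * (‖A‖ ^ k * t ^ k / (k.factorial : ℝ)) * ‖B‖ :=
          mul_le_mul_of_nonneg_right hRH hB0
  have htA : ‖A‖ ^ k * t ^ k = ‖t • A‖ ^ k := by
    rw [norm_smul, Real.norm_eq_abs, abs_of_nonneg ht, mul_pow]
    ring
  calc ‖(mexp (t • A) - SA) * B - V * (mexp (t • H) - SH) * Vᵀ * B‖
      ≤ ‖(mexp (t • A) - SA) * B‖ + ‖V * (mexp (t • H) - SH) * Vᵀ * B‖ := norm_sub_le _ _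
    _ ≤ C * (‖A‖ ^ k * t ^ k / (k.factorial : ℝ)) * ‖B‖
        + C * (‖A‖ ^ k * t ^ k / (k.factorial : ℝ)) * ‖B‖ := add_le_add hnorm1 hnorm2
    _ = 2 * C * (‖t • A‖ ^ k / (k.factorial : ℝ)) * ‖B‖ := by rw [← htA]; ring
end
end

section
/- Let A ∈ ℝ^{n×n}, Z ∈ ℝ^{n×p}, C ∈ ℝ^{n×q}, and let X : [0,T] → ℝ^{n×n} solve the differential Lyapunov equation Ẋ(t) = A X(t) + X(t) Aᵀ + C Cᵀ, X(0) = Z Zᵀ. Let V_k be a matrix with orthonormal columns spanning the block Krylov subspace K_k(A, [Z C]), set H_k = V_kᵀ A V_k, let Y_k solve the projected Lyapunov equation Ẏ_k(t) = H_k Y_k(t) + Y_k(t) H_kᵀ + (V_kᵀC)(V_kᵀC)ᵀ with Y_k(0) = (V_kᵀZ)(V_kᵀZ)ᵀ, and set X_k(t) = V_k Y_k(t) V_kᵀ. Then, writing X₀ = Z Zᵀ and Q = C Cᵀ, for every t ∈ [0,T]: ‖X(t) − X_k(t)‖ ≤ 4 max{1, e^{2tμ(A)}} ‖A‖^k ( (t^k/k!)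 ‖X₀‖ + (t^{k+1}/(k+1)!) ‖Q‖ ). -/
open Matrix
open scoped Matrix.Norms.L2Operator

noncomputable section

set_option maxHeartbeats 1600000

open MeasureTheory

instance matRatNormedAlgebra {a : ℕ} : NormedAlgebra ℚ (Matrix (Fin a) (Fin a) ℝ) :=
  NormedAlgebra.restrictScalars ℚ ℝ _

namespace KLEAux

open MeasureTheory
open scoped RealInnerProductSpace

variable {n : ℕ}

lemma fov_bddAbove (A : Matrix (Fin n) (Fin n) ℝ) :
    BddAbove {r : ℝ | ∃ x : EuclideanSpace ℂ (Fin n), ‖x‖ = 1 ∧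
      r = (dotProduct (star (x : Fin n → ℂ)) ((A.map Complex.ofReal).mulVec x)).re} := by
  refine ⟨‖A.map Complex.ofReal‖, ?_⟩
  rintro r ⟨x, hx, rfl⟩
  set y : EuclideanSpace ℂ (Fin n) :=
    (WithLp.equiv 2 (Fin n → ℂ)).symm ((A.map Complex.ofReal) *ᵥ (WithLp.equiv 2 _ x)) with hy
  have h1 : (dotProduct (star (x : Fin n → ℂ)) ((A.map Complex.ofReal).mulVec x))
      = inner (𝕜 := ℂ) x y := by
    rw [EuclideanSpace.inner_eq_star_dotProduct]
    rw [dotProduct_comm]; rfl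
  have h2 : ‖y‖ ≤ ‖A.map Complex.ofReal‖ * ‖x‖ :=
    Matrix.l2_opNorm_mulVec (A.map Complex.ofReal) x
  calc (dotProduct (star (x : Fin n → ℂ)) ((A.map Complex.ofReal).mulVec x)).re
      ≤ ‖inner (𝕜 := ℂ) x y‖ := by rw [h1]; exact Complex.re_le_norm _
    _ ≤ ‖x‖ * ‖y‖ := norm_inner_le_norm x y
    _ ≤ ‖x‖ * (‖A.map Complex.ofReal‖ * ‖x‖) := by gcongr
    _ = ‖A.map Complex.ofReal‖ := by rw [hx]; ring

variable {n : ℕ}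

lemma unit_quad_le_logNorm (A : Matrix (Fin n) (Fin n) ℝ) (u : EuclideanSpace ℝ (Fin n))
    (hu : ‖u‖ = 1) :
    dotProduct (u : Fin n → ℝ) (A *ᵥ (u : Fin n → ℝ)) ≤ logNorm A := by
  apply le_csSup (fov_bddAbove A)
  refine ⟨(WithLp.equiv 2 (Fin n → ℂ)).symm (fun i => ((u : Fin n → ℝ) i : ℂ)), ?_, ?_⟩
  · rw [EuclideanSpace.norm_eq] at hu ⊢
    simpa using hu
  · have : dotProduct (star (fun i => ((u : Fin n → ℝ) i : ℂ)))
        ((A.map Complex.ofReal) *ᵥ (fun i => ((u : Fin n → ℝ) i : ℂ)))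
        = ((dotProduct (u : Fin n → ℝ) (A *ᵥ (u : Fin n → ℝ)) : ℝ) : ℂ) := by
      simp only [dotProduct, Matrix.mulVec, Matrix.map_apply, Pi.star_apply,
        Complex.star_def, Complex.conj_ofReal]
      push_cast
      ring
    show dotProduct (u : Fin n → ℝ) (A *ᵥ (u : Fin n → ℝ))
      = (dotProduct (star (fun i => ((u : Fin n → ℝ) i : ℂ)))
        ((A.map Complex.ofReal) *ᵥ (fun i => ((u : Fin n → ℝ) i : ℂ)))).re
    rw [this]
    simp

lemma quad_le_logNorm (A : Matrix (Fin n) (Fin n) ℝ) (x : EuclideanSpace ℝ (Fin n)) :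
    dotProduct (x : Fin n → ℝ) (A *ᵥ (x : Fin n → ℝ)) ≤ logNorm A * ‖x‖ ^ 2 := by
  by_cases hx : x = 0
  · subst hx
    rw [show ((0 : EuclideanSpace ℝ (Fin n)) : Fin n → ℝ) = 0 from rfl]
    simp
  · have hnx : (0:ℝ) < ‖x‖ := norm_pos_iff.mpr hx
    set u : EuclideanSpace ℝ (Fin n) := ‖x‖⁻¹ • x with hu
    have hu1 : ‖u‖ = 1 := by
      rw [hu, norm_smul, norm_inv, norm_norm, inv_mul_cancel₀ hnx.ne']
    have key := unit_quad_le_logNorm A u hu1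
    have hui : ∀ i, (u : Fin n → ℝ) i = ‖x‖⁻¹ * (x : Fin n → ℝ) i := fun i => rfl
    have hdq : dotProduct (u : Fin n → ℝ) (A *ᵥ (u : Fin n → ℝ))
        = ‖x‖⁻¹ ^ 2 * dotProduct (x : Fin n → ℝ) (A *ᵥ (x : Fin n → ℝ)) := by
      simp only [dotProduct, Matrix.mulVec, hui, Finset.mul_sum]
      apply Finset.sum_congr rfl
      intro i _
      apply Finset.sum_congr rfl
      intro j _
      ring
    have h2 : dotProduct (x : Fin n → ℝ) (A *ᵥ (x : Fin n → ℝ))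
        = ‖x‖ ^ 2 * dotProduct (u : Fin n → ℝ) (A *ᵥ (u : Fin n → ℝ)) := by
      rw [hdq, ← mul_assoc]
      field_simp
    rw [h2, mul_comm (logNorm A)]
    exact mul_le_mul_of_nonneg_left key (by positivity)

variable {n : ℕ}

lemma l2_opNorm_le_of {a b : ℕ} (M : Matrix (Fin a) (Fin b) ℝ) {c : ℝ} (hc : 0 ≤ c)
    (h : ∀ v : EuclideanSpace ℝ (Fin b),
      ‖(WithLp.equiv 2 (Fin a → ℝ)).symm (M *ᵥ (WithLp.equiv 2 (Fin b → ℝ) v))‖ ≤ c * ‖v‖) :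
    ‖M‖ ≤ c := by
  rw [Matrix.l2_opNorm_def]
  exact ContinuousLinearMap.opNorm_le_bound _ hc (fun v => h v)

/-- `M ↦ M *ᵥ v` as a CLM into Euclidean space. -/
def mulVecCLM {a b : ℕ} (v : Fin b → ℝ) :
    Matrix (Fin a) (Fin b) ℝ →L[ℝ] EuclideanSpace ℝ (Fin a) :=
  LinearMap.toContinuousLinearMap
  { toFun := fun M => (WithLp.equiv 2 (Fin a → ℝ)).symm (M *ᵥ v)
    map_add' := by intro M N; simp [Matrix.add_mulVec]
    map_smul' := by intro c M; simp [Matrix.smul_mulVec] }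

lemma mulVecCLM_apply {a b : ℕ} (v : Fin b → ℝ) (M : Matrix (Fin a) (Fin b) ℝ) :
    mulVecCLM v M = (WithLp.equiv 2 (Fin a → ℝ)).symm (M *ᵥ v) := rfl

lemma vec_exp_bound (A : Matrix (Fin n) (Fin n) ℝ) (v : EuclideanSpace ℝ (Fin n)) {s : ℝ}
    (hs : 0 ≤ s) :
    ‖(WithLp.equiv 2 (Fin n → ℝ)).symm
        ((NormedSpace.exp (s • A)) *ᵥ (WithLp.equiv 2 (Fin n → ℝ) v))‖ ≤
      Real.exp (s * logNorm A) * ‖v‖ := by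
  classical
  set w : Fin n → ℝ := WithLp.equiv 2 (Fin n → ℝ) v with hw
  set u : ℝ → EuclideanSpace ℝ (Fin n) :=
    fun t => (WithLp.equiv 2 (Fin n → ℝ)).symm ((NormedSpace.exp (t • A)) *ᵥ w) with hu
  have hud : ∀ t : ℝ, HasDerivAt u
      ((WithLp.equiv 2 (Fin n → ℝ)).symm (A *ᵥ ((NormedSpace.exp (t • A)) *ᵥ w))) t := by
    intro t
    have h1 : HasDerivAt (fun r : ℝ => NormedSpace.exp (r • A))
        (A * NormedSpace.exp (t • A)) t := hasDerivAt_exp_smul_const' A t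
    have h2 := ((mulVecCLM (a := n) w).hasFDerivAt).comp_hasDerivAt t h1
    have h3 : HasDerivAt u (mulVecCLM w (A * NormedSpace.exp (t • A))) t := h2
    simpa [mulVecCLM_apply, Matrix.mulVec_mulVec] using h3
  set g : ℝ → ℝ := fun t => ⟪u t, u t⟫ with hg
  have hgd : ∀ t : ℝ, HasDerivAt g
      (2 * dotProduct ((u t : Fin n → ℝ)) (A *ᵥ (u t : Fin n → ℝ))) t := by
    intro t
    have := (hud t).inner ℝ (hud t)
    have hinner : ⟪u t, (WithLp.equiv 2 (Fin n → ℝ)).symm (A *ᵥ ((NormedSpace.exp (t • A)) *ᵥ w))⟫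
        = dotProduct ((u t : Fin n → ℝ)) (A *ᵥ (u t : Fin n → ℝ)) := by
      rw [EuclideanSpace.inner_eq_star_dotProduct, dotProduct_comm]; rfl
    have hinner2 : ⟪(WithLp.equiv 2 (Fin n → ℝ)).symm (A *ᵥ ((NormedSpace.exp (t • A)) *ᵥ w)), u t⟫
        = dotProduct ((u t : Fin n → ℝ)) (A *ᵥ (u t : Fin n → ℝ)) := by
      rw [real_inner_comm]; exact hinner
    rw [hinner2, hinner] at this
    rw [two_mul]
    exact this
  -- h t := g t * exp (-(2 * logNorm A) * t) is antitone on [0, s]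
  set μ := logNorm A with hmu
  set h : ℝ → ℝ := fun t => g t * Real.exp (-(2 * μ) * t) with hh
  have hhd : ∀ t : ℝ, HasDerivAt h
      ((2 * dotProduct ((u t : Fin n → ℝ)) (A *ᵥ (u t : Fin n → ℝ))) *
          Real.exp (-(2 * μ) * t)
        + g t * (Real.exp (-(2 * μ) * t) * (-(2 * μ)))) t := by
    intro t
    have hlin : HasDerivAt (fun t : ℝ => -(2 * μ) * t) (-(2 * μ)) t := by
      simpa using (hasDerivAt_id t).const_mul (-(2 * μ))
    have he : HasDerivAt (fun t : ℝ => Real.exp (-(2 * μ) * t))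
        (Real.exp (-(2 * μ) * t) * (-(2 * μ))) t := hlin.exp
    exact (hgd t).mul he
  have hmono : AntitoneOn h (Set.Icc 0 s) := by
    apply antitoneOn_of_deriv_nonpos (convex_Icc 0 s)
    · exact fun t _ => ((hhd t).continuousAt).continuousWithinAt
    · exact fun t _ => ((hhd t).differentiableAt).differentiableWithinAt
    · intro t _
      rw [(hhd t).deriv]
      have hq : dotProduct ((u t : Fin n → ℝ)) (A *ᵥ (u t : Fin n → ℝ)) ≤ μ * ‖u t‖ ^ 2 :=
        quad_le_logNorm A (u t)
      have hgt : g t = ‖u t‖ ^ 2 := real_inner_self_eq_norm_sq (u t)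
      have hexp : (0:ℝ) < Real.exp (-(2 * μ) * t) := Real.exp_pos _
      rw [hgt]
      nlinarith [mul_le_mul_of_nonneg_right hq hexp.le]
  have h0 : h s ≤ h 0 := hmono (Set.left_mem_Icc.2 hs) (Set.right_mem_Icc.2 hs) hs
  have hg0 : g 0 = ‖v‖ ^ 2 := by
    have : u 0 = v := by
      rw [hu, hw]
      simp [NormedSpace.exp_zero]
    rw [hg]
    show ⟪u 0, u 0⟫ = ‖v‖ ^ 2
    rw [this]
    exact real_inner_self_eq_norm_sq v
  have hgs : g s = ‖u s‖ ^ 2 := real_inner_self_eq_norm_sq (u s)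
  have key : ‖u s‖ ^ 2 ≤ (Real.exp (s * μ) * ‖v‖) ^ 2 := by
    have h1 : g s * Real.exp (-(2 * μ) * s) ≤ g 0 := by
      have h1' : g s * Real.exp (-(2 * μ) * s) ≤ g 0 * Real.exp (-(2 * μ) * 0) := h0
      simpa using h1'
    have h2 : g s ≤ g 0 * Real.exp (2 * μ * s) := by
      have hepos : (0:ℝ) < Real.exp (-(2 * μ) * s) := Real.exp_pos _
      rw [← mul_le_mul_iff_of_pos_right hepos]
      calc g s * Real.exp (-(2*μ)*s) ≤ g 0 := h1
        _ = g 0 * Real.exp (2*μ*s) * Real.exp (-(2*μ)*s) := by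
            rw [mul_assoc, ← Real.exp_add]; ring_nf; simp
    rw [hgs, hg0] at h2
    calc ‖u s‖ ^ 2 ≤ ‖v‖^2 * Real.exp (2 * μ * s) := h2
      _ = (Real.exp (s * μ) * ‖v‖) ^ 2 := by
          rw [mul_pow, ← Real.exp_nat_mul]; ring_nf
  have hfin : ‖u s‖ ≤ Real.exp (s * μ) * ‖v‖ := by
    have hrhs : 0 ≤ Real.exp (s * μ) * ‖v‖ := by positivity
    nlinarith [norm_nonneg (u s)]
  exact hfin

lemma norm_exp_le (A : Matrix (Fin n) (Fin n) ℝ) {s : ℝ} (hs : 0 ≤ s) :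
    ‖NormedSpace.exp (s • A)‖ ≤ Real.exp (s * logNorm A) :=
  l2_opNorm_le_of _ (Real.exp_nonneg _) (fun v => vec_exp_bound A v hs)


lemma isBBM_matmul {a b c : ℕ} : IsBoundedBilinearMap ℝ
    (fun p : (Matrix (Fin a) (Fin b) ℝ) × (Matrix (Fin b) (Fin c) ℝ) => p.1 * p.2) where
  add_left := fun m n p => Matrix.add_mul m n p
  smul_left := fun r m p => Matrix.smul_mul r m p
  add_right := fun m p q => Matrix.mul_add m p q
  smul_right := fun r m p => Matrix.mul_smul m r p
  bound := ⟨1, one_pos, fun x y => by simpa using Matrix.l2_opNorm_mul x y⟩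

lemma HasDerivAt.matmul {a b c : ℕ} {f : ℝ → Matrix (Fin a) (Fin b) ℝ}
    {g : ℝ → Matrix (Fin b) (Fin c) ℝ} {f' g'} {t : ℝ}
    (hf : HasDerivAt f f' t) (hg : HasDerivAt g g' t) :
    HasDerivAt (fun t => f t * g t) (f t * g' + f' * g t) t := by
  have h := (isBBM_matmul.hasFDerivAt (f t, g t)).comp_hasDerivAt t (hf.prodMk hg)
  have h2 : HasDerivAt (fun t => f t * g t) _ t := h
  simpa [IsBoundedBilinearMap.deriv_apply] using h2

lemma exp_smul_add {a : ℕ} (A : Matrix (Fin a) (Fin a) ℝ) (x y : ℝ) :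
    NormedSpace.exp (x • A) * NormedSpace.exp (y • A) = NormedSpace.exp ((x + y) • A) := by
  rw [add_smul, NormedSpace.exp_add_of_commute (((Commute.refl A).smul_left x).smul_right y)]

lemma exp_neg_smul_cancel {a : ℕ} (A : Matrix (Fin a) (Fin a) ℝ) (x : ℝ) :
    NormedSpace.exp (x • A) * NormedSpace.exp (x • (-A)) = 1 := by
  have : x • (-A) = (-x) • A := by rw [smul_neg, neg_smul]
  rw [this, exp_smul_add]
  simp [NormedSpace.exp_zero]

lemma exp_smul_mul_exp_smul_neg  {a : ℕ} (A : Matrix (Fin a) (Fin a) ℝ) (t s : ℝ) :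
    NormedSpace.exp (t • A) * NormedSpace.exp (s • (-A)) =
      NormedSpace.exp ((t - s) • A) := by
  have : s • (-A) = (-s) • A := by rw [smul_neg, neg_smul]
  rw [this, exp_smul_add, ← sub_eq_add_neg]

lemma exp_smul_neg_mul_exp_smul {a : ℕ} (A : Matrix (Fin a) (Fin a) ℝ) (s t : ℝ) :
    NormedSpace.exp (s • (-A)) * NormedSpace.exp (t • A) =
      NormedSpace.exp ((t - s) • A) := by
  have : s • (-A) = (-s) • A := by rw [smul_neg, neg_smul]
  rw [this, exp_smul_add, neg_add_eq_sub]

lemma continuous_exp_smul {a : ℕ} (A : Matrix (Fin a) (Fin a) ℝ) :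
    Continuous (fun s : ℝ => NormedSpace.exp (s • A)) :=
  NormedSpace.exp_continuous.comp (continuous_id.smul continuous_const)

/-- conjugation `M ↦ P * M * Q` as a CLM. -/
def conjCLM {a b a' b' : ℕ} (P : Matrix (Fin a') (Fin a) ℝ) (Q : Matrix (Fin b) (Fin b') ℝ) :
    Matrix (Fin a) (Fin b) ℝ →L[ℝ] Matrix (Fin a') (Fin b') ℝ :=
  LinearMap.toContinuousLinearMap
  { toFun := fun M => P * M * Q
    map_add' := by intro M N; simp [Matrix.mul_add, Matrix.add_mul]
    map_smul' := by intro c M; simp [mul_smul_comm, smul_mul_assoc] }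

lemma conjCLM_apply {a b a' b' : ℕ} (P : Matrix (Fin a') (Fin a) ℝ) (Q : Matrix (Fin b) (Fin b') ℝ)
    (M : Matrix (Fin a) (Fin b) ℝ) : conjCLM P Q M = P * M * Q := rfl

/-- Variation of constants for the matrix ODE `F' = Aₗ F + F Aᵣ + G`. -/
lemma voc {a b : ℕ} {T : ℝ} (Aₗ : Matrix (Fin a) (Fin a) ℝ) (Aᵣ : Matrix (Fin b) (Fin b) ℝ)
    {F G : ℝ → Matrix (Fin a) (Fin b) ℝ} (hG : Continuous G)
    (hF : ∀ s ∈ Set.Icc (0:ℝ) T, HasDerivAt F (Aₗ * F s + F s * Aᵣ + G s) s)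
    {t : ℝ} (ht : t ∈ Set.Icc (0:ℝ) T) :
    F t = NormedSpace.exp (t • Aₗ) * F 0 * NormedSpace.exp (t • Aᵣ) +
      ∫ s in (0:ℝ)..t,
        NormedSpace.exp ((t - s) • Aₗ) * G s * NormedSpace.exp ((t - s) • Aᵣ) := by
  obtain ⟨ht0, htT⟩ := ht
  set EL : ℝ → Matrix (Fin a) (Fin a) ℝ := fun s => NormedSpace.exp (s • Aₗ) with hEL
  set ER : ℝ → Matrix (Fin b) (Fin b) ℝ := fun s => NormedSpace.exp (s • Aᵣ) with hER
  set ELm : ℝ → Matrix (Fin a) (Fin a) ℝ := fun s => NormedSpace.exp (s • (-Aₗ)) with hELm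
  set ERm : ℝ → Matrix (Fin b) (Fin b) ℝ := fun s => NormedSpace.exp (s • (-Aᵣ)) with hERm
  have hΦd : ∀ s ∈ Set.uIcc (0:ℝ) t,
      HasDerivAt (fun s => ELm s * F s * ERm s) (ELm s * G s * ERm s) s := by
    intro s hs
    have hs' : s ∈ Set.Icc (0:ℝ) T := by
      rw [Set.uIcc_of_le ht0] at hs
      exact ⟨hs.1, le_trans hs.2 htT⟩
    have hL : HasDerivAt ELm (ELm s * (-Aₗ)) s := hasDerivAt_exp_smul_const (-Aₗ) s
    have hR : HasDerivAt ERm ((-Aᵣ) * ERm s) s := hasDerivAt_exp_smul_const' (-Aᵣ) s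
    have h1 : HasDerivAt (fun s => ELm s * F s)
        (ELm s * (Aₗ * F s + F s * Aᵣ + G s) + (ELm s * (-Aₗ)) * F s) s :=
      HasDerivAt.matmul hL (hF s hs')
    have h2 := HasDerivAt.matmul h1 hR
    convert h2 using 1
    have hcomm : ELm s * Aₗ = Aₗ * ELm s := by
      have : Commute (-Aₗ) (NormedSpace.exp (s • (-Aₗ))) :=
        (Commute.refl (-Aₗ)).smul_right s |>.exp_right
      have h' := this.symm
      calc ELm s * Aₗ = -(ELm s * (-Aₗ)) := by simp [mul_neg]
        _ = -((-Aₗ) * ELm s) := by rw [h']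
        _ = Aₗ * ELm s := by simp [neg_mul]
    simp only [Matrix.mul_add, Matrix.add_mul, Matrix.mul_neg, Matrix.neg_mul,
      Matrix.mul_assoc]
    rw [show ELm s * (Aₗ * (F s * ERm s)) = Aₗ * (ELm s * (F s * ERm s)) by
      rw [← Matrix.mul_assoc, hcomm, Matrix.mul_assoc]]
    abel
  have hint : IntervalIntegrable (fun s => ELm s * G s * ERm s) volume 0 t :=
    (((continuous_exp_smul (-Aₗ)).matrix_mul hG).matrix_mul
      (continuous_exp_smul (-Aᵣ))).intervalIntegrable 0 t
  have hftc := intervalIntegral.integral_eq_sub_of_hasDerivAt hΦd hint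
  have hΦ0 : ELm 0 * F 0 * ERm 0 = F 0 := by
    simp [hELm, hERm, NormedSpace.exp_zero]
  rw [hΦ0] at hftc
  -- express F t
  have hFt : F t = EL t * (ELm t * F t * ERm t) * ER t := by
    rw [hEL, hER, hELm, hERm]
    calc F t = (NormedSpace.exp (t • Aₗ) * NormedSpace.exp (t • (-Aₗ))) * F t *
        (NormedSpace.exp (t • (-Aᵣ)) * NormedSpace.exp (t • Aᵣ)) := by
          rw [exp_neg_smul_cancel]
          have : NormedSpace.exp (t • (-Aᵣ)) * NormedSpace.exp (t • Aᵣ) = 1 := by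
            rw [exp_smul_neg_mul_exp_smul]
            simp [NormedSpace.exp_zero]
          rw [this]
          simp
      _ = _ := by simp only [Matrix.mul_assoc]
  have hmid : ELm t * F t * ERm t = F 0 + ∫ s in (0:ℝ)..t, ELm s * G s * ERm s := by
    rw [hftc]; abel
  rw [hFt, hmid]
  have hsplit : EL t * (F 0 + (∫ s in (0:ℝ)..t, ELm s * G s * ERm s)) * ER t
      = EL t * F 0 * ER t + EL t * (∫ s in (0:ℝ)..t, ELm s * G s * ERm s) * ER t := by
    rw [Matrix.mul_add, Matrix.add_mul]
  rw [hsplit]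
  congr 1
  · have hpull : EL t * (∫ s in (0:ℝ)..t, ELm s * G s * ERm s) * ER t
        = ∫ s in (0:ℝ)..t, EL t * (ELm s * G s * ERm s) * ER t := by
      have := (conjCLM (EL t) (ER t)).intervalIntegral_comp_comm hint
      simpa [conjCLM_apply] using this.symm
    rw [hpull]
    apply intervalIntegral.integral_congr
    intro s _
    rw [hEL, hER, hELm, hERm]
    show NormedSpace.exp (t • Aₗ) * (NormedSpace.exp (s • (-Aₗ)) * G s *
        NormedSpace.exp (s • (-Aᵣ))) * NormedSpace.exp (t • Aᵣ) = _
    rw [show NormedSpace.exp (t • Aₗ) * (NormedSpace.exp (s • (-Aₗ)) * G s *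
        NormedSpace.exp (s • (-Aᵣ))) * NormedSpace.exp (t • Aᵣ)
      = (NormedSpace.exp (t • Aₗ) * NormedSpace.exp (s • (-Aₗ))) * G s *
        (NormedSpace.exp (s • (-Aᵣ)) * NormedSpace.exp (t • Aᵣ)) by
        simp only [Matrix.mul_assoc]]
    rw [exp_smul_mul_exp_smul_neg, exp_smul_neg_mul_exp_smul]


lemma taylor_remainder_bound {a : ℕ} (A : Matrix (Fin a) (Fin a) ℝ) (K : ℕ) {t : ℝ}
    (ht : 0 ≤ t) {M : ℝ}
    (hM : ∀ s ∈ Set.Icc (0:ℝ) t, ‖NormedSpace.exp (s • A)‖ ≤ M) :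
    ‖NormedSpace.exp (t • A)
        - ∑ i ∈ Finset.range (K + 1), (t ^ i / (i.factorial : ℝ)) • A ^ i‖
      ≤ M * ‖A‖ ^ (K + 1) * (t ^ (K + 1) / ((K + 1).factorial : ℝ)) := by
  have hM0 : 0 ≤ M := le_trans (norm_nonneg _) (hM 0 ⟨le_refl _, ht⟩)
  set P : ℝ → Matrix (Fin a) (Fin a) ℝ :=
    fun s => ∑ i ∈ Finset.range (K + 1), (s ^ i / (i.factorial : ℝ)) • A ^ i with hP
  set F : ℝ → Matrix (Fin a) (Fin a) ℝ := fun s => NormedSpace.exp (s • A) - P s with hF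
  set G : ℝ → Matrix (Fin a) (Fin a) ℝ :=
    fun s => (s ^ K / (K.factorial : ℝ)) • A ^ (K + 1) with hG
  have hGc : Continuous G := ((continuous_pow K).div_const _).smul continuous_const
  have hFd : ∀ s ∈ Set.Icc (0:ℝ) t,
      HasDerivAt F (A * F s + F s * (0 : Matrix (Fin a) (Fin a) ℝ) + G s) s := by
    intro s _
    have hPd : HasDerivAt P (∑ i ∈ Finset.range (K + 1),
        ((i : ℝ) * s ^ (i - 1) / (i.factorial : ℝ)) • A ^ i) s := by
      apply HasDerivAt.fun_sum
      intro i _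
      exact ((hasDerivAt_pow i s).div_const _).smul_const (A ^ i)
    have hEd : HasDerivAt (fun s => NormedSpace.exp (s • A))
        (A * NormedSpace.exp (s • A)) s := hasDerivAt_exp_smul_const' A s
    have hcombo := hEd.sub hPd
    have hkey : A * NormedSpace.exp (s • A) - ∑ i ∈ Finset.range (K + 1),
        ((i : ℝ) * s ^ (i - 1) / (i.factorial : ℝ)) • A ^ i
        = A * F s + F s * (0 : Matrix (Fin a) (Fin a) ℝ) + G s := by
      rw [Matrix.mul_zero, add_zero, hF, hP, hG]
      have hsum : ∑ i ∈ Finset.range (K + 1),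
          ((i : ℝ) * s ^ (i - 1) / (i.factorial : ℝ)) • A ^ i
          = ∑ j ∈ Finset.range K, (s ^ j / (j.factorial : ℝ)) • A ^ (j + 1) := by
        rw [Finset.sum_range_succ']
        simp only [Nat.cast_zero, zero_mul, zero_div, zero_smul, add_zero]
        apply Finset.sum_congr rfl
        intro j _
        congr 1
        rw [Nat.factorial_succ]
        push_cast
        have hj : (0:ℝ) < (j.factorial : ℝ) := by positivity
        field_simp
      have hmul : A * (∑ i ∈ Finset.range (K + 1), (s ^ i / (i.factorial : ℝ)) • A ^ i)
          = ∑ i ∈ Finset.range (K + 1), (s ^ i / (i.factorial : ℝ)) • A ^ (i + 1) := by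
        rw [Finset.mul_sum]
        apply Finset.sum_congr rfl
        intro i _
        rw [mul_smul_comm, ← pow_succ']
      rw [Matrix.mul_sub, hsum, hmul, Finset.sum_range_succ]
      abel
    rw [← hkey]
    exact hcombo
  have hvoc := voc (T := t) A (0 : Matrix (Fin a) (Fin a) ℝ) hGc hFd
    (Set.mem_Icc.mpr ⟨ht, le_refl _⟩)
  have hF0 : F 0 = 0 := by
    simp only [hF, hP]
    have : ∑ i ∈ Finset.range (K + 1), ((0:ℝ) ^ i / (i.factorial : ℝ)) • A ^ i
        = (1 : Matrix (Fin a) (Fin a) ℝ) := by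
      rw [Finset.sum_eq_single 0]
      · simp
      · intro i _ hi
        rw [zero_pow hi]
        simp
      · simp
    rw [this]
    simp [NormedSpace.exp_zero]
  rw [hF0] at hvoc
  have hzero : NormedSpace.exp (t • (0 : Matrix (Fin a) (Fin a) ℝ)) = 1 := by
    simp [NormedSpace.exp_zero]
  have hsimp : F t = ∫ s in (0:ℝ)..t,
      NormedSpace.exp ((t - s) • A) * G s := by
    rw [hvoc]
    simp only [Matrix.mul_zero, Matrix.zero_mul, smul_zero, NormedSpace.exp_zero,
      Matrix.mul_one, zero_add]
  have hbound : ‖F t‖ ≤ M * ‖A‖ ^ (K + 1) * (t ^ (K + 1) / ((K + 1).factorial : ℝ)) := by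
    rw [hsimp]
    have hcont : Continuous fun s => NormedSpace.exp ((t - s) • A) * G s :=
      ((NormedSpace.exp_continuous.comp
        ((continuous_const.sub continuous_id).smul continuous_const)).matrix_mul hGc)
    calc ‖∫ s in (0:ℝ)..t, NormedSpace.exp ((t - s) • A) * G s‖
        ≤ ∫ s in (0:ℝ)..t, ‖NormedSpace.exp ((t - s) • A) * G s‖ :=
          intervalIntegral.norm_integral_le_integral_norm ht
      _ ≤ ∫ s in (0:ℝ)..t, (s ^ K / (K.factorial : ℝ)) * (M * ‖A‖ ^ (K + 1)) := by
          apply intervalIntegral.integral_mono_on ht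
          · exact hcont.norm.intervalIntegrable 0 t
          · exact (((continuous_pow K).div_const _).mul continuous_const).intervalIntegrable 0 t
          · intro s hs
            have hsk : (0:ℝ) ≤ s ^ K / (K.factorial : ℝ) :=
              div_nonneg (pow_nonneg hs.1 K) (by positivity)
            calc ‖NormedSpace.exp ((t - s) • A) * G s‖
                ≤ ‖NormedSpace.exp ((t - s) • A)‖ * ‖G s‖ := Matrix.l2_opNorm_mul _ _
              _ ≤ M * ((s ^ K / (K.factorial : ℝ)) * ‖A‖ ^ (K + 1)) := by
                  apply mul_le_mul
                  · exact hM _ ⟨by linarith [hs.1, hs.2], by linarith [hs.1, hs.2]⟩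
                  · rw [hG]
                    calc ‖(s ^ K / (K.factorial : ℝ)) • A ^ (K + 1)‖
                        = |s ^ K / (K.factorial : ℝ)| * ‖A ^ (K + 1)‖ := by
                          rw [norm_smul]; rfl
                      _ ≤ (s ^ K / (K.factorial : ℝ)) * ‖A‖ ^ (K + 1) := by
                          rw [abs_of_nonneg hsk]
                          exact mul_le_mul_of_nonneg_left (norm_pow_le' _ (Nat.succ_pos K)) hsk
                  · exact norm_nonneg _
                  · exact hM0
              _ = (s ^ K / (K.factorial : ℝ)) * (M * ‖A‖ ^ (K + 1)) := by ring
      _ = M * ‖A‖ ^ (K + 1) * (t ^ (K + 1) / ((K + 1).factorial : ℝ)) := by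
          rw [intervalIntegral.integral_mul_const, intervalIntegral.integral_div,
            integral_pow]
          rw [Nat.factorial_succ]
          have h1 : (0:ℝ) < (K.factorial : ℝ) := by positivity
          push_cast
          field_simp
          ring
  exact hbound


variable {n m : ℕ}

lemma proj_fix_vec {V : Matrix (Fin n) (Fin m) ℝ} (hV : Vᵀ * V = 1)
    {w : Fin n → ℝ} (hw : w ∈ colSpace V) : (V * Vᵀ) *ᵥ w = w := by
  have hVVV : V * Vᵀ * V = V := by rw [Matrix.mul_assoc, hV, Matrix.mul_one]
  induction hw using Submodule.span_induction with
  | mem w hw =>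
      obtain ⟨j, rfl⟩ := hw
      have hcol : (Vᵀ : Matrix (Fin m) (Fin n) ℝ) j = V *ᵥ Pi.single j 1 := by
        funext i
        rw [Matrix.mulVec_single]
        simp [Matrix.transpose_apply]
      rw [hcol, Matrix.mulVec_mulVec, hVVV]
  | zero => exact Matrix.mulVec_zero _
  | add x y _ _ hx hy => rw [Matrix.mulVec_add, hx, hy]
  | smul c x _ hx => rw [Matrix.mulVec_smul, hx]

lemma proj_fix_mat {r : ℕ} {V : Matrix (Fin n) (Fin m) ℝ} (hV : Vᵀ * V = 1)
    {M : Matrix (Fin n) (Fin r) ℝ} (hM : ∀ j, (Mᵀ) j ∈ colSpace V) :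
    V * Vᵀ * M = M := by
  ext i j
  have := congrFun (proj_fix_vec hV (hM j)) i
  simpa [Matrix.mulVec, Matrix.mul_apply, dotProduct, Matrix.transpose_apply] using this

lemma col_mem_K {p q : ℕ} (A : Matrix (Fin n) (Fin n) ℝ) (Z : Matrix (Fin n) (Fin p) ℝ)
    (C : Matrix (Fin n) (Fin q) ℝ) {k i : ℕ} (hik : i < k) :
    (∀ j, ((A ^ i * Z)ᵀ) j ∈ blockKrylov A (Matrix.fromCols Z C) k) ∧
    (∀ j, ((A ^ i * C)ᵀ) j ∈ blockKrylov A (Matrix.fromCols Z C) k) := by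
  constructor
  · intro j
    apply Submodule.subset_span
    refine ⟨i, hik, Sum.inl j, ?_⟩
    rw [Matrix.mul_fromCols]
    funext l
    simp [Matrix.transpose_apply, Matrix.fromCols_apply_inl]
  · intro j
    apply Submodule.subset_span
    refine ⟨i, hik, Sum.inr j, ?_⟩
    rw [Matrix.mul_fromCols]
    funext l
    simp [Matrix.transpose_apply, Matrix.fromCols_apply_inr]

lemma exact_pow {r : ℕ} {V : Matrix (Fin n) (Fin m) ℝ} (hV : Vᵀ * V = 1)
    (A : Matrix (Fin n) (Fin n) ℝ) {W : Matrix (Fin n) (Fin r) ℝ} {k : ℕ}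
    (hfix : ∀ i < k, V * Vᵀ * (A ^ i * W) = A ^ i * W) :
    ∀ i < k, V * ((Vᵀ * A * V) ^ i * (Vᵀ * W)) = A ^ i * W := by
  have haux : ∀ i, i < k → (Vᵀ * A * V) ^ i * (Vᵀ * W) = Vᵀ * (A ^ i * W) := by
    intro i
    induction i with
    | zero => intro _; simp
    | succ i ih =>
        intro hik
        have hik' : i < k := Nat.lt_of_succ_lt hik
        rw [pow_succ', Matrix.mul_assoc, ih hik']
        have : Vᵀ * A * V * (Vᵀ * (A ^ i * W)) = Vᵀ * A * (V * Vᵀ * (A ^ i * W)) := by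
          simp only [Matrix.mul_assoc]
        rw [this, hfix i hik']
        rw [show Vᵀ * A * (A ^ i * W) = Vᵀ * (A * A ^ i * W) by simp only [Matrix.mul_assoc]]
        rw [← pow_succ']
  intro i hik
  rw [haux i hik, ← Matrix.mul_assoc, hfix i hik]

lemma exact_taylor {r : ℕ} {V : Matrix (Fin n) (Fin m) ℝ} (hV : Vᵀ * V = 1)
    (A : Matrix (Fin n) (Fin n) ℝ) {W : Matrix (Fin n) (Fin r) ℝ} {k : ℕ}
    (hfix : ∀ i < k, V * Vᵀ * (A ^ i * W) = A ^ i * W) (t : ℝ) :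
    V * (∑ i ∈ Finset.range k, (t ^ i / (i.factorial : ℝ)) • (Vᵀ * A * V) ^ i) * (Vᵀ * W)
      = ∑ i ∈ Finset.range k, (t ^ i / (i.factorial : ℝ)) • (A ^ i * W) := by
  rw [Matrix.mul_sum, Matrix.sum_mul]
  apply Finset.sum_congr rfl
  intro i hi
  rw [Matrix.mul_smul, Matrix.smul_mul]
  congr 1
  rw [Matrix.mul_assoc]
  exact exact_pow hV A hfix i (Finset.mem_range.mp hi)

-- norm lemmas
lemma norm_transpose {a b : ℕ} (M : Matrix (Fin a) (Fin b) ℝ) : ‖Mᵀ‖ = ‖M‖ := by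
  rw [← Matrix.conjTranspose_eq_transpose_of_trivial, Matrix.l2_opNorm_conjTranspose]

lemma norm_mul_transpose_self {a b : ℕ} (W : Matrix (Fin a) (Fin b) ℝ) :
    ‖W * Wᵀ‖ = ‖W‖ ^ 2 := by
  have := Matrix.l2_opNorm_conjTranspose_mul_self (Wᵀ)
  rw [Matrix.conjTranspose_eq_transpose_of_trivial, Matrix.transpose_transpose] at this
  rw [this, norm_transpose, sq]

lemma norm_V_le_one {V : Matrix (Fin n) (Fin m) ℝ} (hV : Vᵀ * V = 1) : ‖V‖ ≤ 1 := by
  have h := norm_mul_transpose_self Vᵀ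
  rw [Matrix.transpose_transpose, hV] at h
  have h1 : ‖(1 : Matrix (Fin m) (Fin m) ℝ)‖ ≤ 1 := by
    rw [Matrix.l2_opNorm_def]
    apply ContinuousLinearMap.opNorm_le_bound _ zero_le_one
    intro x
    rw [one_mul]
    apply le_of_eq
    congr 1
    show (WithLp.equiv 2 (Fin m → ℝ)).symm ((1 : Matrix (Fin m) (Fin m) ℝ) *ᵥ
      (WithLp.equiv 2 (Fin m → ℝ)) x) = x
    rw [Matrix.one_mulVec]
    rfl
  nlinarith [norm_nonneg Vᵀ, norm_nonneg V, norm_transpose V]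

lemma norm_Vt_le_one {V : Matrix (Fin n) (Fin m) ℝ} (hV : Vᵀ * V = 1) : ‖Vᵀ‖ ≤ 1 := by
  rw [norm_transpose]; exact norm_V_le_one hV

variable {n m : ℕ}

lemma logNorm_conj_le (A : Matrix (Fin n) (Fin n) ℝ) {V : Matrix (Fin n) (Fin m) ℝ}
    (hV : Vᵀ * V = 1) (hm : 0 < m) : logNorm (Vᵀ * A * V) ≤ logNorm A := by
  set H := Vᵀ * A * V with hH
  set Vc := V.map Complex.ofReal with hVc
  have hVcH : Vcᴴ = Vᵀ.map Complex.ofReal := by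
    ext i j
    simp [hVc, Matrix.conjTranspose_apply, Matrix.map_apply, Complex.conj_ofReal]
  have hmapmul : ∀ {a b c : ℕ} (M : Matrix (Fin a) (Fin b) ℝ) (N : Matrix (Fin b) (Fin c) ℝ),
      (M * N).map Complex.ofReal = M.map Complex.ofReal * N.map Complex.ofReal := by
    intro a b c M N
    ext i j
    simp only [Matrix.map_apply, Matrix.mul_apply]
    push_cast
    rfl
  have hVcV : Vcᴴ * Vc = 1 := by
    rw [hVcH, hVc, ← hmapmul, hV]
    ext i j
    by_cases hij : i = j <;> simp [Matrix.map_apply, Matrix.one_apply, hij]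
  apply csSup_le
  · -- nonempty
    refine ⟨(dotProduct (star ((EuclideanSpace.single (⟨0, hm⟩ : Fin m) (1:ℂ)) :
      Fin m → ℂ)) ((H.map Complex.ofReal).mulVec _)).re,
      EuclideanSpace.single (⟨0, hm⟩ : Fin m) (1:ℂ), ?_, rfl⟩
    rw [EuclideanSpace.norm_single]
    norm_num
  · rintro r ⟨x, hx, rfl⟩
    apply le_csSup (fov_bddAbove A)
    set xw : Fin m → ℂ := (WithLp.equiv 2 (Fin m → ℂ)) x with hxw
    refine ⟨(WithLp.equiv 2 (Fin n → ℂ)).symm (Vc *ᵥ xw), ?_, ?_⟩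
    · -- norm 1
      have hinner : (inner (𝕜 := ℂ) ((WithLp.equiv 2 (Fin n → ℂ)).symm (Vc *ᵥ xw))
          ((WithLp.equiv 2 (Fin n → ℂ)).symm (Vc *ᵥ xw))) = inner (𝕜 := ℂ) x x := by
        rw [EuclideanSpace.inner_eq_star_dotProduct, dotProduct_comm]
        change star (Vc *ᵥ xw) ⬝ᵥ (Vc *ᵥ xw) = inner (𝕜 := ℂ) x x
        rw [Matrix.star_mulVec, dotProduct_mulVec, Matrix.vecMul_vecMul, hVcV,
          Matrix.vecMul_one]
        rw [EuclideanSpace.inner_eq_star_dotProduct, dotProduct_comm]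
        rfl
      have h1 : (‖(WithLp.equiv 2 (Fin n → ℂ)).symm (Vc *ᵥ xw)‖ : ℝ) ^ 2 = ‖x‖ ^ 2 := by
        rw [← inner_self_eq_norm_sq (𝕜 := ℂ), ← inner_self_eq_norm_sq (𝕜 := ℂ), hinner]
      have h2 : ‖(WithLp.equiv 2 (Fin n → ℂ)).symm (Vc *ᵥ xw)‖ = ‖x‖ := by
        have := congrArg Real.sqrt h1
        rwa [Real.sqrt_sq (norm_nonneg _), Real.sqrt_sq (norm_nonneg _)] at this
      rw [h2, hx]
    · -- value equality
      congr 1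
      show dotProduct (star xw) ((H.map Complex.ofReal) *ᵥ xw)
        = dotProduct (star (Vc *ᵥ xw)) ((A.map Complex.ofReal) *ᵥ (Vc *ᵥ xw))
      have hmap : (H.map Complex.ofReal) = Vcᴴ * (A.map Complex.ofReal) * Vc := by
        rw [hH, hVcH, hVc, hmapmul, hmapmul]
      have hLHS : star xw ⬝ᵥ (H.map Complex.ofReal *ᵥ xw)
          = star xw ᵥ* (Vcᴴ * (A.map Complex.ofReal) * Vc) ⬝ᵥ xw := by
        rw [dotProduct_mulVec, hmap]
      have hRHS : star (Vc *ᵥ xw) ⬝ᵥ ((A.map Complex.ofReal) *ᵥ (Vc *ᵥ xw))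
          = star xw ᵥ* (Vcᴴ * (A.map Complex.ofReal) * Vc) ⬝ᵥ xw := by
        rw [Matrix.star_mulVec, dotProduct_mulVec, dotProduct_mulVec,
          Matrix.vecMul_vecMul, Matrix.vecMul_vecMul, Matrix.mul_assoc]
      rw [hLHS, hRHS]
  

lemma exp_smul_transpose {a : ℕ} (A : Matrix (Fin a) (Fin a) ℝ) (s : ℝ) :
    NormedSpace.exp (s • Aᵀ) = (NormedSpace.exp (s • A))ᵀ := by
  rw [← Matrix.transpose_smul, Matrix.exp_transpose]

lemma term_bound {n m p : ℕ} (A : Matrix (Fin n) (Fin n) ℝ) {V : Matrix (Fin n) (Fin m) ℝ}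
    (hV : Vᵀ * V = 1) (hm : 0 < m) {k : ℕ} (hk : 1 ≤ k) (W : Matrix (Fin n) (Fin p) ℝ)
    (hfix : ∀ i < k, V * Vᵀ * (A ^ i * W) = A ^ i * W) {s t : ℝ} (hs : 0 ≤ s) (hst : s ≤ t) :
    ‖NormedSpace.exp (s • A) * (W * Wᵀ) * NormedSpace.exp (s • Aᵀ)
        - V * (NormedSpace.exp (s • (Vᵀ * A * V)) * ((Vᵀ * W) * (Vᵀ * W)ᵀ) *
            NormedSpace.exp (s • (Vᵀ * A * V)ᵀ)) * Vᵀ‖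
      ≤ 4 * max 1 (Real.exp (2 * t * logNorm A)) * ‖A‖ ^ k * (s ^ k / (k.factorial : ℝ)) *
        ‖W * Wᵀ‖ := by
  set μ := logNorm A with hμ
  set H := Vᵀ * A * V with hH
  set EA := NormedSpace.exp (s • A) with hEA
  set EH := NormedSpace.exp (s • H) with hEH
  set a : Matrix (Fin n) (Fin p) ℝ := EA * W with ha
  set b : Matrix (Fin n) (Fin p) ℝ := V * (EH * (Vᵀ * W)) with hb
  -- rewrite the two terms as a * aᵀ and b * bᵀ
  have hid1 : EA * (W * Wᵀ) * NormedSpace.exp (s • Aᵀ) = a * aᵀ := by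
    rw [exp_smul_transpose, ha, Matrix.transpose_mul]
    simp only [Matrix.mul_assoc]
    rfl
  have hid2 : V * (EH * ((Vᵀ * W) * (Vᵀ * W)ᵀ) * NormedSpace.exp (s • Hᵀ)) * Vᵀ
      = b * bᵀ := by
    rw [exp_smul_transpose, hb]
    simp only [Matrix.transpose_mul, Matrix.mul_assoc]
    rfl
  rw [hid1, hid2]
  have hid3 : a * aᵀ - b * bᵀ = (a - b) * aᵀ + b * (a - b)ᵀ := by
    rw [Matrix.transpose_sub, Matrix.sub_mul, Matrix.mul_sub]
    abel
  rw [hid3]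
  -- norms of a and b
  have hWnn : (0:ℝ) ≤ ‖W‖ := norm_nonneg W
  have hanorm : ‖a‖ ≤ Real.exp (s * μ) * ‖W‖ := by
    calc ‖a‖ ≤ ‖EA‖ * ‖W‖ := Matrix.l2_opNorm_mul _ _
      _ ≤ Real.exp (s * μ) * ‖W‖ := by
          apply mul_le_mul_of_nonneg_right (norm_exp_le A hs) hWnn
  have hexpH : ∀ σ : ℝ, 0 ≤ σ → ‖NormedSpace.exp (σ • H)‖ ≤ Real.exp (σ * μ) := by
    intro σ hσ
    refine le_trans (norm_exp_le H hσ) (Real.exp_le_exp.mpr ?_)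
    exact mul_le_mul_of_nonneg_left (logNorm_conj_le A hV hm) hσ
  have hVtW : ‖Vᵀ * W‖ ≤ ‖W‖ := by
    calc ‖Vᵀ * W‖ ≤ ‖Vᵀ‖ * ‖W‖ := Matrix.l2_opNorm_mul _ _
      _ ≤ 1 * ‖W‖ := mul_le_mul_of_nonneg_right (norm_Vt_le_one hV) hWnn
      _ = ‖W‖ := one_mul _
  have hbnorm : ‖b‖ ≤ Real.exp (s * μ) * ‖W‖ := by
    calc ‖b‖ ≤ ‖V‖ * ‖EH * (Vᵀ * W)‖ := Matrix.l2_opNorm_mul _ _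
      _ ≤ 1 * ‖EH * (Vᵀ * W)‖ := by
          apply mul_le_mul_of_nonneg_right (norm_V_le_one hV) (norm_nonneg _)
      _ = ‖EH * (Vᵀ * W)‖ := one_mul _
      _ ≤ ‖EH‖ * ‖Vᵀ * W‖ := Matrix.l2_opNorm_mul _ _
      _ ≤ Real.exp (s * μ) * ‖W‖ := by
          apply mul_le_mul (hexpH s hs) hVtW (norm_nonneg _) (Real.exp_nonneg _)
  -- Taylor remainder bound for a - b
  obtain ⟨K, rfl⟩ : ∃ K, k = K + 1 := ⟨k - 1, by omega⟩
  set Ms := max 1 (Real.exp (s * μ)) with hMs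
  have hMsA : ∀ σ ∈ Set.Icc (0:ℝ) s, ‖NormedSpace.exp (σ • A)‖ ≤ Ms := by
    intro σ hσ
    refine le_trans (norm_exp_le A hσ.1) ?_
    rcases le_or_gt 0 μ with hμ0 | hμ0
    · exact le_trans (Real.exp_le_exp.mpr (mul_le_mul_of_nonneg_right hσ.2 hμ0)) (le_max_right _ _)
    · refine le_trans ?_ (le_max_left _ _)
      rw [Real.exp_le_one_iff]
      exact mul_nonpos_of_nonneg_of_nonpos hσ.1 hμ0.le
  have hMsH : ∀ σ ∈ Set.Icc (0:ℝ) s, ‖NormedSpace.exp (σ • H)‖ ≤ Ms := by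
    intro σ hσ
    refine le_trans (hexpH σ hσ.1) ?_
    rcases le_or_gt 0 μ with hμ0 | hμ0
    · exact le_trans (Real.exp_le_exp.mpr (mul_le_mul_of_nonneg_right hσ.2 hμ0)) (le_max_right _ _)
    · refine le_trans ?_ (le_max_left _ _)
      rw [Real.exp_le_one_iff]
      exact mul_nonpos_of_nonneg_of_nonpos hσ.1 hμ0.le
  have hMspos : (0:ℝ) ≤ Ms := le_trans zero_le_one (le_max_left _ _)
  have hHA : ‖H‖ ≤ ‖A‖ := by
    calc ‖H‖ ≤ ‖Vᵀ * A‖ * ‖V‖ := Matrix.l2_opNorm_mul _ _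
      _ ≤ ‖Vᵀ * A‖ * 1 := mul_le_mul_of_nonneg_left (norm_V_le_one hV) (norm_nonneg _)
      _ = ‖Vᵀ * A‖ := mul_one _
      _ ≤ ‖Vᵀ‖ * ‖A‖ := Matrix.l2_opNorm_mul _ _
      _ ≤ 1 * ‖A‖ := mul_le_mul_of_nonneg_right (norm_Vt_le_one hV) (norm_nonneg _)
      _ = ‖A‖ := one_mul _
  set TA := ∑ i ∈ Finset.range (K + 1), (s ^ i / (i.factorial : ℝ)) • A ^ i with hTA
  set TH := ∑ i ∈ Finset.range (K + 1), (s ^ i / (i.factorial : ℝ)) • H ^ i with hTH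
  have hdiff : a - b = (EA - TA) * W - V * ((EH - TH) * (Vᵀ * W)) := by
    have hTT : V * (TH * (Vᵀ * W)) = TA * W := by
      have h1 := exact_taylor hV A hfix s
      rw [← hH] at h1
      rw [← Matrix.mul_assoc, hTH, h1, hTA, Matrix.sum_mul]
      apply Finset.sum_congr rfl
      intro i _
      rw [Matrix.smul_mul]
    rw [Matrix.sub_mul, Matrix.sub_mul, Matrix.mul_sub, hTT, ha, hb]
    abel
  have hranorm : ‖EA - TA‖ ≤ Ms * ‖A‖ ^ (K + 1) * (s ^ (K + 1) / ((K + 1).factorial : ℝ)) :=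
    taylor_remainder_bound A K hs hMsA
  have hrhnorm : ‖EH - TH‖ ≤ Ms * ‖A‖ ^ (K + 1) * (s ^ (K + 1) / ((K + 1).factorial : ℝ)) := by
    refine le_trans (taylor_remainder_bound H K hs hMsH) ?_
    apply mul_le_mul_of_nonneg_right _ (by positivity)
    apply mul_le_mul_of_nonneg_left _ hMspos
    exact pow_le_pow_left₀ (norm_nonneg _) hHA _
  have hdiffnorm : ‖a - b‖ ≤ 2 * Ms * ‖A‖ ^ (K + 1) *
      (s ^ (K + 1) / ((K + 1).factorial : ℝ)) * ‖W‖ := by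
    rw [hdiff]
    calc ‖(EA - TA) * W - V * ((EH - TH) * (Vᵀ * W))‖
        ≤ ‖(EA - TA) * W‖ + ‖V * ((EH - TH) * (Vᵀ * W))‖ := norm_sub_le _ _
      _ ≤ ‖EA - TA‖ * ‖W‖ + 1 * (‖EH - TH‖ * ‖W‖) := by
          apply add_le_add (Matrix.l2_opNorm_mul _ _)
          calc ‖V * ((EH - TH) * (Vᵀ * W))‖ ≤ ‖V‖ * ‖(EH - TH) * (Vᵀ * W)‖ :=
              Matrix.l2_opNorm_mul _ _
            _ ≤ 1 * (‖EH - TH‖ * ‖W‖) := by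
                apply mul_le_mul (norm_V_le_one hV) _ (norm_nonneg _) zero_le_one
                calc ‖(EH - TH) * (Vᵀ * W)‖ ≤ ‖EH - TH‖ * ‖Vᵀ * W‖ := Matrix.l2_opNorm_mul _ _
                  _ ≤ ‖EH - TH‖ * ‖W‖ := mul_le_mul_of_nonneg_left hVtW (norm_nonneg _)
      _ ≤ (Ms * ‖A‖ ^ (K + 1) * (s ^ (K + 1) / ((K + 1).factorial : ℝ))) * ‖W‖
          + 1 * ((Ms * ‖A‖ ^ (K + 1) * (s ^ (K + 1) / ((K + 1).factorial : ℝ))) * ‖W‖) := by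
          apply add_le_add
          · exact mul_le_mul_of_nonneg_right hranorm hWnn
          · rw [one_mul, one_mul]
            exact mul_le_mul_of_nonneg_right hrhnorm hWnn
      _ = 2 * Ms * ‖A‖ ^ (K + 1) * (s ^ (K + 1) / ((K + 1).factorial : ℝ)) * ‖W‖ := by ring
  -- combine
  have hMse : Ms * Real.exp (s * μ) ≤ max 1 (Real.exp (2 * t * μ)) := by
    rcases le_or_gt 0 μ with hμ0 | hμ0
    · have h1 : Ms = Real.exp (s * μ) := by
        rw [hMs, max_eq_right]
        rw [Real.one_le_exp_iff]
        positivity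
      rw [h1, ← Real.exp_add]
      refine le_trans (Real.exp_le_exp.mpr ?_) (le_max_right _ _)
      nlinarith
    · have h1 : Ms = 1 := by
        rw [hMs, max_eq_left]
        rw [Real.exp_le_one_iff]
        exact mul_nonpos_of_nonneg_of_nonpos hs hμ0.le
      rw [h1, one_mul]
      refine le_trans ?_ (le_max_left _ _)
      rw [Real.exp_le_one_iff]
      exact mul_nonpos_of_nonneg_of_nonpos hs hμ0.le
  have hfinal : ‖(a - b) * aᵀ + b * (a - b)ᵀ‖
      ≤ (2 * Ms * ‖A‖ ^ (K + 1) * (s ^ (K + 1) / ((K + 1).factorial : ℝ)) * ‖W‖) *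
        (2 * Real.exp (s * μ) * ‖W‖) := by
    calc ‖(a - b) * aᵀ + b * (a - b)ᵀ‖
        ≤ ‖(a - b) * aᵀ‖ + ‖b * (a - b)ᵀ‖ := norm_add_le _ _
      _ ≤ ‖a - b‖ * ‖aᵀ‖ + ‖b‖ * ‖(a - b)ᵀ‖ :=
          add_le_add (Matrix.l2_opNorm_mul _ _) (Matrix.l2_opNorm_mul _ _)
      _ = ‖a - b‖ * ‖a‖ + ‖b‖ * ‖a - b‖ := by rw [norm_transpose, norm_transpose]
      _ = ‖a - b‖ * (‖a‖ + ‖b‖) := by ring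
      _ ≤ (2 * Ms * ‖A‖ ^ (K + 1) * (s ^ (K + 1) / ((K + 1).factorial : ℝ)) * ‖W‖) *
          (Real.exp (s * μ) * ‖W‖ + Real.exp (s * μ) * ‖W‖) := by
          apply mul_le_mul hdiffnorm (add_le_add hanorm hbnorm)
            (by positivity) (by positivity)
      _ = (2 * Ms * ‖A‖ ^ (K + 1) * (s ^ (K + 1) / ((K + 1).factorial : ℝ)) * ‖W‖) *
          (2 * Real.exp (s * μ) * ‖W‖) := by ring
  refine le_trans hfinal ?_
  rw [norm_mul_transpose_self]
  have hcollect : (2 * Ms * ‖A‖ ^ (K + 1) * (s ^ (K + 1) / ((K + 1).factorial : ℝ)) * ‖W‖) *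
      (2 * Real.exp (s * μ) * ‖W‖)
      = 4 * (Ms * Real.exp (s * μ)) * ‖A‖ ^ (K + 1) *
        (s ^ (K + 1) / ((K + 1).factorial : ℝ)) * ‖W‖ ^ 2 := by ring
  rw [hcollect]
  apply mul_le_mul_of_nonneg_right _ (sq_nonneg _)
  apply mul_le_mul_of_nonneg_right _ (by positivity)
  apply mul_le_mul_of_nonneg_right _ (by positivity)
  apply mul_le_mul_of_nonneg_left hMse (by norm_num)


end KLEAux

/-- A priori error bound for the Krylov approximation of the differential
Lyapunov equation, Theorem 4.1. -/
theorem krylov_lyapunov_error {n p q m : ℕ} (T : ℝ) (hT : 0 ≤ T)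
    (A : Matrix (Fin n) (Fin n) ℝ)
    (Z : Matrix (Fin n) (Fin p) ℝ) (C : Matrix (Fin n) (Fin q) ℝ) (k : ℕ)
    (V : Matrix (Fin n) (Fin m) ℝ) (hV : Vᵀ * V = 1)
    (hspan : colSpace V = blockKrylov A (Matrix.fromCols Z C) k)
    (X : ℝ → Matrix (Fin n) (Fin n) ℝ) (Y : ℝ → Matrix (Fin m) (Fin m) ℝ)
    (hX : ∀ t ∈ Set.Icc (0:ℝ) T,
      HasDerivAt X (A * X t + X t * Aᵀ + C * Cᵀ) t)
    (hX0 : X 0 = Z * Zᵀ)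
    (hY : ∀ t ∈ Set.Icc (0:ℝ) T,
      HasDerivAt Y ((Vᵀ * A * V) * Y t + Y t * (Vᵀ * A * V)ᵀ + (Vᵀ * C) * (Vᵀ * C)ᵀ) t)
    (hY0 : Y 0 = (Vᵀ * Z) * (Vᵀ * Z)ᵀ) :
    ∀ t ∈ Set.Icc (0:ℝ) T,
      ‖X t - V * Y t * Vᵀ‖ ≤
        4 * max 1 (Real.exp (2 * t * logNorm A)) * ‖A‖ ^ k *
          (t ^ k / (Nat.factorial k : ℝ) * ‖Z * Zᵀ‖
            + t ^ (k + 1) / (Nat.factorial (k + 1) : ℝ) * ‖C * Cᵀ‖) := by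
  intro t ht
  have ht0 : 0 ≤ t := ht.1
  set μ := logNorm A with hμ
  set M₂ := max 1 (Real.exp (2 * t * μ)) with hM₂
  have hM₂1 : (1:ℝ) ≤ M₂ := le_max_left _ _
  have hM₂0 : (0:ℝ) ≤ M₂ := le_trans zero_le_one hM₂1
  have hrhs0 : 0 ≤ 4 * M₂ * ‖A‖ ^ k *
      (t ^ k / (Nat.factorial k : ℝ) * ‖Z * Zᵀ‖
        + t ^ (k + 1) / (Nat.factorial (k + 1) : ℝ) * ‖C * Cᵀ‖) := by
    apply mul_nonneg
    · positivity
    · apply add_nonneg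
      · apply mul_nonneg (div_nonneg (pow_nonneg ht0 _) (by positivity)) (norm_nonneg _)
      · apply mul_nonneg (div_nonneg (pow_nonneg ht0 _) (by positivity)) (norm_nonneg _)
  -- trivial case n = 0
  rcases Nat.eq_zero_or_pos n with hn0 | hn
  · subst hn0
    have hzero : X t - V * Y t * Vᵀ = 0 := by
      ext i j
      exact Fin.elim0 i
    rw [hzero, norm_zero]
    exact hrhs0
  -- representation of X
  have hXrep : X t = NormedSpace.exp (t • A) * X 0 * NormedSpace.exp (t • Aᵀ) +
      ∫ s in (0:ℝ)..t, NormedSpace.exp ((t - s) • A) * (C * Cᵀ) *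
        NormedSpace.exp ((t - s) • Aᵀ) :=
    KLEAux.voc A Aᵀ continuous_const hX ht
  have hexp2 : ∀ σ : ℝ, 0 ≤ σ → σ ≤ t → Real.exp (σ * μ) * Real.exp (σ * μ) ≤ M₂ := by
    intro σ h0 hσ
    rw [← Real.exp_add]
    rcases le_or_gt 0 μ with hμ0 | hμ0
    · refine le_trans (Real.exp_le_exp.mpr ?_) (le_max_right _ _)
      nlinarith
    · refine le_trans ?_ (le_max_left _ _)
      rw [Real.exp_le_one_iff]
      nlinarith
  -- case k = 0
  rcases Nat.eq_zero_or_pos k with hk0 | hk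
  · subst hk0
    have hbk : blockKrylov A (Matrix.fromCols Z C) 0 = ⊥ := by
      rw [blockKrylov]
      convert Submodule.span_empty
      ext v
      simp
    have hV0 : V = (0 : Matrix (Fin n) (Fin m) ℝ) := by
      have hcs : colSpace V = ⊥ := by rw [hspan, hbk]
      have hall := Submodule.span_eq_bot.mp hcs
      ext i j
      have := congrFun (hall (Vᵀ j) ⟨j, rfl⟩) i
      simpa [Matrix.transpose_apply] using this
    rw [hV0]
    simp only [Matrix.zero_mul, Matrix.mul_zero, sub_zero]
    -- bound ‖X t‖
    have hterm1 : ‖NormedSpace.exp (t • A) * X 0 * NormedSpace.exp (t • Aᵀ)‖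
        ≤ M₂ * ‖Z * Zᵀ‖ := by
      calc ‖NormedSpace.exp (t • A) * X 0 * NormedSpace.exp (t • Aᵀ)‖
          ≤ ‖NormedSpace.exp (t • A) * X 0‖ * ‖NormedSpace.exp (t • Aᵀ)‖ :=
            Matrix.l2_opNorm_mul _ _
        _ ≤ (‖NormedSpace.exp (t • A)‖ * ‖X 0‖) * ‖NormedSpace.exp (t • Aᵀ)‖ :=
            mul_le_mul_of_nonneg_right (Matrix.l2_opNorm_mul _ _) (norm_nonneg _)
        _ = ‖NormedSpace.exp (t • A)‖ * ‖NormedSpace.exp (t • A)‖ * ‖X 0‖ := by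
            rw [KLEAux.exp_smul_transpose, KLEAux.norm_transpose]; ring
        _ ≤ Real.exp (t * μ) * Real.exp (t * μ) * ‖X 0‖ := by
            apply mul_le_mul_of_nonneg_right _ (norm_nonneg _)
            apply mul_le_mul (KLEAux.norm_exp_le A ht0) (KLEAux.norm_exp_le A ht0)
              (norm_nonneg _) (Real.exp_nonneg _)
        _ ≤ M₂ * ‖X 0‖ :=
            mul_le_mul_of_nonneg_right (hexp2 t ht0 le_rfl) (norm_nonneg _)
        _ = M₂ * ‖Z * Zᵀ‖ := by rw [hX0]
    have hterm2 : ‖∫ s in (0:ℝ)..t, NormedSpace.exp ((t - s) • A) * (C * Cᵀ) *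
        NormedSpace.exp ((t - s) • Aᵀ)‖ ≤ M₂ * ‖C * Cᵀ‖ * t := by
      have := intervalIntegral.norm_integral_le_of_norm_le_const
        (C := M₂ * ‖C * Cᵀ‖)
        (f := fun s => NormedSpace.exp ((t - s) • A) * (C * Cᵀ) *
          NormedSpace.exp ((t - s) • Aᵀ)) (a := 0) (b := t) ?_
      · calc ‖∫ s in (0:ℝ)..t, NormedSpace.exp ((t - s) • A) * (C * Cᵀ) *
            NormedSpace.exp ((t - s) • Aᵀ)‖ ≤ M₂ * ‖C * Cᵀ‖ * |t - 0| := this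
          _ = M₂ * ‖C * Cᵀ‖ * t := by rw [sub_zero, abs_of_nonneg ht0]
      · intro s hs
        rw [Set.uIoc_of_le ht0] at hs
        have hs1 : 0 ≤ t - s := by linarith [hs.2]
        have hs2 : t - s ≤ t := by linarith [hs.1]
        calc ‖NormedSpace.exp ((t - s) • A) * (C * Cᵀ) * NormedSpace.exp ((t - s) • Aᵀ)‖
            ≤ ‖NormedSpace.exp ((t - s) • A) * (C * Cᵀ)‖ *
              ‖NormedSpace.exp ((t - s) • Aᵀ)‖ := Matrix.l2_opNorm_mul _ _
          _ ≤ (‖NormedSpace.exp ((t - s) • A)‖ * ‖C * Cᵀ‖) *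
              ‖NormedSpace.exp ((t - s) • Aᵀ)‖ :=
              mul_le_mul_of_nonneg_right (Matrix.l2_opNorm_mul _ _) (norm_nonneg _)
          _ = ‖NormedSpace.exp ((t - s) • A)‖ * ‖NormedSpace.exp ((t - s) • A)‖ *
              ‖C * Cᵀ‖ := by rw [KLEAux.exp_smul_transpose, KLEAux.norm_transpose]; ring
          _ ≤ Real.exp ((t - s) * μ) * Real.exp ((t - s) * μ) * ‖C * Cᵀ‖ := by
              apply mul_le_mul_of_nonneg_right _ (norm_nonneg _)
              apply mul_le_mul (KLEAux.norm_exp_le A hs1) (KLEAux.norm_exp_le A hs1)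
                (norm_nonneg _) (Real.exp_nonneg _)
          _ ≤ M₂ * ‖C * Cᵀ‖ :=
              mul_le_mul_of_nonneg_right (hexp2 _ hs1 hs2) (norm_nonneg _)
    calc ‖X t‖ ≤ ‖NormedSpace.exp (t • A) * X 0 * NormedSpace.exp (t • Aᵀ)‖ +
        ‖∫ s in (0:ℝ)..t, NormedSpace.exp ((t - s) • A) * (C * Cᵀ) *
          NormedSpace.exp ((t - s) • Aᵀ)‖ := by rw [hXrep]; exact norm_add_le _ _
      _ ≤ M₂ * ‖Z * Zᵀ‖ + M₂ * ‖C * Cᵀ‖ * t := add_le_add hterm1 hterm2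
      _ ≤ 4 * M₂ * ‖A‖ ^ 0 * (t ^ 0 / (Nat.factorial 0 : ℝ) * ‖Z * Zᵀ‖
            + t ^ (0 + 1) / (Nat.factorial (0 + 1) : ℝ) * ‖C * Cᵀ‖) := by
          norm_num [Nat.factorial]
          nlinarith [norm_nonneg (Z * Zᵀ), norm_nonneg (C * Cᵀ), mul_nonneg hM₂0 (norm_nonneg (Z*Zᵀ)), mul_nonneg (mul_nonneg hM₂0 (norm_nonneg (C*Cᵀ))) ht0]
  -- case m = 0
  rcases Nat.eq_zero_or_pos m with hm0 | hm
  · subst hm0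
    have hbot : colSpace V = ⊥ := by
      rw [colSpace]
      rw [Set.range_eq_empty (f := (Vᵀ : Fin 0 → Fin n → ℝ))]
      exact Submodule.span_empty
    have hZ0 : Z = 0 := by
      ext i j
      have hmem := (KLEAux.col_mem_K A Z C (k := k) (i := 0) hk).1 j
      rw [← hspan, hbot] at hmem
      have := congrFun ((Submodule.mem_bot ℝ).mp hmem) i
      simpa [Matrix.transpose_apply] using this
    have hC0 : C = 0 := by
      ext i j
      have hmem := (KLEAux.col_mem_K A Z C (k := k) (i := 0) hk).2 j
      rw [← hspan, hbot] at hmem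
      have := congrFun ((Submodule.mem_bot ℝ).mp hmem) i
      simpa [Matrix.transpose_apply] using this
    have hXt0 : X t = 0 := by
      rw [hXrep, hX0, hZ0, hC0]
      simp
    have hVY0 : V * Y t * Vᵀ = 0 := by
      ext i j
      rw [Matrix.mul_apply]
      simp
    rw [hXt0, hVY0, sub_zero, norm_zero]
    exact hrhs0
  -- main case
  set H := Vᵀ * A * V with hH
  have hfixZ : ∀ i < k, V * Vᵀ * (A ^ i * Z) = A ^ i * Z := by
    intro i hik
    apply KLEAux.proj_fix_mat hV
    intro j
    rw [hspan]
    exact (KLEAux.col_mem_K A Z C hik).1 j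
  have hfixC : ∀ i < k, V * Vᵀ * (A ^ i * C) = A ^ i * C := by
    intro i hik
    apply KLEAux.proj_fix_mat hV
    intro j
    rw [hspan]
    exact (KLEAux.col_mem_K A Z C hik).2 j
  have hYrep : Y t = NormedSpace.exp (t • H) * Y 0 * NormedSpace.exp (t • Hᵀ) +
      ∫ s in (0:ℝ)..t, NormedSpace.exp ((t - s) • H) * ((Vᵀ * C) * (Vᵀ * C)ᵀ) *
        NormedSpace.exp ((t - s) • Hᵀ) :=
    KLEAux.voc H Hᵀ continuous_const hY ht
  -- continuity facts
  have hcA : Continuous fun s : ℝ => NormedSpace.exp ((t - s) • A) :=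
    NormedSpace.exp_continuous.comp ((continuous_const.sub continuous_id).smul continuous_const)
  have hcAt : Continuous fun s : ℝ => NormedSpace.exp ((t - s) • Aᵀ) :=
    NormedSpace.exp_continuous.comp ((continuous_const.sub continuous_id).smul continuous_const)
  have hcH : Continuous fun s : ℝ => NormedSpace.exp ((t - s) • H) :=
    NormedSpace.exp_continuous.comp ((continuous_const.sub continuous_id).smul continuous_const)
  have hcHt : Continuous fun s : ℝ => NormedSpace.exp ((t - s) • Hᵀ) :=
    NormedSpace.exp_continuous.comp ((continuous_const.sub continuous_id).smul continuous_const)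
  have hcf : Continuous fun s : ℝ => NormedSpace.exp ((t - s) • A) * (C * Cᵀ) *
      NormedSpace.exp ((t - s) • Aᵀ) := (hcA.matrix_mul continuous_const).matrix_mul hcAt
  have hcg : Continuous fun s : ℝ => NormedSpace.exp ((t - s) • H) * ((Vᵀ * C) * (Vᵀ * C)ᵀ) *
      NormedSpace.exp ((t - s) • Hᵀ) := (hcH.matrix_mul continuous_const).matrix_mul hcHt
  have hcVg : Continuous fun s : ℝ => V * (NormedSpace.exp ((t - s) • H) *
      ((Vᵀ * C) * (Vᵀ * C)ᵀ) * NormedSpace.exp ((t - s) • Hᵀ)) * Vᵀ :=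
    (continuous_const.matrix_mul hcg).matrix_mul continuous_const
  have hint1 : IntervalIntegrable (fun s => NormedSpace.exp ((t - s) • A) * (C * Cᵀ) *
      NormedSpace.exp ((t - s) • Aᵀ)) volume 0 t := hcf.intervalIntegrable 0 t
  have hint2 : IntervalIntegrable (fun s => NormedSpace.exp ((t - s) • H) *
      ((Vᵀ * C) * (Vᵀ * C)ᵀ) * NormedSpace.exp ((t - s) • Hᵀ)) volume 0 t :=
    hcg.intervalIntegrable 0 t
  have hintV : IntervalIntegrable (fun s => V * (NormedSpace.exp ((t - s) • H) *
      ((Vᵀ * C) * (Vᵀ * C)ᵀ) * NormedSpace.exp ((t - s) • Hᵀ)) * Vᵀ) volume 0 t :=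
    hcVg.intervalIntegrable 0 t
  -- decomposition
  have hpull : V * (∫ s in (0:ℝ)..t, NormedSpace.exp ((t - s) • H) *
      ((Vᵀ * C) * (Vᵀ * C)ᵀ) * NormedSpace.exp ((t - s) • Hᵀ)) * Vᵀ
      = ∫ s in (0:ℝ)..t, V * (NormedSpace.exp ((t - s) • H) *
        ((Vᵀ * C) * (Vᵀ * C)ᵀ) * NormedSpace.exp ((t - s) • Hᵀ)) * Vᵀ := by
    have := (KLEAux.conjCLM V Vᵀ).intervalIntegral_comp_comm hint2
    simp only [KLEAux.conjCLM_apply] at this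
    exact this.symm
  have hdecomp : X t - V * Y t * Vᵀ =
      (NormedSpace.exp (t • A) * (Z * Zᵀ) * NormedSpace.exp (t • Aᵀ)
        - V * (NormedSpace.exp (t • H) * ((Vᵀ * Z) * (Vᵀ * Z)ᵀ) *
            NormedSpace.exp (t • Hᵀ)) * Vᵀ)
      + ∫ s in (0:ℝ)..t,
          (NormedSpace.exp ((t - s) • A) * (C * Cᵀ) * NormedSpace.exp ((t - s) • Aᵀ)
          - V * (NormedSpace.exp ((t - s) • H) * ((Vᵀ * C) * (Vᵀ * C)ᵀ) *
              NormedSpace.exp ((t - s) • Hᵀ)) * Vᵀ) := by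
    rw [hXrep, hYrep, hX0, hY0]
    rw [Matrix.mul_add V, Matrix.add_mul, hpull]
    rw [intervalIntegral.integral_sub hint1 hintV]
    have hy1 : V * (NormedSpace.exp (t • H) * ((Vᵀ * Z) * (Vᵀ * Z)ᵀ) *
        NormedSpace.exp (t • Hᵀ)) * Vᵀ
        = V * (NormedSpace.exp (t • H) * ((Vᵀ * Z) * (Vᵀ * Z)ᵀ) *
        NormedSpace.exp (t • Hᵀ)) * Vᵀ := rfl
    abel
  rw [hdecomp]
  -- bound the two pieces
  have hbound1 : ‖NormedSpace.exp (t • A) * (Z * Zᵀ) * NormedSpace.exp (t • Aᵀ)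
      - V * (NormedSpace.exp (t • H) * ((Vᵀ * Z) * (Vᵀ * Z)ᵀ) *
          NormedSpace.exp (t • Hᵀ)) * Vᵀ‖
      ≤ 4 * M₂ * ‖A‖ ^ k * (t ^ k / (k.factorial : ℝ)) * ‖Z * Zᵀ‖ :=
    KLEAux.term_bound A hV hm hk Z hfixZ ht0 le_rfl
  have hbound2 : ‖∫ s in (0:ℝ)..t,
      (NormedSpace.exp ((t - s) • A) * (C * Cᵀ) * NormedSpace.exp ((t - s) • Aᵀ)
      - V * (NormedSpace.exp ((t - s) • H) * ((Vᵀ * C) * (Vᵀ * C)ᵀ) *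
          NormedSpace.exp ((t - s) • Hᵀ)) * Vᵀ)‖
      ≤ 4 * M₂ * ‖A‖ ^ k * (t ^ (k + 1) / ((k + 1).factorial : ℝ)) * ‖C * Cᵀ‖ := by
    set c : ℝ := 4 * M₂ * ‖A‖ ^ k * ‖C * Cᵀ‖ / (k.factorial : ℝ) with hc
    have hc0 : 0 ≤ c := by positivity
    calc ‖∫ s in (0:ℝ)..t,
        (NormedSpace.exp ((t - s) • A) * (C * Cᵀ) * NormedSpace.exp ((t - s) • Aᵀ)
        - V * (NormedSpace.exp ((t - s) • H) * ((Vᵀ * C) * (Vᵀ * C)ᵀ) *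
            NormedSpace.exp ((t - s) • Hᵀ)) * Vᵀ)‖
        ≤ ∫ s in (0:ℝ)..t,
          ‖NormedSpace.exp ((t - s) • A) * (C * Cᵀ) * NormedSpace.exp ((t - s) • Aᵀ)
          - V * (NormedSpace.exp ((t - s) • H) * ((Vᵀ * C) * (Vᵀ * C)ᵀ) *
              NormedSpace.exp ((t - s) • Hᵀ)) * Vᵀ‖ :=
          intervalIntegral.norm_integral_le_integral_norm ht0
      _ ≤ ∫ s in (0:ℝ)..t, (t - s) ^ k * c := by
          apply intervalIntegral.integral_mono_on ht0
          · exact ((hcf.sub hcVg).norm).intervalIntegrable 0 t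
          · exact (((continuous_const.sub continuous_id).pow k).mul
              continuous_const).intervalIntegrable 0 t
          · intro s hs
            have h1 : 0 ≤ t - s := by linarith [hs.2]
            have h2 : t - s ≤ t := by linarith [hs.1]
            have := KLEAux.term_bound A hV hm hk C hfixC h1 h2
            rw [← hH] at this
            refine le_trans this (le_of_eq ?_)
            rw [hc]
            ring
      _ = (t ^ (k + 1) / ((k:ℝ) + 1)) * c := by
          rw [intervalIntegral.integral_mul_const]
          congr 1
          have hcomp : (∫ s in (0:ℝ)..t, (t - s) ^ k) = ∫ s in (0:ℝ)..t, s ^ k := by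
            have := intervalIntegral.integral_comp_sub_left (a := (0:ℝ)) (b := t)
              (fun u => u ^ k) t
            simpa using this
          rw [hcomp, integral_pow]
          simp
      _ = 4 * M₂ * ‖A‖ ^ k * (t ^ (k + 1) / ((k + 1).factorial : ℝ)) * ‖C * Cᵀ‖ := by
          rw [hc, Nat.factorial_succ]
          have h1 : (0:ℝ) < (k.factorial : ℝ) := by positivity
          push_cast
          field_simp
  calc ‖(NormedSpace.exp (t • A) * (Z * Zᵀ) * NormedSpace.exp (t • Aᵀ)
        - V * (NormedSpace.exp (t • H) * ((Vᵀ * Z) * (Vᵀ * Z)ᵀ) *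
            NormedSpace.exp (t • Hᵀ)) * Vᵀ)
      + ∫ s in (0:ℝ)..t,
          (NormedSpace.exp ((t - s) • A) * (C * Cᵀ) * NormedSpace.exp ((t - s) • Aᵀ)
          - V * (NormedSpace.exp ((t - s) • H) * ((Vᵀ * C) * (Vᵀ * C)ᵀ) *
              NormedSpace.exp ((t - s) • Hᵀ)) * Vᵀ)‖
      ≤ 4 * M₂ * ‖A‖ ^ k * (t ^ k / (k.factorial : ℝ)) * ‖Z * Zᵀ‖
        + 4 * M₂ * ‖A‖ ^ k * (t ^ (k + 1) / ((k + 1).factorial : ℝ)) * ‖C * Cᵀ‖ :=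
        le_trans (norm_add_le _ _) (add_le_add hbound1 hbound2)
    _ = 4 * M₂ * ‖A‖ ^ k * (t ^ k / (Nat.factorial k : ℝ) * ‖Z * Zᵀ‖
          + t ^ (k + 1) / (Nat.factorial (k + 1) : ℝ) * ‖C * Cᵀ‖) := by ring
end
end

section
/- Let A, S ∈ ℝ^{n×n} with S symmetric positive semidefinite, Z ∈ ℝ^{n×p}, C ∈ ℝ^{n×q}, and write X₀ = Z Zᵀ, Q = C Cᵀ. Let V_k be a matrix with orthonormal columns, set H_k = V_kᵀ A V_k, S_k = V_kᵀ S V_k, C_k = V_kᵀ C, Z_k = V_kᵀ Z, let Y_k solve the projected differential Riccati equation Ẏ_k(t) = H_k Y_k(t) + Y_k(t) H_kᵀ + C_k C_kᵀ − Y_k(t) S_k Y_k(t), Y_k(0) = Z_k Z_kᵀ, and set X_k(t) = V_k Y_k(t) V_kᵀ. Then X_k(t) is symmetric positive semidefinite and ‖X_k(t)‖ ≤ e^{2tμ(A)} ‖X₀‖ + t φ₁(2tμ(A)) ‖Q‖ for all t in the existence interval of Y_k. -/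
open Matrix
open scoped Matrix.Norms.L2Operator

noncomputable section

namespace DRE
open Set


variable {m m' : ℕ}

/-- inner product on EuclideanSpace equals dotProduct -/
lemma inner_eq_dot (v w : EuclideanSpace ℝ (Fin m)) :
    (inner ℝ v w : ℝ) = (v : Fin m → ℝ) ⬝ᵥ (w : Fin m → ℝ) := by
  simp [PiLp.inner_apply, dotProduct, mul_comm]

lemma dot_self_eq_normsq (v : EuclideanSpace ℝ (Fin m)) :
    (v : Fin m → ℝ) ⬝ᵥ (v : Fin m → ℝ) = ‖v‖ ^ 2 := by
  rw [← inner_eq_dot, real_inner_self_eq_norm_sq]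

/-- Cauchy-Schwarz with operator norm -/
lemma dot_mulVec_le (M : Matrix (Fin m) (Fin m') ℝ) (v : EuclideanSpace ℝ (Fin m))
    (w : EuclideanSpace ℝ (Fin m')) :
    (v : Fin m → ℝ) ⬝ᵥ (M *ᵥ (w : Fin m' → ℝ)) ≤ ‖M‖ * (‖v‖ * ‖w‖) := by
  have h1 : (v : Fin m → ℝ) ⬝ᵥ (M *ᵥ (w : Fin m' → ℝ))
      = (inner ℝ v ((EuclideanSpace.equiv (Fin m) ℝ).symm (M *ᵥ (w : Fin m' → ℝ))) : ℝ) := by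
    rw [inner_eq_dot]; rfl
  rw [h1]
  calc (inner ℝ v ((EuclideanSpace.equiv (Fin m) ℝ).symm (M *ᵥ (w : Fin m' → ℝ))) : ℝ)
      ≤ ‖v‖ * ‖(EuclideanSpace.equiv (Fin m) ℝ).symm (M *ᵥ (w : Fin m' → ℝ))‖ :=
        real_inner_le_norm _ _
    _ ≤ ‖v‖ * (‖M‖ * ‖w‖) := by
        refine mul_le_mul_of_nonneg_left ?_ (norm_nonneg _)
        exact M.l2_opNorm_mulVec w
    _ = ‖M‖ * (‖v‖ * ‖w‖) := by ring

lemma abs_dot_mulVec_le (M : Matrix (Fin m) (Fin m') ℝ) (v : EuclideanSpace ℝ (Fin m))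
    (w : EuclideanSpace ℝ (Fin m')) :
    |(v : Fin m → ℝ) ⬝ᵥ (M *ᵥ (w : Fin m' → ℝ))| ≤ ‖M‖ * (‖v‖ * ‖w‖) := by
  refine abs_le.mpr ⟨?_, dot_mulVec_le M v w⟩
  have := dot_mulVec_le M (-v) w
  have hn : ((-v : EuclideanSpace ℝ (Fin m)) : Fin m → ℝ) = -(v : Fin m → ℝ) := rfl
  rw [hn, neg_dotProduct, norm_neg] at this
  linarith

variable {m'' : ℕ}


lemma real_conjTranspose (M : Matrix (Fin m) (Fin m) ℝ) : Mᴴ = Mᵀ := by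
  ext i j; simp [conjTranspose_apply]

lemma isHermitian_of_symm {M : Matrix (Fin m) (Fin m) ℝ} (h : Mᵀ = M) : M.IsHermitian := by
  rw [Matrix.IsHermitian, real_conjTranspose]; exact h

/-- For symmetric M with eigenpair data: (b i) ⬝ᵥ (M *ᵥ x) = λ i * ((b i) ⬝ᵥ x) -/
lemma eigen_dot {M : Matrix (Fin m) (Fin m) ℝ} (hM : M.IsHermitian) (i : Fin m)
    (x : Fin m → ℝ) :
    ((hM.eigenvectorBasis i : EuclideanSpace ℝ (Fin m)) : Fin m → ℝ) ⬝ᵥ (M *ᵥ x)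
      = hM.eigenvalues i * (((hM.eigenvectorBasis i : EuclideanSpace ℝ (Fin m)) : Fin m → ℝ) ⬝ᵥ x) := by
  set v : Fin m → ℝ := ((hM.eigenvectorBasis i : EuclideanSpace ℝ (Fin m)) : Fin m → ℝ) with hv
  have hsymm : Mᵀ = M := by rw [← real_conjTranspose]; exact hM
  have heig : M *ᵥ v = hM.eigenvalues i • v := hM.mulVec_eigenvectorBasis i
  calc v ⬝ᵥ (M *ᵥ x) = (v ᵥ* M) ⬝ᵥ x := dotProduct_mulVec v M x
    _ = (Mᵀ *ᵥ v) ⬝ᵥ x := by rw [mulVec_transpose]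
    _ = (M *ᵥ v) ⬝ᵥ x := by rw [hsymm]
    _ = (hM.eigenvalues i • v) ⬝ᵥ x := by rw [heig]
    _ = hM.eigenvalues i * (v ⬝ᵥ x) := smul_dotProduct _ _ _

lemma inner_basis_eq_dot (b : EuclideanSpace ℝ (Fin m)) (x : EuclideanSpace ℝ (Fin m)) :
    (inner ℝ b x : ℝ) = (b : Fin m → ℝ) ⬝ᵥ (x : Fin m → ℝ) := by
  simp [PiLp.inner_apply, dotProduct, mul_comm]

/-- minimum-eigenvalue eigenvector with global minimality of Rayleigh quotient -/
lemma exists_min_eigen (hm : 0 < m) {M : Matrix (Fin m) (Fin m) ℝ} (hM : M.IsHermitian) :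
    ∃ (lam : ℝ) (v : EuclideanSpace ℝ (Fin m)), ‖v‖ = 1 ∧
      M *ᵥ (v : Fin m → ℝ) = lam • (v : Fin m → ℝ) ∧
      ∀ u : EuclideanSpace ℝ (Fin m), ‖u‖ = 1 →
        lam ≤ (u : Fin m → ℝ) ⬝ᵥ (M *ᵥ (u : Fin m → ℝ)) := by
  haveI : Nonempty (Fin m) := ⟨⟨0, hm⟩⟩
  obtain ⟨i₀, -, hmin⟩ := Finset.exists_min_image Finset.univ hM.eigenvalues
    ⟨Classical.arbitrary _, Finset.mem_univ _⟩
  refine ⟨hM.eigenvalues i₀, hM.eigenvectorBasis i₀,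
    (hM.eigenvectorBasis.orthonormal.1 i₀), hM.mulVec_eigenvectorBasis i₀, ?_⟩
  intro u hu
  have key : (u : Fin m → ℝ) ⬝ᵥ (M *ᵥ (u : Fin m → ℝ))
      = ∑ i, hM.eigenvalues i *
        ((inner ℝ (hM.eigenvectorBasis i) u : ℝ) * (inner ℝ (hM.eigenvectorBasis i) u : ℝ)) := by
    have hMu : (u : Fin m → ℝ) ⬝ᵥ (M *ᵥ (u : Fin m → ℝ))
        = (inner ℝ u ((EuclideanSpace.equiv (Fin m) ℝ).symm (M *ᵥ (u : Fin m → ℝ))) : ℝ) := by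
      rw [inner_eq_dot]; rfl
    rw [hMu, ← hM.eigenvectorBasis.sum_inner_mul_inner u]
    refine Finset.sum_congr rfl fun i _ => ?_
    have h1 : (inner ℝ (hM.eigenvectorBasis i)
        ((EuclideanSpace.equiv (Fin m) ℝ).symm (M *ᵥ (u : Fin m → ℝ))) : ℝ)
        = hM.eigenvalues i * (inner ℝ (hM.eigenvectorBasis i) u : ℝ) := by
      rw [inner_basis_eq_dot, inner_basis_eq_dot]
      exact eigen_dot hM i _
    rw [h1, real_inner_comm u (hM.eigenvectorBasis i)]
    ring
  have parseval : ∑ i, ((inner ℝ (hM.eigenvectorBasis i) u : ℝ) * (inner ℝ (hM.eigenvectorBasis i) u : ℝ)) = 1 := by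
    have := hM.eigenvectorBasis.sum_inner_mul_inner u u
    have h2 : (inner ℝ u u : ℝ) = 1 := by
      rw [real_inner_self_eq_norm_sq, hu]; norm_num
    rw [h2] at this
    rw [← this]
    refine Finset.sum_congr rfl fun i _ => ?_
    rw [real_inner_comm u (hM.eigenvectorBasis i)]
  calc hM.eigenvalues i₀ = hM.eigenvalues i₀ * 1 := (mul_one _).symm
    _ = ∑ i, hM.eigenvalues i₀ * ((inner ℝ (hM.eigenvectorBasis i) u : ℝ) * (inner ℝ (hM.eigenvectorBasis i) u : ℝ)) := by
        rw [← Finset.mul_sum, parseval]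
    _ ≤ ∑ i, hM.eigenvalues i * ((inner ℝ (hM.eigenvectorBasis i) u : ℝ) * (inner ℝ (hM.eigenvectorBasis i) u : ℝ)) := by
        refine Finset.sum_le_sum fun i _ => ?_
        exact mul_le_mul_of_nonneg_right (hmin i (Finset.mem_univ i)) (mul_self_nonneg _)
    _ = (u : Fin m → ℝ) ⬝ᵥ (M *ᵥ (u : Fin m → ℝ)) := key.symm

/-- norm bound for PSD matrices from the quadratic form -/
lemma psd_norm_le (hm : 0 < m) {M : Matrix (Fin m) (Fin m) ℝ} (hM : M.PosSemidef) {c : ℝ}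
    (h : ∀ v : EuclideanSpace ℝ (Fin m), ‖v‖ = 1 →
      (v : Fin m → ℝ) ⬝ᵥ (M *ᵥ (v : Fin m → ℝ)) ≤ c) : ‖M‖ ≤ c := by
  haveI : Nonempty (Fin m) := ⟨⟨0, hm⟩⟩
  have hherm := hM.1
  set b := hherm.eigenvectorBasis with hb
  set lam := hherm.eigenvalues with hlam
  have hlam_nonneg : ∀ i, 0 ≤ lam i := hM.eigenvalues_nonneg
  have hlam_le : ∀ i, lam i ≤ c := by
    intro i
    have h1 := h (b i) (b.orthonormal.1 i)
    have h2 : ((b i : EuclideanSpace ℝ (Fin m)) : Fin m → ℝ) ⬝ᵥ (M *ᵥ ((b i : EuclideanSpace ℝ (Fin m)) : Fin m → ℝ))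
        = lam i := by
      rw [eigen_dot hherm i, dot_self_eq_normsq, b.orthonormal.1 i]
      simp; rfl
    rw [h2] at h1; exact h1
  have hc : 0 ≤ c := le_trans (hlam_nonneg (Classical.arbitrary _)) (hlam_le _)
  rw [Matrix.l2_opNorm_def]
  refine ContinuousLinearMap.opNorm_le_bound _ hc fun x => ?_
  have hx : ((Matrix.toEuclideanLin.trans LinearMap.toContinuousLinearMap) M) x
      = (EuclideanSpace.equiv (Fin m) ℝ).symm (M *ᵥ (x : Fin m → ℝ)) := rfl
  rw [hx]
  set y := (EuclideanSpace.equiv (Fin m) ℝ).symm (M *ᵥ (x : Fin m → ℝ)) with hy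
  have hsq : ‖y‖ ^ 2 ≤ (c * ‖x‖) ^ 2 := by
    have hyy : ‖y‖^2 = ∑ i, (inner ℝ (b i) y : ℝ) * (inner ℝ (b i) y : ℝ) := by
      rw [← real_inner_self_eq_norm_sq, ← b.sum_inner_mul_inner y y]
      exact Finset.sum_congr rfl fun i _ => by rw [real_inner_comm y (b i)]
    have hterm : ∀ i, (inner ℝ (b i) y : ℝ) = lam i * (inner ℝ (b i) x : ℝ) := by
      intro i
      rw [inner_basis_eq_dot, inner_basis_eq_dot]
      have : (y : Fin m → ℝ) = M *ᵥ (x : Fin m → ℝ) := rfl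
      rw [this]
      exact eigen_dot hherm i _
    have hxx : ∑ i, (inner ℝ (b i) x : ℝ) * (inner ℝ (b i) x : ℝ) = ‖x‖^2 := by
      rw [← real_inner_self_eq_norm_sq, ← b.sum_inner_mul_inner x x]
      exact Finset.sum_congr rfl fun i _ => by rw [real_inner_comm x (b i)]
    calc ‖y‖^2 = ∑ i, (inner ℝ (b i) y : ℝ) * (inner ℝ (b i) y : ℝ) := hyy
      _ = ∑ i, (lam i)^2 * ((inner ℝ (b i) x : ℝ) * (inner ℝ (b i) x : ℝ)) := by
          refine Finset.sum_congr rfl fun i _ => ?_; rw [hterm i]; ring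
      _ ≤ ∑ i, c^2 * ((inner ℝ (b i) x : ℝ) * (inner ℝ (b i) x : ℝ)) := by
          refine Finset.sum_le_sum fun i _ => ?_
          refine mul_le_mul_of_nonneg_right ?_ (mul_self_nonneg _)
          exact pow_le_pow_left₀ (hlam_nonneg i) (hlam_le i) 2
      _ = c^2 * ‖x‖^2 := by rw [← Finset.mul_sum, hxx]
      _ = (c * ‖x‖)^2 := by ring
  exact (pow_le_pow_iff_left₀ (norm_nonneg _) (mul_nonneg hc (norm_nonneg _)) (by norm_num)).mp hsq



variable {m : ℕ}

def lminQ (M : Matrix (Fin m) (Fin m) ℝ) : ℝ :=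
  sInf {r | ∃ v : EuclideanSpace ℝ (Fin m), ‖v‖ = 1 ∧
    r = (v : Fin m → ℝ) ⬝ᵥ (M *ᵥ (v : Fin m → ℝ))}

lemma lminQ_bddBelow (M : Matrix (Fin m) (Fin m) ℝ) :
    BddBelow {r | ∃ v : EuclideanSpace ℝ (Fin m), ‖v‖ = 1 ∧
      r = (v : Fin m → ℝ) ⬝ᵥ (M *ᵥ (v : Fin m → ℝ))} := by
  refine ⟨-‖M‖, fun r hr => ?_⟩
  obtain ⟨v, hv, rfl⟩ := hr
  have := abs_dot_mulVec_le M v v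
  rw [hv] at this; simp only [mul_one] at this
  have := neg_le_of_abs_le this
  linarith

lemma lminQ_le {M : Matrix (Fin m) (Fin m) ℝ} {v : EuclideanSpace ℝ (Fin m)} (hv : ‖v‖ = 1) :
    lminQ M ≤ (v : Fin m → ℝ) ⬝ᵥ (M *ᵥ (v : Fin m → ℝ)) :=
  csInf_le (lminQ_bddBelow M) ⟨v, hv, rfl⟩

lemma le_lminQ (hm : 0 < m) {M : Matrix (Fin m) (Fin m) ℝ} {c : ℝ}
    (h : ∀ v : EuclideanSpace ℝ (Fin m), ‖v‖ = 1 →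
      c ≤ (v : Fin m → ℝ) ⬝ᵥ (M *ᵥ (v : Fin m → ℝ))) : c ≤ lminQ M := by
  refine le_csInf ?_ ?_
  · exact ⟨_, ⟨EuclideanSpace.single (⟨0, hm⟩ : Fin m) (1:ℝ), by
      rw [EuclideanSpace.norm_single]; simp, rfl⟩⟩
  · rintro r ⟨v, hv, rfl⟩; exact h v hv

lemma neg_norm_le_lminQ (hm : 0 < m) (M : Matrix (Fin m) (Fin m) ℝ) : -‖M‖ ≤ lminQ M := by
  refine le_lminQ hm fun v hv => ?_
  have := neg_le_of_abs_le (abs_dot_mulVec_le M v v)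
  rw [hv] at this; simpa using this

lemma abs_lminQ_le (hm : 0 < m) (M : Matrix (Fin m) (Fin m) ℝ) : |lminQ M| ≤ ‖M‖ := by
  refine abs_le.mpr ⟨neg_norm_le_lminQ hm M, ?_⟩
  set v : EuclideanSpace ℝ (Fin m) := EuclideanSpace.single (⟨0, hm⟩ : Fin m) (1:ℝ) with hv
  have hvn : ‖v‖ = 1 := by rw [hv, EuclideanSpace.norm_single]; simp
  refine (lminQ_le hvn).trans ?_
  have := le_of_abs_le (abs_dot_mulVec_le M v v)
  rw [hvn] at this; simpa using this

lemma lminQ_lipschitz (hm : 0 < m) : LipschitzWith 1 (lminQ (m := m)) := by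
  refine LipschitzWith.of_dist_le_mul fun M N => ?_
  rw [NNReal.coe_one, one_mul, dist_eq_norm, dist_eq_norm]
  have key : ∀ P Q : Matrix (Fin m) (Fin m) ℝ, lminQ Q - ‖P - Q‖ ≤ lminQ P := by
    intro P Q
    refine le_lminQ hm fun v hv => ?_
    have h1 : (v : Fin m → ℝ) ⬝ᵥ (P *ᵥ (v : Fin m → ℝ))
        = (v : Fin m → ℝ) ⬝ᵥ (Q *ᵥ (v : Fin m → ℝ))
          + (v : Fin m → ℝ) ⬝ᵥ ((P - Q) *ᵥ (v : Fin m → ℝ)) := by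
      rw [← dotProduct_add, ← add_mulVec, add_sub_cancel]
    have h2 := neg_le_of_abs_le (abs_dot_mulVec_le (P - Q) v v)
    rw [hv] at h2; simp only [mul_one] at h2
    have h3 := lminQ_le (M := Q) hv
    linarith
  have h1 := key M N
  have h2 := key N M
  rw [Real.norm_eq_abs, abs_sub_le_iff]
  constructor
  · have : ‖N - M‖ = ‖M - N‖ := by rw [← norm_neg]; congr 1; abel
    linarith [key M N, key N M, this.symm.le]
  · have : ‖N - M‖ = ‖M - N‖ := by rw [← norm_neg]; congr 1; abel
    linarith [key M N, key N M]

lemma lminQ_eigen (hm : 0 < m) {M : Matrix (Fin m) (Fin m) ℝ} (hM : M.IsHermitian) :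
    ∃ v : EuclideanSpace ℝ (Fin m), ‖v‖ = 1 ∧
      M *ᵥ (v : Fin m → ℝ) = lminQ M • (v : Fin m → ℝ) := by
  obtain ⟨lam, v, hv, heig, hmin⟩ := exists_min_eigen hm hM
  have h1 : lminQ M = lam := by
    refine le_antisymm ?_ (le_lminQ hm hmin)
    have : (v : Fin m → ℝ) ⬝ᵥ (M *ᵥ (v : Fin m → ℝ)) = lam := by
      rw [heig, dotProduct_smul, dot_self_eq_normsq, hv]; simp
    rw [← this]; exact lminQ_le hv
  exact ⟨v, hv, by rw [h1]; exact heig⟩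

lemma posSemidef_of_lminQ (hm : 0 < m) {M : Matrix (Fin m) (Fin m) ℝ} (hsym : Mᵀ = M)
    (h : 0 ≤ lminQ M) : M.PosSemidef := by
  rw [Matrix.posSemidef_iff_dotProduct_mulVec]
  constructor
  · show Mᴴ = M
    rw [show Mᴴ = Mᵀ from by ext i j; simp [conjTranspose_apply]]; exact hsym
  · intro x
    have key : 0 ≤ x ⬝ᵥ (M *ᵥ x) := by
      rcases eq_or_ne x 0 with rfl | hx
      · simp
      · set xe : EuclideanSpace ℝ (Fin m) := (EuclideanSpace.equiv (Fin m) ℝ).symm x with hxe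
        have hxn : ‖xe‖ ≠ 0 := by
          simp only [ne_eq, norm_eq_zero]
          intro hc
          apply hx
          have : xe = 0 := hc
          exact congrArg (⇑(EuclideanSpace.equiv (Fin m) ℝ)) this
        set c : ℝ := ‖xe‖ with hc
        set v : EuclideanSpace ℝ (Fin m) := c⁻¹ • xe with hv
        have hvn : ‖v‖ = 1 := by
          rw [hv, norm_smul, norm_inv, Real.norm_eq_abs, abs_of_nonneg (norm_nonneg _)]
          field_simp
          exact div_self hxn
        have hq := le_trans h (lminQ_le hvn)
        have hvx : (v : Fin m → ℝ) = c⁻¹ • x := rfl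
        rw [hvx, Matrix.mulVec_smul, dotProduct_smul, smul_dotProduct] at hq
        have hc2 : (0:ℝ) < c⁻¹ * c⁻¹ := by
          have : 0 < c := lt_of_le_of_ne (norm_nonneg _) (Ne.symm hxn)
          positivity
        simp only [smul_eq_mul] at hq
        nlinarith
    simpa using key



lemma summable_phi (z : ℝ) : Summable (fun k : ℕ => z ^ k / (Nat.factorial (k + 1) : ℝ)) := by
  refine Summable.of_norm_bounded (Real.summable_pow_div_factorial |z|) fun k => ?_
  rw [norm_div, norm_pow, Real.norm_eq_abs, Real.norm_natCast]
  gcongr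
  · exact Nat.le_succ k

lemma phi1_mul (z : ℝ) : phi1 z * z = Real.exp z - 1 := by
  have hexp : Real.exp z = ∑' n : ℕ, z ^ n / (Nat.factorial n : ℝ) := by
    rw [Real.exp_eq_exp_ℝ, NormedSpace.exp_eq_tsum_div]
  have hs : Summable (fun n : ℕ => z ^ n / (Nat.factorial n : ℝ)) :=
    Real.summable_pow_div_factorial z
  have h1 : phi1 z * z = ∑' k : ℕ, z ^ (k + 1) / (Nat.factorial (k + 1) : ℝ) := by
    rw [phi1, ← tsum_mul_right]
    congr 1; ext k; rw [pow_succ]; ring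
  rw [h1, hexp, hs.tsum_eq_zero_add]
  simp

lemma phi1_zero : phi1 0 = 1 := by
  rw [phi1, tsum_eq_single 0]
  · simp
  · intro k hk
    rw [zero_pow hk, zero_div]

lemma phi1_eq {z : ℝ} (hz : z ≠ 0) : phi1 z = (Real.exp z - 1) / z := by
  field_simp [← phi1_mul z]
  exact phi1_mul z

lemma phi1_nonneg (z : ℝ) : 0 ≤ phi1 z := by
  rcases lt_trichotomy z 0 with h | rfl | h
  · rw [phi1_eq h.ne]
    have h1 : Real.exp z - 1 ≤ 0 := by
      have := Real.exp_lt_one_iff.mpr h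
      linarith
    have := div_nonneg (neg_nonneg.mpr h1) (neg_nonneg.mpr h.le)
    rw [neg_div_neg_eq] at this
    exact this
  · rw [phi1_zero]; norm_num
  · rw [phi1_eq h.ne']
    apply div_nonneg _ h.le
    have := Real.add_one_le_exp z
    linarith

lemma gronwall_eq (δ K ε t : ℝ) :
    gronwallBound δ K ε t = Real.exp (K * t) * δ + t * phi1 (K * t) * ε := by
  rcases eq_or_ne K 0 with rfl | hK
  · rw [gronwallBound_K0]
    simp [phi1_zero]
    ring
  · rw [gronwallBound_of_K_ne_0 hK]
    rcases eq_or_ne t 0 with rfl | ht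
    · simp
    · rw [phi1_eq (mul_ne_zero hK ht)]
      field_simp



variable {m : ℕ}

/-- quadratic form as linear map in the matrix -/
def quadLM (v : Fin m → ℝ) : Matrix (Fin m) (Fin m) ℝ →ₗ[ℝ] ℝ where
  toFun M := v ⬝ᵥ (M *ᵥ v)
  map_add' M N := by simp only [add_mulVec, dotProduct_add]
  map_smul' c M := by simp only [smul_mulVec, dotProduct_smul, RingHom.id_apply,
    smul_eq_mul]

lemma hasDerivAt_quad (v : Fin m → ℝ) {Y : ℝ → Matrix (Fin m) (Fin m) ℝ}
    {D : Matrix (Fin m) (Fin m) ℝ} {t : ℝ} (h : HasDerivAt Y D t) :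
    HasDerivAt (fun s => v ⬝ᵥ (Y s *ᵥ v)) (v ⬝ᵥ (D *ᵥ v)) t := by
  have := ((LinearMap.toContinuousLinearMap (quadLM v)).hasFDerivAt
    (x := Y t)).comp_hasDerivAt t h
  exact this

def transposeLM : Matrix (Fin m) (Fin m) ℝ →ₗ[ℝ] Matrix (Fin m) (Fin m) ℝ where
  toFun M := Mᵀ
  map_add' M N := transpose_add M N
  map_smul' c M := transpose_smul c M

lemma hasDerivAt_transpose {Y : ℝ → Matrix (Fin m) (Fin m) ℝ}
    {D : Matrix (Fin m) (Fin m) ℝ} {t : ℝ} (h : HasDerivAt Y D t) :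
    HasDerivAt (fun s => (Y s)ᵀ) Dᵀ t := by
  have := ((LinearMap.toContinuousLinearMap transposeLM).hasFDerivAt
    (x := Y t)).comp_hasDerivAt t h
  exact this

lemma continuous_transposeLM : Continuous (fun M : Matrix (Fin m) (Fin m) ℝ => Mᵀ) :=
  (LinearMap.toContinuousLinearMap transposeLM).continuous

lemma hasDerivAt_exp_mul (K t ε : ℝ) :
    HasDerivAt (fun s => ε * Real.exp (K * s)) (ε * (K * Real.exp (K * t))) t := by
  have h1 : HasDerivAt (fun s : ℝ => K * s) K t := by
    simpa using (hasDerivAt_id t).const_mul K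
  have h2 := h1.exp
  have := h2.const_mul ε
  refine this.congr_deriv ?_
  ring



lemma psd_dot_nonneg {k : ℕ} {M : Matrix (Fin k) (Fin k) ℝ} (h : M.PosSemidef)
    (x : Fin k → ℝ) : 0 ≤ x ⬝ᵥ (M *ᵥ x) := by
  simpa using h.re_dotProduct_nonneg x

lemma real_conjT {ι κ : Type*} (M : Matrix ι κ ℝ) : Mᴴ = Mᵀ := by
  ext i j; simp [conjTranspose_apply]

lemma norm_transpose {a b : ℕ} (M : Matrix (Fin a) (Fin b) ℝ) : ‖Mᵀ‖ = ‖M‖ := by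
  rw [← real_conjT]; exact M.l2_opNorm_conjTranspose

lemma norm_one_le {k : ℕ} : ‖(1 : Matrix (Fin k) (Fin k) ℝ)‖ ≤ 1 := by
  have h := Matrix.l2_opNorm_conjTranspose_mul_self (1 : Matrix (Fin k) (Fin k) ℝ)
  rw [real_conjT, transpose_one, one_mul] at h
  nlinarith [norm_nonneg (1 : Matrix (Fin k) (Fin k) ℝ)]

lemma norm_V_le_one {n m : ℕ} (V : Matrix (Fin n) (Fin m) ℝ) (hV : Vᵀ * V = 1) :
    ‖V‖ ≤ 1 := by
  have h := Matrix.l2_opNorm_conjTranspose_mul_self V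
  rw [real_conjT, hV] at h
  nlinarith [norm_nonneg V, norm_one_le (k := m)]

lemma gram_norm {a b : ℕ} (B : Matrix (Fin a) (Fin b) ℝ) : ‖B * Bᵀ‖ = ‖B‖ * ‖B‖ := by
  have h := Matrix.l2_opNorm_conjTranspose_mul_self Bᵀ
  rw [real_conjT, transpose_transpose, norm_transpose] at h
  exact h

lemma logNorm_bddAbove {n : ℕ} (A : Matrix (Fin n) (Fin n) ℝ) :
    BddAbove {r : ℝ | ∃ x : EuclideanSpace ℂ (Fin n), ‖x‖ = 1 ∧
      r = (dotProduct (star (x : Fin n → ℂ)) ((A.map Complex.ofReal).mulVec x)).re} := by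
  refine ⟨‖A.map Complex.ofReal‖, ?_⟩
  rintro r ⟨x, hx, rfl⟩
  set M := A.map Complex.ofReal
  have h1 : dotProduct (star (x : Fin n → ℂ)) (M *ᵥ x)
      = (inner ℂ x ((EuclideanSpace.equiv (Fin n) ℂ).symm (M *ᵥ (x : Fin n → ℂ))) : ℂ) := by
    simp [PiLp.inner_apply, dotProduct, RCLike.inner_apply, mul_comm]
  have h2 := Complex.re_le_norm (dotProduct (star (x : Fin n → ℂ)) (M *ᵥ x))
  refine h2.trans ?_
  rw [h1]
  have h3 := norm_inner_le_norm (𝕜 := ℂ) x ((EuclideanSpace.equiv (Fin n) ℂ).symm (M *ᵥ (x : Fin n → ℂ)))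
  have h4 := M.l2_opNorm_mulVec x
  rw [hx] at h3 h4
  calc ‖(inner ℂ x ((EuclideanSpace.equiv (Fin n) ℂ).symm (M *ᵥ (x : Fin n → ℂ))) : ℂ)‖ = ‖(inner ℂ x ((EuclideanSpace.equiv (Fin n) ℂ).symm (M *ᵥ (x : Fin n → ℂ))) : ℂ)‖ := rfl
    _ ≤ 1 * ‖(EuclideanSpace.equiv (Fin n) ℂ).symm (M *ᵥ (x : Fin n → ℂ))‖ := by
        simpa using h3
    _ ≤ ‖M‖ := by rw [one_mul]; simpa using h4

lemma dot_H_le_logNorm {n m : ℕ} (A : Matrix (Fin n) (Fin n) ℝ) (V : Matrix (Fin n) (Fin m) ℝ)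
    (hV : Vᵀ * V = 1) (v : EuclideanSpace ℝ (Fin m)) (hv : ‖v‖ = 1) :
    (v : Fin m → ℝ) ⬝ᵥ ((Vᵀ * A * V) *ᵥ (v : Fin m → ℝ)) ≤ logNorm A := by
  set w : Fin n → ℝ := V *ᵥ (v : Fin m → ℝ) with hw
  have hVtw : Vᵀ *ᵥ w = (v : Fin m → ℝ) := by
    rw [hw, mulVec_mulVec, hV, one_mulVec]
  have hww : w ⬝ᵥ w = 1 := by
    calc w ⬝ᵥ w = (w ᵥ* V) ⬝ᵥ (v : Fin m → ℝ) := dotProduct_mulVec w V _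
      _ = (Vᵀ *ᵥ w) ⬝ᵥ (v : Fin m → ℝ) := by rw [mulVec_transpose]
      _ = (v : Fin m → ℝ) ⬝ᵥ (v : Fin m → ℝ) := by rw [hVtw]
      _ = 1 := by
          have : (v : Fin m → ℝ) ⬝ᵥ (v : Fin m → ℝ) = ‖v‖ ^ 2 := by
            exact dot_self_eq_normsq v
          rw [this, hv]; norm_num
  have hq : (v : Fin m → ℝ) ⬝ᵥ ((Vᵀ * A * V) *ᵥ (v : Fin m → ℝ)) = w ⬝ᵥ (A *ᵥ w) := by
    have e1 : (Vᵀ * A * V) *ᵥ (v : Fin m → ℝ) = Vᵀ *ᵥ (A *ᵥ w) := by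
      rw [hw, mulVec_mulVec, mulVec_mulVec, Matrix.mul_assoc]
    rw [e1, dotProduct_mulVec, ← mulVec_transpose, transpose_transpose, ← hw]
  -- the complex unit vector
  set x : EuclideanSpace ℂ (Fin n) :=
    (EuclideanSpace.equiv (Fin n) ℂ).symm (fun i => (w i : ℂ)) with hxdef
  have hxi : ∀ i, (x : Fin n → ℂ) i = (w i : ℂ) := fun i => rfl
  have hxnorm : ‖x‖ = 1 := by
    rw [EuclideanSpace.norm_eq]
    have : ∀ i, ‖(x : Fin n → ℂ) i‖ ^ 2 = w i * w i := by
      intro i; rw [hxi i, Complex.norm_real, Real.norm_eq_abs, sq_abs, sq]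
    calc Real.sqrt (∑ i, ‖(x : Fin n → ℂ) i‖ ^ 2) = Real.sqrt (∑ i, w i * w i) := by
          congr 1; exact Finset.sum_congr rfl fun i _ => this i
      _ = 1 := by
          rw [show ∑ i, w i * w i = w ⬝ᵥ w from rfl, hww, Real.sqrt_one]
  have hmem : w ⬝ᵥ (A *ᵥ w) ∈ {r : ℝ | ∃ x : EuclideanSpace ℂ (Fin n), ‖x‖ = 1 ∧
      r = (dotProduct (star (x : Fin n → ℂ)) ((A.map Complex.ofReal).mulVec x)).re} := by
    refine ⟨x, hxnorm, ?_⟩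
    have key : dotProduct (star (x : Fin n → ℂ)) ((A.map Complex.ofReal).mulVec x)
        = ((w ⬝ᵥ (A *ᵥ w) : ℝ) : ℂ) := by
      simp only [dotProduct, Matrix.mulVec, Pi.star_apply, hxi, Matrix.map_apply,
        RCLike.star_def, Complex.conj_ofReal]
      push_cast
      ring
    rw [key, Complex.ofReal_re]
  rw [hq]
  exact le_csSup (logNorm_bddAbove A) hmem


end DRE
set_option maxHeartbeats 4000000 in
/-- Positivity and norm bound for the numerical solution `X_k = V_k Y_k V_kᵀ`
of the projected DRE. -/
theorem projected_dre_posdef_and_bound {n p q m : ℕ} (T : ℝ) (hT : 0 ≤ T)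
    (A S : Matrix (Fin n) (Fin n) ℝ) (hS : S.PosSemidef)
    (Z : Matrix (Fin n) (Fin p) ℝ) (C : Matrix (Fin n) (Fin q) ℝ)
    (V : Matrix (Fin n) (Fin m) ℝ) (hV : Vᵀ * V = 1)
    (Y : ℝ → Matrix (Fin m) (Fin m) ℝ)
    (hY : ∀ t ∈ Set.Icc (0:ℝ) T,
      HasDerivAt Y ((Vᵀ * A * V) * Y t + Y t * (Vᵀ * A * V)ᵀ + (Vᵀ * C) * (Vᵀ * C)ᵀ
        - Y t * (Vᵀ * S * V) * Y t) t)
    (hY0 : Y 0 = (Vᵀ * Z) * (Vᵀ * Z)ᵀ) :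
    ∀ t ∈ Set.Icc (0:ℝ) T,
      (V * Y t * Vᵀ).PosSemidef ∧
      ‖V * Y t * Vᵀ‖ ≤ Real.exp (2 * t * logNorm A) * ‖Z * Zᵀ‖
        + t * phi1 (2 * t * logNorm A) * ‖C * Cᵀ‖ := by
  classical
  rcases Nat.eq_zero_or_pos m with hm0 | hm
  · -- degenerate case `m = 0`
    subst hm0
    intro t ht
    have hzero : V * Y t * Vᵀ = 0 := by
      ext i j
      simp [Matrix.mul_apply]
    rw [hzero]
    refine ⟨Matrix.PosSemidef.zero, ?_⟩
    rw [norm_zero]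
    have h1 : (0:ℝ) ≤ Real.exp (2 * t * logNorm A) * ‖Z * Zᵀ‖ :=
      mul_nonneg (Real.exp_pos _).le (norm_nonneg _)
    have h2 : (0:ℝ) ≤ t * phi1 (2 * t * logNorm A) * ‖C * Cᵀ‖ :=
      mul_nonneg (mul_nonneg ht.1 (DRE.phi1_nonneg _)) (norm_nonneg _)
    linarith
  -- main case
  set H : Matrix (Fin m) (Fin m) ℝ := Vᵀ * A * V with hHdef
  set Sk : Matrix (Fin m) (Fin m) ℝ := Vᵀ * S * V with hSkdef
  set Zk : Matrix (Fin m) (Fin p) ℝ := Vᵀ * Z with hZkdef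
  set Ck : Matrix (Fin m) (Fin q) ℝ := Vᵀ * C with hCkdef
  set Qk : Matrix (Fin m) (Fin m) ℝ := Ck * Ckᵀ with hQkdef
  have hSkps : Sk.PosSemidef := by
    have := hS.mul_mul_conjTranspose_same Vᵀ
    rwa [DRE.real_conjT, transpose_transpose] at this
  have hQkps : Qk.PosSemidef := by
    have := Matrix.posSemidef_self_mul_conjTranspose Ck
    rwa [DRE.real_conjT] at this
  have hSkT : Skᵀ = Sk := by rw [← DRE.real_conjT]; exact hSkps.1
  have hQkT : Qkᵀ = Qk := by rw [← DRE.real_conjT]; exact hQkps.1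
  have hcont : ContinuousOn Y (Set.Icc 0 T) := fun s hs =>
    ((hY s hs).continuousAt).continuousWithinAt
  obtain ⟨M₀', hM₀'⟩ := isCompact_Icc.exists_bound_of_continuousOn hcont
  set M₀ : ℝ := max M₀' 0 with hM₀def
  have hM₀ : ∀ s ∈ Set.Icc (0:ℝ) T, ‖Y s‖ ≤ M₀ := fun s hs =>
    (hM₀' s hs).trans (le_max_left _ _)
  have hM₀0 : 0 ≤ M₀ := le_max_right _ _
  -- Step A: symmetry
  have hsym : ∀ s ∈ Set.Icc (0:ℝ) T, (Y s)ᵀ = Y s := by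
    set K₀ : ℝ := 2 * ‖H‖ + 2 * (‖Sk‖ * M₀) with hK₀def
    set D : ℝ → Matrix (Fin m) (Fin m) ℝ := fun s => Y s - (Y s)ᵀ with hDdef
    set D' : ℝ → Matrix (Fin m) (Fin m) ℝ := fun s =>
      H * D s + D s * Hᵀ - (Y s * Sk * D s + D s * Sk * (Y s)ᵀ) with hD'def
    have hDd : ∀ s ∈ Set.Icc (0:ℝ) T, HasDerivAt D (D' s) s := by
      intro s hs
      have h1 := hY s hs
      have h2 := DRE.hasDerivAt_transpose h1
      have h3 := h1.sub h2
      refine h3.congr_deriv ?_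
      have htr : (H * Y s + Y s * Hᵀ + Qk - Y s * Sk * Y s)ᵀ
          = (Y s)ᵀ * Hᵀ + H * (Y s)ᵀ + Qk - (Y s)ᵀ * Sk * (Y s)ᵀ := by
        simp only [transpose_sub, transpose_add, transpose_mul, transpose_transpose, hSkT, hQkT,
          Matrix.mul_assoc]
      rw [hD'def, htr]
      simp only [hDdef, Matrix.mul_sub, Matrix.sub_mul, Matrix.mul_assoc]
      abel
    have hcontD : ContinuousOn D (Set.Icc 0 T) := fun s hs =>
      ((hDd s hs).continuousAt).continuousWithinAt
    have hbound : ∀ s ∈ Set.Ico (0:ℝ) T, ‖D' s‖ ≤ K₀ * ‖D s‖ + 0 := by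
      intro s hs
      have hsIcc := Set.Ico_subset_Icc_self hs
      have hYb := hM₀ s hsIcc
      have hYtb : ‖(Y s)ᵀ‖ ≤ M₀ := by rw [DRE.norm_transpose]; exact hYb
      have e1 : ‖H * D s‖ ≤ ‖H‖ * ‖D s‖ := Matrix.l2_opNorm_mul _ _
      have e2 : ‖D s * Hᵀ‖ ≤ ‖D s‖ * ‖H‖ := by
        have := Matrix.l2_opNorm_mul (D s) Hᵀ
        rwa [DRE.norm_transpose] at this
      have e3 : ‖Y s * Sk * D s‖ ≤ M₀ * ‖Sk‖ * ‖D s‖ := by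
        calc ‖Y s * Sk * D s‖ ≤ ‖Y s * Sk‖ * ‖D s‖ := Matrix.l2_opNorm_mul _ _
          _ ≤ (‖Y s‖ * ‖Sk‖) * ‖D s‖ :=
              mul_le_mul_of_nonneg_right (Matrix.l2_opNorm_mul _ _) (norm_nonneg _)
          _ ≤ M₀ * ‖Sk‖ * ‖D s‖ := by
              refine mul_le_mul_of_nonneg_right ?_ (norm_nonneg _)
              exact mul_le_mul_of_nonneg_right hYb (norm_nonneg _)
      have e4 : ‖D s * Sk * (Y s)ᵀ‖ ≤ ‖D s‖ * ‖Sk‖ * M₀ := by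
        calc ‖D s * Sk * (Y s)ᵀ‖ ≤ ‖D s * Sk‖ * ‖(Y s)ᵀ‖ := Matrix.l2_opNorm_mul _ _
          _ ≤ (‖D s‖ * ‖Sk‖) * ‖(Y s)ᵀ‖ :=
              mul_le_mul_of_nonneg_right (Matrix.l2_opNorm_mul _ _) (norm_nonneg _)
          _ ≤ ‖D s‖ * ‖Sk‖ * M₀ := by
              refine mul_le_mul_of_nonneg_left hYtb ?_
              exact mul_nonneg (norm_nonneg _) (norm_nonneg _)
      calc ‖D' s‖ ≤ ‖H * D s + D s * Hᵀ‖ + ‖Y s * Sk * D s + D s * Sk * (Y s)ᵀ‖ :=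
            norm_sub_le _ _
        _ ≤ (‖H * D s‖ + ‖D s * Hᵀ‖) + (‖Y s * Sk * D s‖ + ‖D s * Sk * (Y s)ᵀ‖) :=
            add_le_add (norm_add_le _ _) (norm_add_le _ _)
        _ ≤ K₀ * ‖D s‖ + 0 := by
            rw [hK₀def]
            nlinarith [norm_nonneg (D s), norm_nonneg Sk]
    have hD0 : ‖D 0‖ ≤ 0 := by
      have : D 0 = 0 := by
        rw [hDdef]
        simp only [hY0, transpose_mul, transpose_transpose, sub_self]
      rw [this, norm_zero]
    have hgr := norm_le_gronwallBound_of_norm_deriv_right_le hcontD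
      (fun s hs => (hDd s (Set.Ico_subset_Icc_self hs)).hasDerivWithinAt) hD0 hbound
    intro s hs
    have h1 := hgr s hs
    rw [gronwallBound_ε0_δ0] at h1
    have h2 : D s = 0 := by
      have := norm_le_zero_iff.mp h1
      exact this
    have h3 : Y s - (Y s)ᵀ = 0 := h2
    have := sub_eq_zero.mp h3
    exact this.symm
  -- Step B: positivity of lminQ
  have hposl : ∀ s ∈ Set.Icc (0:ℝ) T, 0 ≤ DRE.lminQ (Y s) := by
    set K₁ : ℝ := 2 * ‖H‖ + M₀ * ‖Sk‖ + 1 with hK₁def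
    have hcl : ∀ ε : ℝ, 0 < ε → ∀ s ∈ Set.Icc (0:ℝ) T,
        0 < DRE.lminQ (Y s) + ε * Real.exp (K₁ * s) := by
      intro ε hε
      by_contra hcon
      push_neg at hcon
      obtain ⟨t1, ht1, hle⟩ := hcon
      set g : ℝ → ℝ := fun s => DRE.lminQ (Y s) + ε * Real.exp (K₁ * s) with hgdef
      have hgat : ∀ s ∈ Set.Icc (0:ℝ) T, ContinuousAt g s := by
        intro s hs
        refine ContinuousAt.add ?_ ?_
        · exact ((DRE.lminQ_lipschitz hm).continuous.continuousAt).comp (hY s hs).continuousAt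
        · exact (continuous_const.mul
            (Real.continuous_exp.comp (continuous_const.mul continuous_id))).continuousAt
      set B : Set ℝ := {s | s ∈ Set.Icc (0:ℝ) t1 ∧ g s ≤ 0} with hBdef
      have hBne : B.Nonempty := ⟨t1, ⟨⟨ht1.1, le_refl _⟩, hle⟩⟩
      have hBbdd : BddBelow B := ⟨0, fun s hs => hs.1.1⟩
      set t₀ : ℝ := sInf B with ht₀def
      have hBicc : B ⊆ Set.Icc (0:ℝ) T := fun s hs => ⟨hs.1.1, hs.1.2.trans ht1.2⟩
      have ht₀mem1 : t₀ ∈ Set.Icc (0:ℝ) t1 :=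
        ⟨le_csInf hBne (fun s hs => hs.1.1), csInf_le hBbdd ⟨⟨ht1.1, le_refl _⟩, hle⟩⟩
      have ht₀T : t₀ ∈ Set.Icc (0:ℝ) T := ⟨ht₀mem1.1, ht₀mem1.2.trans ht1.2⟩
      have hgt₀ : g t₀ ≤ 0 := by
        have hclos : t₀ ∈ closure B := csInf_mem_closure hBne hBbdd
        haveI : (nhdsWithin t₀ B).NeBot := mem_closure_iff_nhdsWithin_neBot.mp hclos
        refine le_of_tendsto (((hgat t₀ ht₀T).continuousWithinAt (s := B)).tendsto) ?_
        filter_upwards [eventually_mem_nhdsWithin] with s hs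
        exact hs.2
      have hg0 : 0 < g 0 := by
        have h0 : 0 ≤ DRE.lminQ (Y 0) := by
          refine DRE.le_lminQ hm fun v hv => ?_
          rw [hY0]
          have : (Zk * Zkᵀ).PosSemidef := by
            have := Matrix.posSemidef_self_mul_conjTranspose Zk
            rwa [DRE.real_conjT] at this
          exact DRE.psd_dot_nonneg this _
        have : (0:ℝ) < ε * Real.exp (K₁ * 0) := by positivity
        simp only [hgdef]
        linarith
      have ht₀pos : 0 < t₀ := by
        rcases lt_or_eq_of_le ht₀mem1.1 with h | h
        · exact h
        · exfalso; rw [← h] at hgt₀; linarith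
      have hglt : ∀ s, 0 ≤ s → s < t₀ → 0 < g s := by
        intro s h0s hst
        by_contra hns
        push_neg at hns
        have hsB : s ∈ B := ⟨⟨h0s, hst.le.trans ht₀mem1.2⟩, hns⟩
        exact absurd (csInf_le hBbdd hsB) (not_le.mpr hst)
      have hgt₀0 : g t₀ = 0 := by
        refine le_antisymm hgt₀ ?_
        have htend : Filter.Tendsto g (nhdsWithin t₀ (Set.Iio t₀)) (nhds (g t₀)) :=
          ((hgat t₀ ht₀T).continuousWithinAt (s := Set.Iio t₀)).tendsto
        refine ge_of_tendsto htend ?_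
        filter_upwards [Ioo_mem_nhdsLT_of_mem (⟨ht₀pos, le_refl t₀⟩ : t₀ ∈ Set.Ioc 0 t₀)]
          with s hs
        exact (hglt s hs.1.le hs.2).le
      -- eigenvector at t₀
      have hherm : (Y t₀).IsHermitian := DRE.isHermitian_of_symm (hsym t₀ ht₀T)
      obtain ⟨v, hv1, heig⟩ := DRE.lminQ_eigen hm hherm
      set vv : Fin m → ℝ := (v : Fin m → ℝ) with hvvdef
      set lam : ℝ := DRE.lminQ (Y t₀) with hlamdef
      set dlt : ℝ := ε * Real.exp (K₁ * t₀) with hdltdef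
      have hdpos : 0 < dlt := by positivity
      have hlam : lam = -dlt := by
        have := hgt₀0
        simp only [hgdef] at this
        linarith
      set φ : ℝ → ℝ := fun s => vv ⬝ᵥ (Y s *ᵥ vv) + ε * Real.exp (K₁ * s) with hφdef
      set dY : Matrix (Fin m) (Fin m) ℝ :=
        H * Y t₀ + Y t₀ * Hᵀ + Qk - Y t₀ * Sk * Y t₀ with hdYdef
      set d : ℝ := vv ⬝ᵥ (dY *ᵥ vv) + ε * (K₁ * Real.exp (K₁ * t₀)) with hddef
      have hφd : HasDerivAt φ d t₀ :=
        (DRE.hasDerivAt_quad vv (hY t₀ ht₀T)).add (DRE.hasDerivAt_exp_mul K₁ t₀ ε)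
      have hquadlam : vv ⬝ᵥ (Y t₀ *ᵥ vv) = lam := by
        rw [heig, dotProduct_smul, DRE.dot_self_eq_normsq v, hv1]
        simp
      have hφt₀ : φ t₀ = 0 := by
        simp only [hφdef]
        rw [hquadlam, hlam]
        simp only [← hdltdef]
        ring
      have hφpos : ∀ s, 0 ≤ s → s < t₀ → 0 < φ s := by
        intro s h1 h2
        refine lt_of_lt_of_le (hglt s h1 h2) ?_
        simp only [hφdef, hgdef]
        have := DRE.lminQ_le (M := Y s) hv1
        linarith
      -- derivative at t₀ is ≤ 0 (left minimum)
      have hder_le : d ≤ 0 := by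
        have hslope := hasDerivAt_iff_tendsto_slope.mp hφd
        have hmono : nhdsWithin t₀ (Set.Iio t₀) ≤ nhdsWithin t₀ {t₀}ᶜ :=
          nhdsWithin_mono _ (fun z hz => ne_of_lt hz)
        refine le_of_tendsto (hslope.mono_left hmono) ?_
        filter_upwards [Ioo_mem_nhdsLT_of_mem (⟨ht₀pos, le_refl t₀⟩ : t₀ ∈ Set.Ioc 0 t₀)]
          with s hs
        have h1 : 0 < φ s := hφpos s hs.1.le hs.2
        have h2 : s - t₀ < 0 := sub_neg.mpr hs.2
        rw [slope_def_field, hφt₀, sub_zero]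
        exact div_nonpos_iff.mpr (Or.inl ⟨h1.le, h2.le⟩)
      -- derivative at t₀ is > 0 : contradiction
      have hsymY : (Y t₀)ᵀ = Y t₀ := hsym t₀ ht₀T
      have hc1 : vv ⬝ᵥ ((H * Y t₀) *ᵥ vv) = lam * (vv ⬝ᵥ (H *ᵥ vv)) := by
        rw [← mulVec_mulVec, heig]
        rw [mulVec_smul, dotProduct_smul]
        simp
      have hdualdot : ∀ z : Fin m → ℝ, vv ⬝ᵥ (Y t₀ *ᵥ z) = lam • vv ⬝ᵥ z := by
        intro z
        rw [dotProduct_mulVec, ← mulVec_transpose, hsymY, heig]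
      have hHT : vv ⬝ᵥ (Hᵀ *ᵥ vv) = vv ⬝ᵥ (H *ᵥ vv) := by
        rw [mulVec_transpose, dotProduct_comm, ← dotProduct_mulVec]
      have hc2 : vv ⬝ᵥ ((Y t₀ * Hᵀ) *ᵥ vv) = lam * (vv ⬝ᵥ (H *ᵥ vv)) := by
        rw [← mulVec_mulVec, hdualdot, smul_dotProduct, hHT]
        simp
      have hc4 : vv ⬝ᵥ ((Y t₀ * Sk * Y t₀) *ᵥ vv)
          = lam * (lam * (vv ⬝ᵥ (Sk *ᵥ vv))) := by
        rw [← mulVec_mulVec, heig, mulVec_smul, dotProduct_smul]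
        rw [← mulVec_mulVec, hdualdot, smul_dotProduct]
        simp [mul_assoc]
      have hqQ : 0 ≤ vv ⬝ᵥ (Qk *ᵥ vv) := DRE.psd_dot_nonneg hQkps vv
      have hqS0 : 0 ≤ vv ⬝ᵥ (Sk *ᵥ vv) := DRE.psd_dot_nonneg hSkps vv
      have hqS1 : vv ⬝ᵥ (Sk *ᵥ vv) ≤ ‖Sk‖ := by
        have := le_of_abs_le (DRE.abs_dot_mulVec_le Sk v v)
        rw [hv1] at this; simpa using this
      have hqH : |vv ⬝ᵥ (H *ᵥ vv)| ≤ ‖H‖ := by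
        have := DRE.abs_dot_mulVec_le H v v
        rw [hv1] at this; simpa using this
      have hdM : dlt ≤ M₀ := by
        have h1 : |lam| ≤ ‖Y t₀‖ := DRE.abs_lminQ_le hm (Y t₀)
        have h2 := hM₀ t₀ ht₀T
        rw [hlam, abs_neg, abs_of_pos hdpos] at h1
        linarith
      have hsplit : vv ⬝ᵥ (dY *ᵥ vv)
          = lam * (vv ⬝ᵥ (H *ᵥ vv)) + lam * (vv ⬝ᵥ (H *ᵥ vv)) + vv ⬝ᵥ (Qk *ᵥ vv)
            - lam * (lam * (vv ⬝ᵥ (Sk *ᵥ vv))) := by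
        rw [hdYdef, sub_mulVec, add_mulVec, add_mulVec, dotProduct_sub, dotProduct_add,
          dotProduct_add, hc1, hc2, hc4]
      have hlam_h : lam * (vv ⬝ᵥ (H *ᵥ vv)) ≥ -(dlt * ‖H‖) := by
        rw [hlam]
        have h1 : vv ⬝ᵥ (H *ᵥ vv) ≤ ‖H‖ := le_of_abs_le hqH
        nlinarith
      have hlamsq : lam * (lam * (vv ⬝ᵥ (Sk *ᵥ vv))) ≤ dlt * (M₀ * ‖Sk‖) := by
        rw [hlam]
        have hSknn : (0:ℝ) ≤ ‖Sk‖ := norm_nonneg _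
        have hq2 : dlt * (vv ⬝ᵥ (Sk *ᵥ vv)) ≤ M₀ * ‖Sk‖ := mul_le_mul hdM hqS1 hqS0 hM₀0
        nlinarith [mul_le_mul_of_nonneg_left hq2 hdpos.le]
      have hder_pos : 0 < d := by
        have hKexp : ε * (K₁ * Real.exp (K₁ * t₀)) = K₁ * dlt := by
          rw [hdltdef]; ring
        rw [hddef, hsplit, hKexp, hK₁def]
        nlinarith
      linarith
    intro s hs
    by_contra hneg
    push_neg at hneg
    set e : ℝ := Real.exp (K₁ * s) with hedef
    have hepos : 0 < e := Real.exp_pos _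
    set ε : ℝ := -DRE.lminQ (Y s) / (2 * e) with hεdef
    have hεpos : 0 < ε := by
      rw [hεdef]
      apply div_pos (by linarith) (by linarith)
    have := hcl ε hεpos s hs
    rw [hεdef] at this
    have hcalc : -DRE.lminQ (Y s) / (2 * e) * e = -DRE.lminQ (Y s) / 2 := by
      field_simp
    rw [← hedef, hcalc] at this
    linarith
  have hpsd : ∀ s ∈ Set.Icc (0:ℝ) T, (Y s).PosSemidef := fun s hs =>
    DRE.posSemidef_of_lminQ hm (hsym s hs) (hposl s hs)
  -- Step C: Grönwall bound
  have hnorm : ∀ s ∈ Set.Icc (0:ℝ) T,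
      ‖Y s‖ ≤ gronwallBound ‖Y 0‖ (2 * logNorm A) ‖Qk‖ (s - 0) := by
    set μ : ℝ := logNorm A with hμdef
    refine le_gronwallBound_of_liminf_deriv_right_le
      (f := fun s => ‖Y s‖) (f' := fun s => 2 * μ * ‖Y s‖ + ‖Qk‖)
      (continuous_norm.comp_continuousOn hcont) ?_ le_rfl (fun x hx => le_refl _)
    intro x hx r hr
    have hxIcc : x ∈ Set.Icc (0:ℝ) T := Set.Ico_subset_Icc_self hx
    have hd := hY x hxIcc
    set Dx : Matrix (Fin m) (Fin m) ℝ := H * Y x + Y x * Hᵀ + Qk - Y x * Sk * Y x with hDxdef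
    have hslope : Filter.Tendsto (slope Y x) (nhdsWithin x (Set.Ioi x)) (nhds Dx) :=
      (hasDerivAt_iff_tendsto_slope.mp hd).mono_left
        (nhdsWithin_mono _ (fun z hz => ne_of_gt hz))
    have herr : Filter.Tendsto (fun z => ‖slope Y x z - Dx‖)
        (nhdsWithin x (Set.Ioi x)) (nhds 0) := by
      have := (hslope.sub (tendsto_const_nhds (x := Dx))).norm
      simpa using this
    have hzx : Filter.Tendsto (fun z : ℝ => z - x) (nhdsWithin x (Set.Ioi x)) (nhds 0) := by
      have h0 : Filter.Tendsto (fun z : ℝ => z - x) (nhds x) (nhds (x - x)) :=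
        (continuous_id.sub continuous_const).tendsto x
      rw [sub_self] at h0
      exact h0.mono_left nhdsWithin_le_nhds
    have hG : Filter.Tendsto
        (fun z => 2 * μ * ‖Y x‖ + ‖Qk‖ + ((z - x) * (‖H‖ ^ 2 * ‖Y x‖) + ‖slope Y x z - Dx‖))
        (nhdsWithin x (Set.Ioi x)) (nhds (2 * μ * ‖Y x‖ + ‖Qk‖)) := by
      have h2 := (hzx.mul_const (‖H‖ ^ 2 * ‖Y x‖)).add herr
      have h3 := (tendsto_const_nhds (x := 2 * μ * ‖Y x‖ + ‖Qk‖)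
        (f := nhdsWithin x (Set.Ioi x))).add h2
      simpa using h3
    have hev2 : ∀ᶠ z in nhdsWithin x (Set.Ioi x),
        2 * μ * ‖Y x‖ + ‖Qk‖ + ((z - x) * (‖H‖ ^ 2 * ‖Y x‖) + ‖slope Y x z - Dx‖) < r :=
      hG.eventually_lt_const hr
    have hev1 : Set.Ioc x T ∈ nhdsWithin x (Set.Ioi x) :=
      Ioc_mem_nhdsGT_of_mem ⟨le_refl x, hx.2⟩
    refine Filter.Eventually.frequently ?_
    filter_upwards [hev1, hev2] with z hz1 hz2
    set h : ℝ := z - x with hhdef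
    have hh0 : 0 < h := sub_pos.mpr hz1.1
    set E : Matrix (Fin m) (Fin m) ℝ := slope Y x z - Dx with hEdef
    have hYz : Y z = Y x + h • (Dx + E) := by
      have h1 : Dx + E = slope Y x z := by rw [hEdef]; abel
      rw [h1, slope_def_module, smul_smul, mul_inv_cancel₀ hh0.ne']
      simp
    have hzIcc : z ∈ Set.Icc (0:ℝ) T := ⟨hxIcc.1.trans hz1.1.le, hz1.2⟩
    have hkey : ‖Y z‖ ≤ ‖Y x‖ * (1 + 2 * h * μ + h ^ 2 * ‖H‖ ^ 2) + h * (‖Qk‖ + ‖E‖) := by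
      refine DRE.psd_norm_le hm (hpsd z hzIcc) ?_
      intro v hv
      set vv : Fin m → ℝ := (v : Fin m → ℝ) with hvvdef
      set w : Fin m → ℝ := Hᵀ *ᵥ vv with hwdef
      set we : EuclideanSpace ℝ (Fin m) := (EuclideanSpace.equiv (Fin m) ℝ).symm w with hwedef
      set u : Fin m → ℝ := vv + h • w with hudef
      set ue : EuclideanSpace ℝ (Fin m) := (EuclideanSpace.equiv (Fin m) ℝ).symm u with huedef
      have hq_z : vv ⬝ᵥ (Y z *ᵥ vv)
          = vv ⬝ᵥ (Y x *ᵥ vv) + h * (vv ⬝ᵥ (Dx *ᵥ vv)) + h * (vv ⬝ᵥ (E *ᵥ vv)) := by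
        rw [hYz, add_mulVec, dotProduct_add, smul_mulVec, dotProduct_smul,
          add_mulVec, dotProduct_add]
        simp only [smul_eq_mul]
        ring
      have q1 : vv ⬝ᵥ ((H * Y x) *ᵥ vv) = w ⬝ᵥ (Y x *ᵥ vv) := by
        rw [← mulVec_mulVec, dotProduct_mulVec vv H, ← mulVec_transpose]
      have q2 : vv ⬝ᵥ ((Y x * Hᵀ) *ᵥ vv) = vv ⬝ᵥ (Y x *ᵥ w) := by
        rw [← mulVec_mulVec]
      have qu : u ⬝ᵥ (Y x *ᵥ u) = vv ⬝ᵥ (Y x *ᵥ vv)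
          + h * (w ⬝ᵥ (Y x *ᵥ vv) + vv ⬝ᵥ (Y x *ᵥ w)) + h ^ 2 * (w ⬝ᵥ (Y x *ᵥ w)) := by
        simp only [hudef, add_dotProduct, smul_dotProduct, mulVec_add, mulVec_smul,
          dotProduct_add, dotProduct_smul, smul_eq_mul]
        ring
      have qw0 : 0 ≤ w ⬝ᵥ (Y x *ᵥ w) := DRE.psd_dot_nonneg (hpsd x hxIcc) w
      have hqu_le : u ⬝ᵥ (Y x *ᵥ u) ≤ ‖Y x‖ * (‖ue‖ * ‖ue‖) := DRE.dot_mulVec_le (Y x) ue ue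
      have hue_sq : ‖ue‖ * ‖ue‖ = 1 + 2 * h * (vv ⬝ᵥ w) + h ^ 2 * (w ⬝ᵥ w) := by
        have e1 : (u : Fin m → ℝ) ⬝ᵥ u = ‖ue‖ ^ 2 := DRE.dot_self_eq_normsq ue
        have e2 : u ⬝ᵥ u = 1 + 2 * h * (vv ⬝ᵥ w) + h ^ 2 * (w ⬝ᵥ w) := by
          have e3 : vv ⬝ᵥ vv = 1 := by
            have := DRE.dot_self_eq_normsq v
            rw [hv] at this
            simpa using this
          simp only [hudef, add_dotProduct, smul_dotProduct, dotProduct_add, dotProduct_smul,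
            smul_eq_mul]
          rw [dotProduct_comm w vv, e3]
          ring
        rw [← sq]
        rw [← e1, e2]
      have hvw : vv ⬝ᵥ w ≤ μ := by
        have e1 : vv ⬝ᵥ w = vv ⬝ᵥ (H *ᵥ vv) := by
          rw [hwdef, mulVec_transpose, dotProduct_comm, ← dotProduct_mulVec]
        rw [e1]
        exact DRE.dot_H_le_logNorm A V hV v hv
      have hww : w ⬝ᵥ w ≤ ‖H‖ ^ 2 := by
        have e1 : (w : Fin m → ℝ) ⬝ᵥ w = ‖we‖ ^ 2 := DRE.dot_self_eq_normsq we
        have e2 : ‖we‖ ≤ ‖Hᵀ‖ * ‖v‖ := Matrix.l2_opNorm_mulVec Hᵀ v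
        rw [DRE.norm_transpose, hv, mul_one] at e2
        rw [e1]
        nlinarith [norm_nonneg we]
      have hqD : vv ⬝ᵥ (Dx *ᵥ vv) = w ⬝ᵥ (Y x *ᵥ vv) + vv ⬝ᵥ (Y x *ᵥ w)
          + vv ⬝ᵥ (Qk *ᵥ vv) - vv ⬝ᵥ ((Y x * Sk * Y x) *ᵥ vv) := by
        rw [hDxdef, sub_mulVec, add_mulVec, add_mulVec, dotProduct_sub, dotProduct_add,
          dotProduct_add, q1, q2]
      have hqSx : 0 ≤ vv ⬝ᵥ ((Y x * Sk * Y x) *ᵥ vv) := by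
        have hsx : (Y x)ᵀ = Y x := hsym x hxIcc
        have e1 : vv ⬝ᵥ ((Y x * Sk * Y x) *ᵥ vv)
            = (Y x *ᵥ vv) ⬝ᵥ (Sk *ᵥ (Y x *ᵥ vv)) := by
          rw [← mulVec_mulVec, ← mulVec_mulVec, dotProduct_mulVec vv (Y x),
            ← mulVec_transpose, hsx]
        rw [e1]
        exact DRE.psd_dot_nonneg hSkps _
      have hqQk : vv ⬝ᵥ (Qk *ᵥ vv) ≤ ‖Qk‖ := by
        have := le_of_abs_le (DRE.abs_dot_mulVec_le Qk v v)
        rw [hv] at this; simpa using this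
      have hqE : vv ⬝ᵥ (E *ᵥ vv) ≤ ‖E‖ := by
        have := le_of_abs_le (DRE.abs_dot_mulVec_le E v v)
        rw [hv] at this; simpa using this
      have hmain : vv ⬝ᵥ (Y z *ᵥ vv)
          = (u ⬝ᵥ (Y x *ᵥ u) - h ^ 2 * (w ⬝ᵥ (Y x *ᵥ w)))
            + h * (vv ⬝ᵥ (Qk *ᵥ vv)) - h * (vv ⬝ᵥ ((Y x * Sk * Y x) *ᵥ vv))
            + h * (vv ⬝ᵥ (E *ᵥ vv)) := by
        rw [hq_z, hqD, qu]
        ring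
      have hb1 : ‖ue‖ * ‖ue‖ ≤ 1 + 2 * h * μ + h ^ 2 * ‖H‖ ^ 2 := by
        rw [hue_sq]
        nlinarith [mul_le_mul_of_nonneg_left hvw (by linarith : (0:ℝ) ≤ 2 * h),
          mul_le_mul_of_nonneg_left hww (sq_nonneg h)]
      have hb2 : u ⬝ᵥ (Y x *ᵥ u) ≤ ‖Y x‖ * (1 + 2 * h * μ + h ^ 2 * ‖H‖ ^ 2) :=
        hqu_le.trans (mul_le_mul_of_nonneg_left hb1 (norm_nonneg _))
      rw [hmain]
      have hf1 : h * (vv ⬝ᵥ (Qk *ᵥ vv)) ≤ h * ‖Qk‖ :=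
        mul_le_mul_of_nonneg_left hqQk hh0.le
      have hf2 : h * (vv ⬝ᵥ (E *ᵥ vv)) ≤ h * ‖E‖ :=
        mul_le_mul_of_nonneg_left hqE hh0.le
      have hf3 : 0 ≤ h ^ 2 * (w ⬝ᵥ (Y x *ᵥ w)) := mul_nonneg (sq_nonneg h) qw0
      have hf4 : 0 ≤ h * (vv ⬝ᵥ ((Y x * Sk * Y x) *ᵥ vv)) := mul_nonneg hh0.le hqSx
      linarith [hb2, hf1, hf2, hf3, hf4]
    show h⁻¹ * (‖Y z‖ - ‖Y x‖) < r
    have hB : ‖Y z‖ - ‖Y x‖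
        ≤ h * (2 * μ * ‖Y x‖ + ‖Qk‖ + (h * (‖H‖ ^ 2 * ‖Y x‖) + ‖E‖)) := by
      have hexp : h * (2 * μ * ‖Y x‖ + ‖Qk‖ + (h * (‖H‖ ^ 2 * ‖Y x‖) + ‖E‖))
          = ‖Y x‖ * (1 + 2 * h * μ + h ^ 2 * ‖H‖ ^ 2) + h * (‖Qk‖ + ‖E‖) - ‖Y x‖ := by
        ring
      rw [hexp]
      linarith [hkey]
    have hslope_le : h⁻¹ * (‖Y z‖ - ‖Y x‖)
        ≤ 2 * μ * ‖Y x‖ + ‖Qk‖ + (h * (‖H‖ ^ 2 * ‖Y x‖) + ‖E‖) := by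
      have := mul_le_mul_of_nonneg_left hB (inv_nonneg.mpr hh0.le)
      rwa [inv_mul_cancel_left₀ hh0.ne'] at this
    exact lt_of_le_of_lt hslope_le hz2
  -- assembly
  have hVn : ‖V‖ ≤ 1 := DRE.norm_V_le_one V hV
  have hVtn : ‖Vᵀ‖ ≤ 1 := by rw [DRE.norm_transpose]; exact hVn
  intro t ht
  constructor
  · have := (hpsd t ht).mul_mul_conjTranspose_same V
    rwa [DRE.real_conjT] at this
  · have hchain : ‖V * Y t * Vᵀ‖ ≤ ‖Y t‖ := by
      calc ‖V * Y t * Vᵀ‖ ≤ ‖V * Y t‖ * ‖Vᵀ‖ := Matrix.l2_opNorm_mul _ _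
        _ ≤ (‖V‖ * ‖Y t‖) * ‖Vᵀ‖ := by
            refine mul_le_mul_of_nonneg_right (Matrix.l2_opNorm_mul _ _) (norm_nonneg _)
        _ ≤ ‖Y t‖ := by
            have h2 : (‖V‖ * ‖Y t‖) * ‖Vᵀ‖ ≤ (‖V‖ * ‖Y t‖) * 1 :=
              mul_le_mul_of_nonneg_left hVtn
                (mul_nonneg (norm_nonneg _) (norm_nonneg _))
            have h3 : ‖V‖ * ‖Y t‖ ≤ 1 * ‖Y t‖ :=
              mul_le_mul_of_nonneg_right hVn (norm_nonneg _)
            nlinarith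
    have hY0n : ‖Y 0‖ ≤ ‖Z * Zᵀ‖ := by
      rw [hY0, DRE.gram_norm, DRE.gram_norm]
      have h1 : ‖Zk‖ ≤ ‖Z‖ := by
        calc ‖Zk‖ ≤ ‖Vᵀ‖ * ‖Z‖ := Matrix.l2_opNorm_mul _ _
          _ ≤ ‖Z‖ := by nlinarith [norm_nonneg Z, norm_nonneg (Vᵀ), norm_nonneg Zk]
      nlinarith [norm_nonneg Zk, norm_nonneg Z]
    have hQn : ‖Qk‖ ≤ ‖C * Cᵀ‖ := by
      rw [hQkdef, DRE.gram_norm, DRE.gram_norm]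
      have h1 : ‖Ck‖ ≤ ‖C‖ := by
        calc ‖Ck‖ ≤ ‖Vᵀ‖ * ‖C‖ := Matrix.l2_opNorm_mul _ _
          _ ≤ ‖C‖ := by nlinarith [norm_nonneg C, norm_nonneg (Vᵀ), norm_nonneg Ck]
      nlinarith [norm_nonneg Ck, norm_nonneg C]
    calc ‖V * Y t * Vᵀ‖ ≤ ‖Y t‖ := hchain
      _ ≤ gronwallBound ‖Y 0‖ (2 * logNorm A) ‖Qk‖ (t - 0) := hnorm t ht
      _ = Real.exp (2 * logNorm A * t) * ‖Y 0‖
          + t * phi1 (2 * logNorm A * t) * ‖Qk‖ := by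
          rw [sub_zero, DRE.gronwall_eq]
      _ ≤ Real.exp (2 * t * logNorm A) * ‖Z * Zᵀ‖
          + t * phi1 (2 * t * logNorm A) * ‖C * Cᵀ‖ := by
          rw [show 2 * logNorm A * t = 2 * t * logNorm A by ring]
          have h1 : Real.exp (2 * t * logNorm A) * ‖Y 0‖
              ≤ Real.exp (2 * t * logNorm A) * ‖Z * Zᵀ‖ :=
            mul_le_mul_of_nonneg_left hY0n (Real.exp_pos _).le
          have h2 : t * phi1 (2 * t * logNorm A) * ‖Qk‖
              ≤ t * phi1 (2 * t * logNorm A) * ‖C * Cᵀ‖ :=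
            mul_le_mul_of_nonneg_left hQn (mul_nonneg ht.1 (DRE.phi1_nonneg _))
          linarith
end
end
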